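/- arXiv:1411.3799 — 10 statements merged into one kernel-verified Lean document; each statement's English description precedes it below -/
import Mathlib

section
/- Let q be a prime power and let F_qP^2 denote the projective plane over F_q. Suppose {A^i_1 × A^i_2}_{i=1}^N is a partition of (F_qP^2)^2 into product sets such that for every i there is a projective line L^i ⊆ F_qP^2 with A^i_1 × A^i_2 ⊆ (L^i)^2. Then N ≥ q(q^2+q+1)/4. -/
/-- A `d`-flat in a projective space over a field: the set of projective points whose
representing line lies in a `(d+1)`-dimensional linear subspace. -/
def IsFlat {K V : Type*} [Field K] [AddCommGroup V] [Module K V]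
    (d : ℕ) (A : Set (Projectivization K V)) : Prop :=
  ∃ W : Submodule K V, Module.finrank K ↥W = d + 1 ∧
    A = {x : Projectivization K V | x.submodule ≤ W}

open Module Projectivization Finset
open scoped LinearAlgebra.Projectivization

lemma card_ne_aux {α : Type*} [Finite α] (a : α) :
    Nat.card {v : α // v ≠ a} + 1 = Nat.card α := by
  classical
  haveI := Fintype.ofFinite α
  haveI : Nonempty α := ⟨a⟩
  rw [Nat.card_eq_fintype_card, Nat.card_eq_fintype_card]
  rw [Fintype.card_subtype_compl (· = a), Fintype.card_subtype_eq]
  exact Nat.sub_add_cancel Fintype.card_pos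

variable {K : Type} [Field K] [Fintype K] {V : Type} [AddCommGroup V] [Module K V] [Fintype V]

omit [Fintype K] [Fintype V] in
lemma mk_of_mem (x : ℙ K V) (u : V) (hu : u ≠ 0) (h : u ∈ x.submodule) :
    Projectivization.mk K u hu = x := by
  apply submodule_injective
  rw [submodule_mk]
  exact Submodule.eq_of_le_of_finrank_le ((Submodule.span_singleton_le_iff_mem u _).2 h)
    (by rw [x.finrank_submodule, finrank_span_singleton hu])

/-- number of projective points inside a submodule -/
lemma card_pts_mul (W : Submodule K V) :
    Nat.card {x : ℙ K V // x.submodule ≤ W} * (Fintype.card K - 1) + 1 = Nat.card W := by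
  classical
  have hfin : Finite (ℙ K V) := Quotient.finite _
  have := Fintype.ofFinite (ℙ K V)
  set Pts := {x : ℙ K V // x.submodule ≤ W}
  have hmem : ∀ v : {v : W // v ≠ 0}, (Projectivization.mk K (v.1 : V)
      (fun h => v.2 (Subtype.ext h))).submodule ≤ W := by
    intro v
    rw [submodule_mk]
    exact (Submodule.span_singleton_le_iff_mem _ _).2 v.1.2
  set φ : {v : W // v ≠ 0} → Pts := fun v =>
    ⟨Projectivization.mk K (v.1 : V) (fun h => v.2 (Subtype.ext h)), hmem v⟩ with hφ
  have fibeq : ∀ x : Pts, Fintype.card {v // φ v = x} + 1 = Fintype.card K := by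
    intro x
    have e : {v // φ v = x} ≃ {u : (x.1).submodule // u ≠ 0} := by
      refine ⟨fun v => ⟨⟨v.1.1.1, ?_⟩, ?_⟩, fun u => ⟨⟨⟨u.1.1, x.2 u.1.2⟩, ?_⟩, ?_⟩, ?_, ?_⟩
      · have h1 : (v.1.1.1 : V) ∈ (Projectivization.mk K (v.1.1.1 : V)
            (fun h => v.1.2 (Subtype.ext h))).submodule := by
          rw [submodule_mk]
          exact Submodule.mem_span_singleton_self _
        have h2 : (φ v.1).1.submodule = (x.1).submodule := congrArg (fun p => p.1.submodule) v.2
        exact h2 ▸ h1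
      · intro h
        exact v.1.2 (Subtype.ext (show (v.1.1 : V) = 0 from congrArg Subtype.val h))
      · intro h
        exact u.2 (Subtype.ext (show (u.1 : V) = 0 from congrArg Subtype.val h))
      · apply Subtype.ext
        exact mk_of_mem x.1 u.1.1 (fun h => u.2 (Subtype.ext h)) u.1.2
      · intro v; apply Subtype.ext; apply Subtype.ext; apply Subtype.ext; rfl
      · intro u; apply Subtype.ext; apply Subtype.ext; rfl
    rw [Fintype.card_congr e]
    have hc : Fintype.card (x.1).submodule = Fintype.card K := by
      rw [card_eq_pow_finrank (K := K) (V := (x.1).submodule), x.1.finrank_submodule, pow_one]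
    rw [← hc, ← Nat.card_eq_fintype_card, ← Nat.card_eq_fintype_card]
    exact card_ne_aux _
  have h1 : Fintype.card {v : W // v ≠ 0} = Fintype.card Pts * (Fintype.card K - 1) := by
    rw [Fintype.card_congr (Equiv.sigmaFiberEquiv φ).symm, Fintype.card_sigma]
    have h2 : ∀ x : Pts, Fintype.card {v // φ v = x} = Fintype.card K - 1 := fun x => by
      have := fibeq x; omega
    simp only [h2, Finset.sum_const, Finset.card_univ, smul_eq_mul]
  rw [Nat.card_eq_fintype_card, Nat.card_eq_fintype_card, ← h1]
  simpa [Nat.card_eq_fintype_card] using card_ne_aux (0 : W)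

lemma qcancel {a b c : ℕ} (hc : 0 < c) (h : a * c = b * c) : a = b :=
  Nat.eq_of_mul_eq_mul_right hc h

lemma expand3 {q : ℕ} (h : 2 ≤ q) : (q ^ 2 + q + 1) * (q - 1) + 1 = q ^ 3 := by
  zify [show 1 ≤ q from by omega]; ring

lemma expand2 {q : ℕ} (h : 2 ≤ q) : (q + 1) * (q - 1) + 1 = q ^ 2 := by
  zify [show 1 ≤ q from by omega]; ring

variable (K V) in
/-- card of the projective plane -/
lemma card_proj_plane (hV : finrank K V = 3) :
    Nat.card (ℙ K V) = Fintype.card K ^ 2 + Fintype.card K + 1 := by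
  classical
  have hq2 : 2 ≤ Fintype.card K := Fintype.one_lt_card
  have h := card_pts_mul (K := K) (V := V) ⊤
  have e : {x : ℙ K V // x.submodule ≤ ⊤} ≃ ℙ K V := Equiv.subtypeUnivEquiv (fun x => le_top)
  rw [Nat.card_congr e] at h
  have hV3 : Nat.card (⊤ : Submodule K V) = Fintype.card K ^ 3 := by
    haveI := Fintype.ofFinite (↥(⊤ : Submodule K V))
    have h1 : Fintype.card (↥(⊤ : Submodule K V)) = Fintype.card K ^ 3 := by
      rw [card_eq_pow_finrank (K := K) (V := ↥(⊤ : Submodule K V))]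
      rw [finrank_top, hV]
    rw [Nat.card_eq_fintype_card]
    exact h1
  rw [hV3] at h
  apply qcancel (c := Fintype.card K - 1) (by omega)
  have expand := expand3 hq2
  omega

/-- card of points on a line -/
lemma card_pts_line {W : Submodule K V} (hW : finrank K W = 2) :
    Nat.card {x : ℙ K V // x.submodule ≤ W} = Fintype.card K + 1 := by
  classical
  have hq2 : 2 ≤ Fintype.card K := Fintype.one_lt_card
  have h := card_pts_mul (K := K) (V := V) W
  have hW2 : Nat.card W = Fintype.card K ^ 2 := by
    haveI := Fintype.ofFinite (↥W)
    have h1 : Fintype.card (↥W) = Fintype.card K ^ 2 := by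
      rw [card_eq_pow_finrank (K := K) (V := ↥W), hW]
    rw [Nat.card_eq_fintype_card]
    exact h1
  rw [hW2] at h
  apply qcancel (c := Fintype.card K - 1) (by omega)
  have expand := expand2 hq2
  omega

omit [Fintype K] [Fintype V] in
/-- uniqueness of the line through two distinct points -/
lemma line_unique [FiniteDimensional K V] {x y : ℙ K V} (hxy : x ≠ y) {W W' : Submodule K V}
    (hW : finrank K W = 2) (hW' : finrank K W' = 2)
    (hx : x.submodule ≤ W) (hy : y.submodule ≤ W)
    (hx' : x.submodule ≤ W') (hy' : y.submodule ≤ W') : W = W' := by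
  have hsub : x.submodule ≠ y.submodule := fun h => hxy (submodule_injective h)
  have hinf : finrank K (x.submodule ⊓ y.submodule : Submodule K V) = 0 := by
    by_contra h0
    have hle1 : finrank K (x.submodule ⊓ y.submodule : Submodule K V) ≤ 1 := by
      have := Submodule.finrank_mono (inf_le_left (a := x.submodule) (b := y.submodule))
      rwa [x.finrank_submodule] at this
    have h1 : finrank K (x.submodule ⊓ y.submodule : Submodule K V) = 1 := by omega
    have e1 : (x.submodule ⊓ y.submodule : Submodule K V) = x.submodule :=
      Submodule.eq_of_le_of_finrank_le inf_le_left (by rw [x.finrank_submodule, h1])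
    have e2 : (x.submodule ⊓ y.submodule : Submodule K V) = y.submodule :=
      Submodule.eq_of_le_of_finrank_le inf_le_right (by rw [y.finrank_submodule, h1])
    exact hsub (e1 ▸ e2)
  have hsup : finrank K (x.submodule ⊔ y.submodule : Submodule K V) = 2 := by
    have := Submodule.finrank_sup_add_finrank_inf_eq x.submodule y.submodule
    rw [x.finrank_submodule, y.finrank_submodule, hinf] at this
    omega
  have e1 : x.submodule ⊔ y.submodule = W :=
    Submodule.eq_of_le_of_finrank_le (sup_le hx hy) (by rw [hsup, hW])
  have e2 : x.submodule ⊔ y.submodule = W' :=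
    Submodule.eq_of_le_of_finrank_le (sup_le hx' hy') (by rw [hsup, hW'])
  exact e1 ▸ e2

lemma card_fiber_const {α β : Type*} [Finite α] [Finite β] (φ : α → β) (c : ℕ)
    (h : ∀ b : β, Nat.card {a // φ a = b} = c) : Nat.card α = Nat.card β * c := by
  classical
  have := Fintype.ofFinite α
  have := Fintype.ofFinite β
  rw [Nat.card_eq_fintype_card, Nat.card_eq_fintype_card,
    Fintype.card_congr (Equiv.sigmaFiberEquiv φ).symm, Fintype.card_sigma]
  have h2 : ∀ b : β, Fintype.card {a // φ a = b} = c := fun b => by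
    rw [← Nat.card_eq_fintype_card]; exact h b
  simp only [h2, Finset.sum_const, Finset.card_univ, smul_eq_mul]

omit [Fintype K] [Fintype V] in
lemma finrank_sup_two {x y : ℙ K V} (hxy : x ≠ y) :
    finrank K (x.submodule ⊔ y.submodule : Submodule K V) = 2 := by
  have hsub : x.submodule ≠ y.submodule := fun h => hxy (submodule_injective h)
  have hinf : finrank K (x.submodule ⊓ y.submodule : Submodule K V) = 0 := by
    by_contra h0
    have hle1 : finrank K (x.submodule ⊓ y.submodule : Submodule K V) ≤ 1 := by
      have := Submodule.finrank_mono (inf_le_left (a := x.submodule) (b := y.submodule))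
      rwa [x.finrank_submodule] at this
    have h1 : finrank K (x.submodule ⊓ y.submodule : Submodule K V) = 1 := by omega
    have e1 : (x.submodule ⊓ y.submodule : Submodule K V) = x.submodule :=
      Submodule.eq_of_le_of_finrank_le inf_le_left (by rw [x.finrank_submodule, h1])
    have e2 : (x.submodule ⊓ y.submodule : Submodule K V) = y.submodule :=
      Submodule.eq_of_le_of_finrank_le inf_le_right (by rw [y.finrank_submodule, h1])
    exact hsub (e1 ▸ e2)
  have := Submodule.finrank_sup_add_finrank_inf_eq x.submodule y.submodule
  rw [x.finrank_submodule, y.finrank_submodule, hinf] at this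
  omega

/-- the number of lines through a point -/
lemma card_lines_through (hV : finrank K V = 3) (x : ℙ K V) :
    Nat.card {W : Submodule K V // finrank K W = 2 ∧ x.submodule ≤ W} = Fintype.card K + 1 := by
  classical
  have hfinP : Finite (ℙ K V) := Quotient.finite _
  have hq2 : 2 ≤ Fintype.card K := Fintype.one_lt_card
  set LT := {W : Submodule K V // finrank K W = 2 ∧ x.submodule ≤ W} with hLT
  set φ : {y : ℙ K V // y ≠ x} → LT := fun y =>
    ⟨x.submodule ⊔ y.1.submodule, finrank_sup_two (fun h => y.2 h.symm), le_sup_left⟩ with hφ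
  have fib : ∀ Λ : LT, Nat.card {y // φ y = Λ} = Fintype.card K := by
    intro Λ
    have e : {y // φ y = Λ} ≃ {z : {z : ℙ K V // z.submodule ≤ Λ.1} // z ≠ ⟨x, Λ.2.2⟩} := by
      refine ⟨fun y => ⟨⟨y.1.1, ?_⟩, ?_⟩, fun z => ⟨⟨z.1.1, fun h => z.2 (Subtype.ext h)⟩, ?_⟩,
        fun y => Subtype.ext (Subtype.ext rfl), fun z => Subtype.ext (Subtype.ext rfl)⟩
      · have h2 : x.submodule ⊔ y.1.1.submodule = Λ.1 := congrArg Subtype.val y.2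
        exact le_sup_right.trans h2.le
      · intro h
        exact y.1.2 (congrArg Subtype.val h)
      · apply Subtype.ext
        apply Submodule.eq_of_le_of_finrank_le (sup_le Λ.2.2 z.1.2)
        rw [finrank_sup_two (x := x) (y := z.1.1) (fun h => z.2 (Subtype.ext h.symm)), Λ.2.1]
    rw [Nat.card_congr e]
    have h1 := card_ne_aux (⟨x, Λ.2.2⟩ : {z : ℙ K V // z.submodule ≤ Λ.1})
    rw [card_pts_line Λ.2.1] at h1
    omega
  have main := card_fiber_const φ (Fintype.card K) fib
  have h2 := card_ne_aux x
  have h3 := card_proj_plane K V hV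
  apply qcancel (c := Fintype.card K) (by omega)
  have h4 : (Fintype.card K + 1) * Fintype.card K
      = Fintype.card K ^ 2 + Fintype.card K := by ring
  omega

variable (K V) in
/-- the number of lines in the projective plane -/
lemma card_lines (hV : finrank K V = 3) :
    Nat.card {W : Submodule K V // finrank K W = 2}
      = Fintype.card K ^ 2 + Fintype.card K + 1 := by
  classical
  have hfinP : Finite (ℙ K V) := Quotient.finite _
  have hq2 : 2 ≤ Fintype.card K := Fintype.one_lt_card
  set Inc := {p : ℙ K V × Submodule K V // finrank K p.2 = 2 ∧ p.1.submodule ≤ p.2} with hInc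
  set φ1 : Inc → {W : Submodule K V // finrank K W = 2} := fun p => ⟨p.1.2, p.2.1⟩ with hφ1
  set φ2 : Inc → ℙ K V := fun p => p.1.1 with hφ2
  have fib1 : ∀ Λ : {W : Submodule K V // finrank K W = 2},
      Nat.card {p // φ1 p = Λ} = Fintype.card K + 1 := by
    intro Λ
    have e : {p // φ1 p = Λ} ≃ {x : ℙ K V // x.submodule ≤ Λ.1} :=
      ⟨fun p => ⟨p.1.1.1, (show p.1.1.2 = Λ.1 from congrArg Subtype.val p.2) ▸ p.1.2.2⟩,
       fun x => ⟨⟨⟨x.1, Λ.1⟩, Λ.2, x.2⟩, Subtype.ext rfl⟩,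
       fun p => Subtype.ext (Subtype.ext
         (Prod.ext rfl (show Λ.1 = p.1.1.2 from (congrArg Subtype.val p.2).symm))),
       fun x => rfl⟩
    rw [Nat.card_congr e, card_pts_line Λ.2]
  have fib2 : ∀ x : ℙ K V,
      Nat.card {p // φ2 p = x} = Fintype.card K + 1 := by
    intro x
    have e : {p // φ2 p = x} ≃ {W : Submodule K V // finrank K W = 2 ∧ x.submodule ≤ W} :=
      ⟨fun p => ⟨p.1.1.2, p.1.2.1, by obtain ⟨⟨⟨y, W⟩, hW, hyW⟩, h⟩ := p; subst h; exact hyW⟩,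
       fun W => ⟨⟨⟨x, W.1⟩, W.2.1, W.2.2⟩, rfl⟩,
       fun p => Subtype.ext (Subtype.ext (Prod.ext (show x = p.1.1.1 from p.2.symm) rfl)),
       fun W => rfl⟩
    rw [Nat.card_congr e, card_lines_through hV x]
  have h1 := card_fiber_const φ1 (Fintype.card K + 1) fib1
  have h2 := card_fiber_const φ2 (Fintype.card K + 1) fib2
  have h3 := card_proj_plane K V hV
  rw [h3] at h2
  apply qcancel (c := Fintype.card K + 1) (by omega)
  omega

lemma core_lemma {P ι : Type*} [Fintype P] [Fintype ι]
    (A B : ι → Set P) (I : Finset ι) (S : Finset P)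
    (hdiag : ∀ x ∈ S, ∀ [DecidablePred (fun i => x ∈ A i ∧ x ∈ B i)],
      (I.filter (fun i => x ∈ A i ∧ x ∈ B i)).card = 0)
    (hoff : ∀ x ∈ S, ∀ y ∈ S, x ≠ y → ∀ [DecidablePred (fun i => x ∈ A i ∧ y ∈ B i)],
      (I.filter (fun i => x ∈ A i ∧ y ∈ B i)).card = 1) :
    S.card ≤ I.card + 1 := by
  classical
  by_contra hlt
  push_neg at hlt
  -- the constraint matrix
  set M : Matrix (Option ↥I) ↥S ℝ := fun o x =>
    match o with
    | none => 1
    | some i => if (x : P) ∈ B i.1 then 1 else 0 with hM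
  have hcard : Fintype.card (Option ↥I) < Fintype.card ↥S := by
    rw [Fintype.card_option, Fintype.card_coe, Fintype.card_coe]
    omega
  have hnotinj : ¬ Function.Injective M.mulVecLin := by
    intro hinj
    have h := LinearMap.finrank_le_finrank_of_injective hinj
    rw [Module.finrank_fintype_fun_eq_card, Module.finrank_fintype_fun_eq_card] at h
    omega
  rw [← LinearMap.ker_eq_bot] at hnotinj
  obtain ⟨w, hwker, hwne⟩ := (Submodule.ne_bot_iff _).1 hnotinj
  have hw0 : M.mulVec w = 0 := hwker
  have hnone : ∑ x : ↥S, w x = 0 := by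
    have := congrFun hw0 none
    simpa [Matrix.mulVec, dotProduct, hM] using this
  have hsome : ∀ i : ↥I, ∑ x : ↥S, (if (x : P) ∈ B i.1 then (1:ℝ) else 0) * w x = 0 := by
    intro i
    have := congrFun hw0 (some i)
    simpa [Matrix.mulVec, dotProduct, hM] using this
  -- the quadratic form
  set α : ↥I → ↥S → ℝ := fun i x => if (x : P) ∈ A i.1 then 1 else 0 with hα
  set β : ↥I → ↥S → ℝ := fun i y => if (y : P) ∈ B i.1 then 1 else 0 with hβ
  set Q : ℝ := ∑ i : ↥I, (∑ x : ↥S, α i x * w x) * (∑ y : ↥S, β i y * w y) with hQ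
  have hQ0 : Q = 0 := by
    apply Finset.sum_eq_zero
    intro i _
    rw [hsome i, mul_zero]
  have key : ∀ x y : ↥S, (∑ i : ↥I, α i x * β i y) = if x = y then (0:ℝ) else 1 := by
    intro x y
    have e1 : ∀ i : ↥I, α i x * β i y
        = if (x : P) ∈ A i.1 ∧ (y : P) ∈ B i.1 then (1:ℝ) else 0 := by
      intro i
      rw [hα, hβ]
      dsimp only
      by_cases h1 : (x : P) ∈ A i.1 <;> by_cases h2 : (y : P) ∈ B i.1 <;>
        simp [h1, h2]
    rw [Finset.sum_congr rfl (fun i _ => e1 i)]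
    rw [Finset.univ_eq_attach,
      Finset.sum_attach I (fun i => if (x : P) ∈ A i ∧ (y : P) ∈ B i then (1:ℝ) else 0)]
    rw [Finset.sum_boole]
    by_cases hxy : x = y
    · rw [if_pos hxy]
      subst hxy
      rw [hdiag (x : P) x.2]
      norm_num
    · rw [if_neg hxy]
      rw [hoff (x : P) x.2 (y : P) y.2 (fun h => hxy (Subtype.ext h))]
      norm_num
  have e2 : Q = ∑ x : ↥S, ∑ y : ↥S, (∑ i : ↥I, α i x * β i y) * (w x * w y) := by
    rw [hQ]
    simp only [Finset.sum_mul_sum]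
    rw [Finset.sum_comm]
    apply Finset.sum_congr rfl
    intro x _
    rw [Finset.sum_comm]
    apply Finset.sum_congr rfl
    intro y _
    rw [Finset.sum_mul]
    apply Finset.sum_congr rfl
    intro i _
    ring
  have e3 : Q = (∑ x : ↥S, w x) * (∑ y : ↥S, w y) - ∑ x : ↥S, w x * w x := by
    rw [e2]
    have hx : ∀ x : ↥S, ∑ y : ↥S, (∑ i : ↥I, α i x * β i y) * (w x * w y)
        = w x * (∑ y : ↥S, w y) - w x * w x := by
      intro x
      have hterm : ∀ y : ↥S, (∑ i : ↥I, α i x * β i y) * (w x * w y)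
          = w x * w y - (if x = y then w x * w y else 0) := by
        intro y
        rw [key x y]
        split_ifs <;> ring
      rw [Finset.sum_congr rfl fun y _ => hterm y, Finset.sum_sub_distrib, Finset.mul_sum]
      congr 1
      rw [Finset.sum_ite_eq]
      simp
    rw [Finset.sum_congr rfl fun x _ => hx x, Finset.sum_sub_distrib, Finset.sum_mul]
  rw [hnone, zero_mul, hQ0] at e3
  have hsum0 : ∑ x : ↥S, w x * w x = 0 := by linarith
  have hz : ∀ x : ↥S, w x * w x = 0 := by
    intro x
    exact (Finset.sum_eq_zero_iff_of_nonneg (fun y _ => mul_self_nonneg (w y))).1 hsum0 x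
      (Finset.mem_univ x)
  apply hwne
  funext x
  exact mul_self_eq_zero.1 (hz x)
/-- any partition of `(F_qP²)²` into product sets, each contained in the
square of a projective line, has at least `q(q²+q+1)/4` parts. -/
theorem dpp_plane_lower_bound (q N : ℕ) (K : Type) [Field K] [Fintype K]
    (hq : Fintype.card K = q)
    (A₁ A₂ : Fin N → Set (Projectivization K (Fin 3 → K)))
    (hne : ∀ i, (A₁ i ×ˢ A₂ i).Nonempty)
    (hdisj : ∀ i j, i ≠ j → Disjoint (A₁ i ×ˢ A₂ i) (A₁ j ×ˢ A₂ j))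
    (hcover : ⋃ i, A₁ i ×ˢ A₂ i = Set.univ)
    (hline : ∀ i, ∃ L : Set (Projectivization K (Fin 3 → K)),
      IsFlat 1 L ∧ A₁ i ×ˢ A₂ i ⊆ L ×ˢ L) :
    ((q : ℝ) * ((q : ℝ) ^ 2 + q + 1)) / 4 ≤ (N : ℝ) := by
  classical
  subst hq
  set V := (Fin 3 → K) with hV
  have hq2 : 2 ≤ Fintype.card K := Fintype.one_lt_card
  have hrank3 : finrank K V = 3 := by
    show finrank K (Fin 3 → K) = 3
    rw [Module.finrank_fintype_fun_eq_card, Fintype.card_fin]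
  haveI hfinP : Finite (ℙ K V) := Quotient.finite _
  haveI := Fintype.ofFinite (ℙ K V)
  haveI : Finite {W : Submodule K V // finrank K W = 2} := Subtype.finite
  haveI := Fintype.ofFinite {W : Submodule K V // finrank K W = 2}
  -- choose a line for each part
  have hsplit : ∀ i, ∃ W : Submodule K V, finrank K W = 2 ∧
      (∀ a ∈ A₁ i, a.submodule ≤ W) ∧ (∀ b ∈ A₂ i, b.submodule ≤ W) := by
    intro i
    obtain ⟨L, hLflat, hsub⟩ := hline i
    unfold IsFlat at hLflat
    obtain ⟨W, hW, rfl⟩ := hLflat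
    obtain ⟨⟨a₀, b₀⟩, ha₀, hb₀⟩ := hne i
    exact ⟨W, hW, fun a ha => (hsub (Set.mk_mem_prod ha hb₀)).1,
      fun b hb => (hsub (Set.mk_mem_prod ha₀ hb)).2⟩
  choose f hf2 hfA hfB using hsplit
  -- the part containing the diagonal point (x, x)
  have hgex : ∀ x : ℙ K V, ∃ i, x ∈ A₁ i ∧ x ∈ A₂ i := by
    intro x
    have hx : ((x, x) : ℙ K V × ℙ K V) ∈ ⋃ i, A₁ i ×ˢ A₂ i := by
      rw [hcover]; exact Set.mem_univ _
    obtain ⟨i, hi⟩ := Set.mem_iUnion.1 hx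
    exact ⟨i, hi.1, hi.2⟩
  choose g hgA hgB using hgex
  set 𝕃 := {W : Submodule K V // finrank K W = 2} with h𝕃
  set F : Fin N → 𝕃 := fun i => ⟨f i, hf2 i⟩ with hF
  set Pts : 𝕃 → Finset (ℙ K V) :=
    fun Λ => univ.filter (fun x => x.submodule ≤ Λ.1) with hPts
  set T : 𝕃 → Finset (ℙ K V) := fun Λ => (Pts Λ).filter (fun x => F (g x) = Λ) with hT
  set S : 𝕃 → Finset (ℙ K V) := fun Λ => (Pts Λ).filter (fun x => ¬ F (g x) = Λ) with hS
  set I : 𝕃 → Finset (Fin N) := fun Λ => univ.filter (fun i => F i = Λ) with hI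
  -- the key per-line bound
  have hkey : ∀ Λ : 𝕃, (S Λ).card ≤ (I Λ).card + 1 := by
    intro Λ
    apply core_lemma A₁ A₂ (I Λ) (S Λ)
    · -- diagonal
      intro x hx _
      rw [Finset.card_eq_zero, Finset.filter_eq_empty_iff]
      intro i hi
      rintro ⟨h1, h2⟩
      rw [hI] at hi
      rw [hS, Finset.mem_filter] at hx
      apply hx.2
      have hig : i = g x := by
        by_contra hne'
        exact Set.disjoint_left.1 (hdisj i (g x) hne') (Set.mk_mem_prod h1 h2)
          (Set.mk_mem_prod (hgA x) (hgB x))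
      rw [← hig]
      exact (Finset.mem_filter.1 hi).2
    · -- off-diagonal
      intro x hx y hy hxy _
      rw [hS, Finset.mem_filter, hPts, Finset.mem_filter] at hx hy
      have hx' : x.submodule ≤ Λ.1 := hx.1.2
      have hy' : y.submodule ≤ Λ.1 := hy.1.2
      -- the unique part containing (x, y)
      have hxy' : ((x, y) : ℙ K V × ℙ K V) ∈ ⋃ i, A₁ i ×ˢ A₂ i := by
        rw [hcover]; exact Set.mem_univ _
      obtain ⟨i₀, hi₀⟩ := Set.mem_iUnion.1 hxy'
      rw [Finset.card_eq_one]
      refine ⟨i₀, Finset.eq_singleton_iff_unique_mem.2 ⟨?_, ?_⟩⟩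
      · rw [Finset.mem_filter]
        refine ⟨?_, hi₀.1, hi₀.2⟩
        rw [hI, Finset.mem_filter]
        refine ⟨Finset.mem_univ _, ?_⟩
        apply Subtype.ext
        exact line_unique hxy (hf2 i₀) Λ.2 (hfA i₀ x hi₀.1) (hfB i₀ y hi₀.2) hx' hy'
      · intro j hj
        rw [Finset.mem_filter] at hj
        by_contra hne'
        exact Set.disjoint_left.1 (hdisj j i₀ hne') (Set.mk_mem_prod hj.2.1 hj.2.2)
          (Set.mk_mem_prod hi₀.1 hi₀.2)
  -- counting
  have hNsum : ∑ Λ : 𝕃, (I Λ).card = N := by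
    rw [hI]
    have := Finset.card_eq_sum_card_fiberwise (s := (univ : Finset (Fin N)))
      (t := (univ : Finset 𝕃)) (f := F) (fun x _ => Finset.mem_univ _)
    rw [Finset.card_univ, Fintype.card_fin] at this
    exact this.symm
  have hPtsCard : ∀ Λ : 𝕃, (Pts Λ).card = Fintype.card K + 1 := by
    intro Λ
    have h1 := card_pts_line (K := K) (V := V) Λ.2
    rw [Nat.card_eq_fintype_card, Fintype.card_subtype] at h1
    exact h1
  have hsplitΛ : ∀ Λ : 𝕃, (T Λ).card + (S Λ).card = Fintype.card K + 1 := by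
    intro Λ
    rw [hT, hS, ← hPtsCard Λ]
    exact Finset.card_filter_add_card_filter_not _
  have hTsum : ∑ Λ : 𝕃, (T Λ).card ≤ Fintype.card K ^ 2 + Fintype.card K + 1 := by
    have h1 : ∀ Λ : 𝕃, (T Λ).card ≤ (univ.filter (fun x : ℙ K V => F (g x) = Λ)).card := by
      intro Λ
      apply Finset.card_le_card
      rw [hT, hPts]
      intro x hx
      rw [Finset.mem_filter] at hx ⊢
      exact ⟨Finset.mem_univ _, hx.2⟩
    calc ∑ Λ : 𝕃, (T Λ).card ≤ ∑ Λ : 𝕃, (univ.filter (fun x : ℙ K V => F (g x) = Λ)).card :=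
          Finset.sum_le_sum (fun Λ _ => h1 Λ)
      _ = Fintype.card (ℙ K V) := by
          rw [← Finset.card_univ,
            Finset.card_eq_sum_card_fiberwise (s := (univ : Finset (ℙ K V)))
              (t := (univ : Finset 𝕃)) (f := fun x => F (g x)) (fun x _ => Finset.mem_univ _)]
      _ = Fintype.card K ^ 2 + Fintype.card K + 1 := by
          rw [← Nat.card_eq_fintype_card]
          exact card_proj_plane K V hrank3
  have hLcard : Fintype.card 𝕃 = Fintype.card K ^ 2 + Fintype.card K + 1 := by
    rw [← Nat.card_eq_fintype_card]
    exact card_lines K V hrank3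
  -- assemble
  have hmain : (Fintype.card K + 1) * (Fintype.card K ^ 2 + Fintype.card K + 1)
      ≤ N + 2 * (Fintype.card K ^ 2 + Fintype.card K + 1) := by
    have h1 : ∑ Λ : 𝕃, (T Λ).card + ∑ Λ : 𝕃, (S Λ).card
        = (Fintype.card 𝕃) * (Fintype.card K + 1) := by
      rw [← Finset.sum_add_distrib, Finset.sum_congr rfl (fun Λ _ => hsplitΛ Λ),
        Finset.sum_const, Finset.card_univ, smul_eq_mul]
    have hB : ∑ Λ : 𝕃, (S Λ).card ≤ N + Fintype.card 𝕃 := by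
      calc ∑ Λ : 𝕃, (S Λ).card ≤ ∑ Λ : 𝕃, ((I Λ).card + 1) :=
            Finset.sum_le_sum (fun Λ _ => hkey Λ)
        _ = N + Fintype.card 𝕃 := by
            rw [Finset.sum_add_distrib, hNsum, Finset.sum_const, Finset.card_univ,
              smul_eq_mul, mul_one]
    rw [hLcard] at h1
    have hexp : (Fintype.card K ^ 2 + Fintype.card K + 1) * (Fintype.card K + 1)
        = (Fintype.card K + 1) * (Fintype.card K ^ 2 + Fintype.card K + 1) := by ring
    rw [hexp] at h1
    omega
  -- final real arithmetic
  have hcast : ((Fintype.card K : ℝ) + 1) * ((Fintype.card K : ℝ) ^ 2 + Fintype.card K + 1)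
      ≤ (N : ℝ) + 2 * ((Fintype.card K : ℝ) ^ 2 + Fintype.card K + 1) := by
    exact_mod_cast hmain
  have hq2r : (2 : ℝ) ≤ (Fintype.card K : ℝ) := by exact_mod_cast hq2
  nlinarith [hcast, hq2r, sq_nonneg ((Fintype.card K : ℝ)), sq_nonneg ((Fintype.card K : ℝ) - 2)]
end

section
/- Let q be a prime power and let F_qP^2 denote the projective plane over F_q. There exists a partition of (F_qP^2)^2 into exactly (q^2+q+1)(q+1) product sets A^i_1 × A^i_2 such that for every i there is a projective line L^i ⊆ F_qP^2 with A^i_1 × A^i_2 ⊆ (L^i)^2. -/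
open Projectivization Configuration
open scoped LinearAlgebra.Projectivization

private lemma quad_inj {a b : ℕ} (h : a ^ 2 + a + 1 = b ^ 2 + b + 1) : a = b := by
  rcases lt_trichotomy a b with h' | h' | h'
  · nlinarith
  · exact h'
  · nlinarith

private lemma orth_iff {K : Type} [Field K] (v w : ℙ K (Fin 3 → K)) :
    v.orthogonal w ↔ dotProduct v.rep w.rep = 0 := by
  conv_lhs => rw [← v.mk_rep, ← w.mk_rep]
  exact Projectivization.orthogonal_mk _ _

private noncomputable def projEquiv (K : Type) [Field K] :
    (ℙ K (Fin 3 → K)) × Kˣ ≃ {v : Fin 3 → K // v ≠ 0} := by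
  apply Equiv.ofBijective (fun pa => ⟨(pa.2 : K) • pa.1.rep,
    smul_ne_zero pa.2.ne_zero pa.1.rep_nonzero⟩)
  constructor
  · rintro ⟨p, a⟩ ⟨r, b⟩ h
    simp only [Subtype.mk.injEq] at h
    have hp : p = r := by
      have h1 : Projectivization.mk K ((a : K) • p.rep)
          (smul_ne_zero a.ne_zero p.rep_nonzero) = p := by
        conv_rhs => rw [← p.mk_rep]
        rw [Projectivization.mk_eq_mk_iff]
        exact ⟨a, rfl⟩
      have h2 : Projectivization.mk K ((b : K) • r.rep)
          (smul_ne_zero b.ne_zero r.rep_nonzero) = r := by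
        conv_rhs => rw [← r.mk_rep]
        rw [Projectivization.mk_eq_mk_iff]
        exact ⟨b, rfl⟩
      rw [← h1, ← h2]
      congr 1
    subst hp
    have hab : (a : K) = (b : K) := by
      by_contra hne
      have : ((a : K) - b) • p.rep = 0 := by rw [sub_smul, h, sub_self]
      rcases smul_eq_zero.mp this with h' | h'
      · exact hne (by linear_combination h')
      · exact p.rep_nonzero h'
    exact Prod.ext rfl (Units.ext hab)
  · rintro ⟨v, hv⟩
    obtain ⟨a, ha⟩ := Projectivization.exists_smul_eq_mk_rep K v hv
    refine ⟨⟨Projectivization.mk K v hv, a⁻¹⟩, ?_⟩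
    ext : 1
    simp only
    rw [← ha]
    simp [Units.smul_def, smul_smul, inv_mul_cancel₀ a.ne_zero]

/-- there is a partition of `(F_qP²)²` into exactly `(q²+q+1)(q+1)` product
sets, each contained in the square of a projective line. -/
theorem dpp_plane_upper_bound (q : ℕ) (K : Type) [Field K] [Fintype K]
    (hq : Fintype.card K = q) :
    ∃ A₁ A₂ : Fin ((q ^ 2 + q + 1) * (q + 1)) → Set (Projectivization K (Fin 3 → K)),
      (∀ i, (A₁ i ×ˢ A₂ i).Nonempty) ∧
      (∀ i j, i ≠ j → Disjoint (A₁ i ×ˢ A₂ i) (A₁ j ×ˢ A₂ j)) ∧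
      (⋃ i, A₁ i ×ˢ A₂ i) = Set.univ ∧
      ∀ i, ∃ L : Set (Projectivization K (Fin 3 → K)),
        IsFlat 1 L ∧ A₁ i ×ˢ A₂ i ⊆ L ×ˢ L := by
  classical
  haveI : Finite (ℙ K (Fin 3 → K)) := Quotient.finite _
  haveI : Fintype (ℙ K (Fin 3 → K)) := Fintype.ofFinite _
  have hq2 : 2 ≤ q := hq ▸ Fintype.one_lt_card
  -- cardinality of the projective plane
  have hP : Nat.card (ℙ K (Fin 3 → K)) = q ^ 2 + q + 1 := by
    have hu : Nat.card Kˣ = q - 1 := by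
      rw [Nat.card_eq_fintype_card, Fintype.card_units, hq]
    have hv : Nat.card {v : Fin 3 → K // v ≠ 0} = q ^ 3 - 1 := by
      have h := Fintype.card_subtype_compl (fun v : Fin 3 → K => v = 0)
      simp only [Fintype.card_subtype_eq] at h
      rw [Nat.card_eq_fintype_card]
      have hc : Fintype.card (Fin 3 → K) = q ^ 3 := by simp [Fintype.card_fun, hq]
      rw [hc] at h
      convert h using 2
    have h1 : Nat.card (ℙ K (Fin 3 → K)) * (q - 1) = q ^ 3 - 1 := by
      have := Nat.card_congr (projEquiv K)
      rw [Nat.card_prod, hu, hv] at this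
      exact this
    have key : (q ^ 2 + q + 1) * (q - 1) = q ^ 3 - 1 := by
      obtain ⟨k, rfl⟩ : ∃ k, q = k + 2 := ⟨q - 2, by omega⟩
      have e1 : (k + 2) ^ 3 = k ^ 3 + 6 * k ^ 2 + 12 * k + 8 := by ring
      have e2 : ((k + 2) ^ 2 + (k + 2) + 1) * (k + 2 - 1) = k ^ 3 + 6 * k ^ 2 + 12 * k + 7 := by
        rw [show k + 2 - 1 = k + 1 from rfl]; ring
      omega
    exact Nat.eq_of_mul_eq_mul_right (by omega) (h1.trans key.symm)
  -- the order of the plane is q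
  have horder : ProjectivePlane.order (ℙ K (Fin 3 → K)) (ℙ K (Fin 3 → K)) = q := by
    have h := ProjectivePlane.card_points (ℙ K (Fin 3 → K)) (ℙ K (Fin 3 → K))
    rw [← Nat.card_eq_fintype_card, hP] at h
    exact (quad_inj h).symm
  -- every point lies on a line
  have hline : ∀ p : ℙ K (Fin 3 → K), ∃ l : ℙ K (Fin 3 → K), p ∈ l := by
    intro p
    have h := ProjectivePlane.two_lt_lineCount (P := ℙ K (Fin 3 → K)) (L := ℙ K (Fin 3 → K)) p
    rw [lineCount] at h
    have hpos : 0 < Nat.card {l : ℙ K (Fin 3 → K) // p ∈ l} := by omega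
    obtain ⟨⟨l, hl⟩⟩ := (Nat.card_pos_iff.mp hpos).1
    exact ⟨l, hl⟩
  choose l₀ hl₀ using hline
  -- every line has a point different from any given point
  have hsecond : ∀ l p : ℙ K (Fin 3 → K), ∃ x, x ∈ l ∧ x ≠ p := by
    intro l p
    have h := ProjectivePlane.two_lt_pointCount (P := ℙ K (Fin 3 → K)) (L := ℙ K (Fin 3 → K)) l
    rw [pointCount] at h
    have h1 : 1 < Nat.card {x : ℙ K (Fin 3 → K) // x ∈ l} := by omega
    haveI : Nontrivial {x : ℙ K (Fin 3 → K) // x ∈ l} := Finite.one_lt_card_iff_nontrivial.mp h1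
    obtain ⟨⟨x, hx⟩, ⟨y, hy⟩, hxy⟩ := exists_pair_ne {x : ℙ K (Fin 3 → K) // x ∈ l}
    by_cases hxp : x = p
    · exact ⟨y, hy, fun h' => hxy (by simp [Subtype.ext_iff, hxp, h'])⟩
    · exact ⟨x, hx, hxp⟩
  -- lines are contained in 1-flats
  have hflat : ∀ l : ℙ K (Fin 3 → K), ∃ Lset : Set (ℙ K (Fin 3 → K)),
      IsFlat 1 Lset ∧ {x : ℙ K (Fin 3 → K) | x ∈ l} ⊆ Lset := by
    intro l
    set w := l.rep with hw_def
    let φ : (Fin 3 → K) →ₗ[K] K :=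
      { toFun := fun v => dotProduct v w
        map_add' := fun a b => add_dotProduct a b w
        map_smul' := fun c a => smul_dotProduct c a w }
    have hw : w ≠ 0 := l.rep_nonzero
    rw [ne_eq, ← dotProduct_eq_zero_iff, not_forall] at hw
    obtain ⟨u, hu⟩ := hw
    have hu' : φ u ≠ 0 := by
      simpa [φ, dotProduct_comm] using hu
    have hsurj : Function.Surjective φ := by
      intro c
      refine ⟨(c * (φ u)⁻¹) • u, ?_⟩
      rw [map_smul, smul_eq_mul, mul_assoc, inv_mul_cancel₀ hu', mul_one]
    have hker : Module.finrank K ↥(LinearMap.ker φ) = 2 := by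
      have h := LinearMap.finrank_range_add_finrank_ker φ
      rw [LinearMap.range_eq_top.mpr hsurj, finrank_top, Module.finrank_self,
        Module.finrank_fin_fun] at h
      omega
    refine ⟨{x : ℙ K (Fin 3 → K) | x.submodule ≤ LinearMap.ker φ}, ⟨LinearMap.ker φ, hker, rfl⟩, ?_⟩
    intro x hx
    have hx' : dotProduct x.rep w = 0 := (orth_iff x l).mp hx
    have hmem : x.rep ∈ LinearMap.ker φ := hx'
    rw [Set.mem_setOf_eq, Projectivization.submodule_eq]
    exact (Submodule.span_singleton_le_iff_mem _ _).mpr hmem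
  -- the index equivalence
  have hS : Fintype.card ((p : ℙ K (Fin 3 → K)) × {l : ℙ K (Fin 3 → K) // p ∈ l}) =
      (q ^ 2 + q + 1) * (q + 1) := by
    rw [Fintype.card_sigma]
    have hfib : ∀ p : ℙ K (Fin 3 → K), Fintype.card {l : ℙ K (Fin 3 → K) // p ∈ l} = q + 1 := by
      intro p
      rw [← Nat.card_eq_fintype_card]
      have h := ProjectivePlane.lineCount_eq (L := ℙ K (Fin 3 → K)) p
      rw [lineCount, horder] at h
      exact h
    simp only [hfib]
    rw [Finset.sum_const, Finset.card_univ, ← Nat.card_eq_fintype_card, hP, smul_eq_mul]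
  let e : Fin ((q ^ 2 + q + 1) * (q + 1)) ≃
      (p : ℙ K (Fin 3 → K)) × {l : ℙ K (Fin 3 → K) // p ∈ l} :=
    (Fintype.equivFinOfCardEq hS).symm
  -- the pieces
  let B₁ : ((p : ℙ K (Fin 3 → K)) × {l : ℙ K (Fin 3 → K) // p ∈ l}) → Set (ℙ K (Fin 3 → K)) :=
    fun s => {s.1}
  let B₂ : ((p : ℙ K (Fin 3 → K)) × {l : ℙ K (Fin 3 → K) // p ∈ l}) → Set (ℙ K (Fin 3 → K)) :=
    fun s => if (s.2 : ℙ K (Fin 3 → K)) = l₀ s.1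
      then {x : ℙ K (Fin 3 → K) | x ∈ (s.2 : ℙ K (Fin 3 → K))}
      else {x : ℙ K (Fin 3 → K) | x ∈ (s.2 : ℙ K (Fin 3 → K))} \ {s.1}
  have hB₂sub : ∀ s, B₂ s ⊆ {x : ℙ K (Fin 3 → K) | x ∈ (s.2 : ℙ K (Fin 3 → K))} := by
    intro s x hx
    by_cases hc : (s.2 : ℙ K (Fin 3 → K)) = l₀ s.1
    · simpa [B₂, hc] using hx
    · have hx' : x ∈ ({y : ℙ K (Fin 3 → K) | y ∈ (s.2 : ℙ K (Fin 3 → K))} : Set _) ∧ x ≠ s.1 := by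
        simpa [B₂, hc] using hx
      exact hx'.1
  have hB₁mem : ∀ s, (s.1 : ℙ K (Fin 3 → K)) ∈ B₁ s := fun s => rfl
  -- nonempty for each sigma index
  have hne' : ∀ s : (p : ℙ K (Fin 3 → K)) × {l : ℙ K (Fin 3 → K) // p ∈ l},
      (B₁ s ×ˢ B₂ s).Nonempty := by
    rintro ⟨p, l, hpl⟩
    by_cases hc : l = l₀ p
    · refine ⟨(p, p), rfl, ?_⟩
      show p ∈ B₂ ⟨p, l, hpl⟩
      simp only [B₂, if_pos hc]
      exact hpl
    · obtain ⟨x, hx, hxp⟩ := hsecond l p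
      refine ⟨(p, x), rfl, ?_⟩
      show x ∈ B₂ ⟨p, l, hpl⟩
      simp only [B₂, if_neg hc]
      exact ⟨hx, hxp⟩
  -- disjointness for distinct sigma indices
  have hdisj' : ∀ s t : (p : ℙ K (Fin 3 → K)) × {l : ℙ K (Fin 3 → K) // p ∈ l}, s ≠ t →
      Disjoint (B₁ s ×ˢ B₂ s) (B₁ t ×ˢ B₂ t) := by
    rintro ⟨p, l, hpl⟩ ⟨p', l', hpl'⟩ hst
    rw [Set.disjoint_left]
    rintro ⟨z1, z2⟩ ⟨hz1, hz2⟩ ⟨hz1', hz2'⟩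
    simp only [B₁, Set.mem_singleton_iff] at hz1 hz1'
    have hpp : p = p' := hz1 ▸ hz1'
    subst hpp
    have hll : l ≠ l' := by
      intro h
      subst h
      exact hst rfl
    have h2 : z2 ∈ l := hB₂sub ⟨p, l, hpl⟩ hz2
    have h2' : z2 ∈ l' := hB₂sub ⟨p, l', hpl'⟩ hz2'
    rcases Nondegenerate.eq_or_eq h2 hpl h2' hpl' with hz | hl
    · subst hz
      have hc1 : l = l₀ z2 := by
        by_contra hc
        have hx' : z2 ∈ ({y : ℙ K (Fin 3 → K) | y ∈ l} : Set _) ∧ z2 ≠ z2 := by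
          simpa [B₂, hc] using hz2
        exact hx'.2 rfl
      have hc2 : l' = l₀ z2 := by
        by_contra hc
        have hx' : z2 ∈ ({y : ℙ K (Fin 3 → K) | y ∈ l'} : Set _) ∧ z2 ≠ z2 := by
          simpa [B₂, hc] using hz2'
        exact hx'.2 rfl
      exact hll (hc1.trans hc2.symm)
    · exact hll hl
  -- coverage
  have hcov' : ∀ x y : ℙ K (Fin 3 → K),
      ∃ s : (p : ℙ K (Fin 3 → K)) × {l : ℙ K (Fin 3 → K) // p ∈ l},
        x ∈ B₁ s ∧ y ∈ B₂ s := by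
    intro x y
    by_cases hxy : y = x
    · refine ⟨⟨x, l₀ x, hl₀ x⟩, rfl, ?_⟩
      show y ∈ B₂ ⟨x, l₀ x, hl₀ x⟩
      simp only [B₂, if_pos rfl]
      subst hxy
      exact hl₀ y
    · have hne : x ≠ y := fun h => hxy h.symm
      have hax := (HasLines.mkLine_ax (P := ℙ K (Fin 3 → K)) (L := ℙ K (Fin 3 → K)) hne).1
      have hay := (HasLines.mkLine_ax (P := ℙ K (Fin 3 → K)) (L := ℙ K (Fin 3 → K)) hne).2
      refine ⟨⟨x, HasLines.mkLine hne, hax⟩, rfl, ?_⟩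
      show y ∈ B₂ ⟨x, HasLines.mkLine hne, hax⟩
      by_cases hc : HasLines.mkLine hne = l₀ x
      · simp only [B₂, if_pos hc]
        exact hay
      · simp only [B₂, if_neg hc]
        exact ⟨hay, hxy⟩
  -- flats for each sigma index
  have hflat' : ∀ s : (p : ℙ K (Fin 3 → K)) × {l : ℙ K (Fin 3 → K) // p ∈ l},
      ∃ L : Set (ℙ K (Fin 3 → K)), IsFlat 1 L ∧ B₁ s ×ˢ B₂ s ⊆ L ×ˢ L := by
    intro s
    obtain ⟨Lset, hL, hsub⟩ := hflat (s.2 : ℙ K (Fin 3 → K))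
    refine ⟨Lset, hL, Set.prod_mono ?_ ?_⟩
    · intro x hx
      simp only [B₁, Set.mem_singleton_iff] at hx
      subst hx
      exact hsub s.2.2
    · exact fun x hx => hsub (hB₂sub s hx)
  refine ⟨fun i => B₁ (e i), fun i => B₂ (e i), fun i => hne' (e i),
    fun i j hij => hdisj' (e i) (e j) (fun h => hij (e.injective h)), ?_, fun i => hflat' (e i)⟩
  rw [Set.iUnion_eq_univ_iff]
  rintro ⟨x, y⟩
  obtain ⟨s, hx, hy⟩ := hcov' x y
  exact ⟨e.symm s, by simpa only [Equiv.apply_symm_apply] using Set.mk_mem_prod hx hy⟩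
end

section
/- Let q be a prime power and let {S^i}_{i=1}^N be a partition of the projective plane F_qP^2 such that each S^i is contained in some projective line. For a projective line L, let φ(L) denote the number of indices i with S^i ∩ L ≠ ∅. Then ∑_L φ(L) ≥ q(q^2+q+1), where the sum is over all projective lines L of F_qP^2. -/
open scoped BigOperators

namespace SumPhiAux

open Module Projectivization

variable {K : Type} [Field K] [Fintype K]

section General

variable {V : Type*} [AddCommGroup V] [Module K V]

lemma rep_mem_submodule (x : Projectivization K V) : x.rep ∈ x.submodule := by
  rw [Projectivization.submodule_eq]
  exact Submodule.mem_span_singleton_self _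

lemma card_flat_mul [Fintype V] (W : Submodule K V) :
    Set.ncard {x : Projectivization K V | x.submodule ≤ W} * (Fintype.card K - 1)
      = Fintype.card K ^ (Module.finrank K ↥W) - 1 := by
  classical
  set A := {x : Projectivization K V | x.submodule ≤ W}
  let f : A × Kˣ → {v : V // v ∈ W ∧ v ≠ 0} := fun z =>
    ⟨(z.2 : K) • z.1.1.rep,
      Submodule.smul_mem _ _ (z.1.2 (rep_mem_submodule z.1.1)),
      smul_ne_zero (Units.ne_zero _) z.1.1.rep_nonzero⟩
  have hbij : Function.Bijective f := by
    constructor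
    · rintro ⟨⟨x, hx⟩, a⟩ ⟨⟨y, hy⟩, b⟩ h
      simp only [f, Subtype.mk_eq_mk] at h
      have hxy : x = y := by
        conv_lhs => rw [← x.mk_rep]
        conv_rhs => rw [← y.mk_rep]
        rw [Projectivization.mk_eq_mk_iff]
        refine ⟨a⁻¹ * b, ?_⟩
        rw [Units.smul_def, Units.val_mul, mul_smul, ← h, ← mul_smul]
        simp
      subst hxy
      have hab : (a : K) = (b : K) := by
        exact smul_left_injective K x.rep_nonzero h
      simp [Prod.ext_iff, Units.ext_iff, hab]
    · rintro ⟨v, hvW, hv0⟩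
      obtain ⟨a, ha⟩ := Projectivization.exists_smul_eq_mk_rep K v hv0
      refine ⟨⟨⟨Projectivization.mk K v hv0, ?_⟩, a⁻¹⟩, ?_⟩
      · simp only [A, Set.mem_setOf_eq, Projectivization.submodule_mk]
        exact Submodule.span_singleton_le_iff_mem v W |>.mpr hvW
      · ext
        simp only [f]
        rw [← ha, Units.smul_def, ← mul_smul]
        simp
  have hcardeq : Nat.card (A × Kˣ) = Nat.card {v : V // v ∈ W ∧ v ≠ 0} :=
    Nat.card_congr (Equiv.ofBijective f hbij)
  rw [Nat.card_prod] at hcardeq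
  have h1 : Nat.card Kˣ = Fintype.card K - 1 := by
    rw [Nat.card_eq_fintype_card, Fintype.card_units]
  have h2 : Nat.card {v : V // v ∈ W ∧ v ≠ 0} = Fintype.card K ^ (Module.finrank K ↥W) - 1 := by
    have e : {v : V // v ∈ W ∧ v ≠ 0} ≃ {w : W // w ≠ 0} :=
      { toFun := fun z => ⟨⟨z.1, z.2.1⟩, fun h => z.2.2 (by simpa using congrArg Subtype.val h)⟩
        invFun := fun w => ⟨w.1.1, w.1.2, fun h => w.2 (Subtype.ext h)⟩
        left_inv := fun z => rfl
        right_inv := fun w => rfl }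
    rw [Nat.card_congr e, Nat.card_eq_fintype_card]
    have : Fintype.card {w : W // ¬ (w = 0)} = Fintype.card W - Fintype.card {w : W // w = 0} :=
      Fintype.card_subtype_compl _
    simp only [ne_eq, this, Fintype.card_subtype_eq]
    rw [card_eq_pow_finrank (K := K) (V := W)]
  rw [h1, h2] at hcardeq
  rw [← hcardeq, Nat.card_coe_set_eq]

omit [Fintype K] in
lemma finrank_sup_eq_two [FiniteDimensional K V] {x y : Projectivization K V} (h : x ≠ y) :
    Module.finrank K ↥(x.submodule ⊔ y.submodule) = 2 := by
  have hle : Module.finrank K ↥(x.submodule ⊔ y.submodule) ≤ 2 := by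
    have := Submodule.finrank_sup_add_finrank_inf_eq x.submodule y.submodule
    rw [x.finrank_submodule, y.finrank_submodule] at this
    omega
  have hx1 := x.finrank_submodule
  have hne : Module.finrank K ↥(x.submodule ⊔ y.submodule) ≠ 1 := by
    intro h1
    have hxeq : x.submodule = x.submodule ⊔ y.submodule :=
      Submodule.eq_of_le_of_finrank_le le_sup_left (by rw [h1, x.finrank_submodule])
    have hyeq : y.submodule = x.submodule ⊔ y.submodule :=
      Submodule.eq_of_le_of_finrank_le le_sup_right (by rw [h1, y.finrank_submodule])
    exact h (Projectivization.submodule_injective (hxeq.trans hyeq.symm))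
  have hge : 1 ≤ Module.finrank K ↥(x.submodule ⊔ y.submodule) := by
    have : x.submodule ≤ x.submodule ⊔ y.submodule := le_sup_left
    have := Submodule.finrank_mono this
    omega
  omega

omit [Fintype K] in
lemma flat_unique [FiniteDimensional K V] {L L' : Set (Projectivization K V)}
    (hL : IsFlat 1 L) (hL' : IsFlat 1 L') {x y : Projectivization K V} (hxy : x ≠ y)
    (hx : x ∈ L) (hy : y ∈ L) (hx' : x ∈ L') (hy' : y ∈ L') : L = L' := by
  obtain ⟨W, hW, rfl⟩ := hL
  obtain ⟨W', hW', rfl⟩ := hL'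
  have hU : x.submodule ⊔ y.submodule ≤ W := sup_le hx hy
  have hU' : x.submodule ⊔ y.submodule ≤ W' := sup_le hx' hy'
  have h2 := finrank_sup_eq_two (K := K) hxy
  have e1 : x.submodule ⊔ y.submodule = W :=
    Submodule.eq_of_le_of_finrank_le hU (by rw [hW, h2])
  have e2 : x.submodule ⊔ y.submodule = W' :=
    Submodule.eq_of_le_of_finrank_le hU' (by rw [hW', h2])
  rw [e1.symm.trans e2]

lemma card_flat [Fintype V] {L : Set (Projectivization K V)} (hL : IsFlat 1 L) :
    L.ncard = Fintype.card K + 1 := by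
  obtain ⟨W, hW, rfl⟩ := hL
  have := card_flat_mul (K := K) W
  rw [hW] at this
  have hq2 : 2 ≤ Fintype.card K := Fintype.one_lt_card
  obtain ⟨k, hk⟩ : ∃ k, Fintype.card K = k + 2 := ⟨Fintype.card K - 2, by omega⟩
  rw [hk] at this ⊢
  have harith : (k + 2 + 1) * (k + 2 - 1) = (k + 2) ^ (1 + 1) - 1 := by
    have e0 : (k + 2) ^ (1 + 1) = k * k + 4 * k + 4 := by ring
    have e1 : k + 2 - 1 = k + 1 := rfl
    rw [e0, e1]
    have e2 : (k + 2 + 1) * (k + 1) = k * k + 4 * k + 3 := by ring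
    omega
  rw [← harith] at this
  have hpos : 0 < k + 2 - 1 := by omega
  exact Nat.eq_of_mul_eq_mul_right hpos this

end General

lemma finite_proj : Finite (Projectivization K (Fin 3 → K)) := by
  have : Finite {v : Fin 3 → K // v ≠ 0} := inferInstance
  exact Quotient.finite _

lemma card_proj :
    Nat.card (Projectivization K (Fin 3 → K))
      = Fintype.card K ^ 2 + Fintype.card K + 1 := by
  have := card_flat_mul (K := K) (⊤ : Submodule K (Fin 3 → K))
  rw [finrank_top, Module.finrank_fin_fun] at this
  have huniv : {x : Projectivization K (Fin 3 → K) | x.submodule ≤ ⊤} = Set.univ := by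
    ext x; simp
  rw [huniv] at this
  have hq2 : 2 ≤ Fintype.card K := Fintype.one_lt_card
  obtain ⟨k, hk⟩ : ∃ k, Fintype.card K = k + 2 := ⟨Fintype.card K - 2, by omega⟩
  rw [hk] at this ⊢
  have harith : ((k + 2) ^ 2 + (k + 2) + 1) * (k + 2 - 1) = (k + 2) ^ 3 - 1 := by
    have e0 : (k + 2) ^ 3 = k*k*k + 6*(k*k) + 12*k + 8 := by ring
    have e1 : k + 2 - 1 = k + 1 := rfl
    have e2 : ((k + 2) ^ 2 + (k + 2) + 1) * (k + 1)
        = k*k*k + 6*(k*k) + 12*k + 7 := by ring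
    rw [e0, e1, e2]
    omega
  rw [← harith] at this
  have hpos : 0 < k + 2 - 1 := by omega
  have := Nat.eq_of_mul_eq_mul_right hpos this
  rw [← this, ← Nat.card_coe_set_eq]
  simp

lemma lines_through (p : Projectivization K (Fin 3 → K)) :
    Fintype.card K + 1
      ≤ {L : Set (Projectivization K (Fin 3 → K)) | IsFlat 1 L ∧ p ∈ L}.ncard := by
  classical
  haveI : Finite (Projectivization K (Fin 3 → K)) := finite_proj
  haveI : Fintype (Projectivization K (Fin 3 → K)) := Fintype.ofFinite _
  set q := Fintype.card K with hq
  have hq2 : 2 ≤ q := Fintype.one_lt_card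
  set s : Finset (Projectivization K (Fin 3 → K)) := Finset.univ.erase p with hs
  set f : Projectivization K (Fin 3 → K) → Set (Projectivization K (Fin 3 → K)) := fun x => {y | y.submodule ≤ p.submodule ⊔ x.submodule} with hf
  set t : Finset (Set (Projectivization K (Fin 3 → K))) := Finset.univ.filter (fun L => IsFlat 1 L ∧ p ∈ L) with ht
  have hmaps : ∀ x ∈ s, f x ∈ t := by
    intro x hx
    rw [Finset.mem_erase] at hx
    rw [ht, Finset.mem_filter]
    refine ⟨Finset.mem_univ _, ⟨p.submodule ⊔ x.submodule,
      finrank_sup_eq_two (Ne.symm hx.1), rfl⟩, ?_⟩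
    simp only [hf, Set.mem_setOf_eq]
    exact le_sup_left
  have hfib : ∀ L ∈ t, (s.filter (fun x => f x = L)).card ≤ q := by
    intro L hL
    rw [ht, Finset.mem_filter] at hL
    obtain ⟨-, hLflat, hpL⟩ := hL
    have hsub : s.filter (fun x => f x = L) ⊆ L.toFinset.erase p := by
      intro x hx
      rw [Finset.mem_filter, hs, Finset.mem_erase] at hx
      obtain ⟨⟨hxp, -⟩, hfx⟩ := hx
      rw [Finset.mem_erase, Set.mem_toFinset]
      exact ⟨hxp, hfx ▸ (le_sup_right : x.submodule ≤ p.submodule ⊔ x.submodule)⟩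
    have hcard : L.toFinset.card = q + 1 := by
      rw [← Set.ncard_eq_toFinset_card', card_flat hLflat]
    calc (s.filter (fun x => f x = L)).card ≤ (L.toFinset.erase p).card :=
          Finset.card_le_card hsub
      _ = q := by
          rw [Finset.card_erase_of_mem (Set.mem_toFinset.mpr hpL), hcard]
          omega
  have hmain := Finset.card_le_mul_card_image_of_maps_to hmaps q hfib
  have hscard : s.card = q ^ 2 + q := by
    rw [hs, Finset.card_erase_of_mem (Finset.mem_univ p), Finset.card_univ,
      ← Nat.card_eq_fintype_card, card_proj, ← hq]
    omega
  rw [hscard] at hmain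
  have : q + 1 ≤ t.card := by
    have h1 : q * (q + 1) ≤ q * t.card := by
      calc q * (q + 1) = q ^ 2 + q := by ring
        _ ≤ q * t.card := hmain
    exact Nat.le_of_mul_le_mul_left h1 (by omega)
  calc q + 1 ≤ t.card := this
    _ = {L : Set (Projectivization K (Fin 3 → K)) | IsFlat 1 L ∧ p ∈ L}.ncard := by
        rw [← Nat.card_coe_set_eq, Nat.card_eq_fintype_card, Fintype.card_subtype, ht]
        congr 1

end SumPhiAux


open SumPhiAux

/-- if `{Sⁱ}` is a partition of the projective plane `F_qP²` with each part
contained in a line, and `φ(L)` is the number of parts meeting a line `L`, then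
`∑_L φ(L) ≥ q(q²+q+1)`, summing over all projective lines. -/
theorem sum_phi_lower_bound (q N : ℕ) (K : Type) [Field K] [Fintype K]
    (hq : Fintype.card K = q)
    (S : Fin N → Set (Projectivization K (Fin 3 → K)))
    (hne : ∀ i, (S i).Nonempty)
    (hdisj : ∀ i j, i ≠ j → Disjoint (S i) (S j))
    (hcover : ⋃ i, S i = Set.univ)
    (hline : ∀ i, ∃ L : Set (Projectivization K (Fin 3 → K)), IsFlat 1 L ∧ S i ⊆ L) :
    q * (q ^ 2 + q + 1) ≤
      ∑ᶠ L ∈ {L : Set (Projectivization K (Fin 3 → K)) | IsFlat 1 L},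
        Set.ncard {i : Fin N | (S i ∩ L).Nonempty} := by
  classical
  haveI : Finite (Projectivization K (Fin 3 → K)) := finite_proj
  haveI : Fintype (Projectivization K (Fin 3 → K)) := Fintype.ofFinite _
  subst hq
  set q := Fintype.card K with hqdef
  set F : Finset (Set (Projectivization K (Fin 3 → K))) :=
    {L : Set (Projectivization K (Fin 3 → K)) | IsFlat 1 L}.toFinset with hF
  rw [← Set.coe_toFinset {L : Set (Projectivization K (Fin 3 → K)) | IsFlat 1 L},
    finsum_mem_coe_finset]
  have hterm : ∀ L : Set (Projectivization K (Fin 3 → K)),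
      Set.ncard {i : Fin N | (S i ∩ L).Nonempty}
        = (Finset.univ.filter fun i => (S i ∩ L).Nonempty).card := by
    intro L
    rw [← Nat.card_coe_set_eq, Nat.card_eq_fintype_card, Fintype.card_subtype]
    congr 1
  have hswap : ∑ L ∈ F, Set.ncard {i : Fin N | (S i ∩ L).Nonempty}
      = ∑ i : Fin N, (F.filter fun L => (S i ∩ L).Nonempty).card := by
    simp_rw [hterm, Finset.card_filter]
    exact Finset.sum_comm
  rw [hswap]
  -- per-part lower bound
  have hper : ∀ i, q * (S i).toFinset.card
      ≤ (F.filter fun L => (S i ∩ L).Nonempty).card := by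
    intro i
    obtain ⟨M, hM, hSM⟩ := hline i
    set B : Projectivization K (Fin 3 → K) → Finset (Set (Projectivization K (Fin 3 → K))) :=
      fun p => (Finset.univ.filter (fun L => IsFlat 1 L ∧ p ∈ L)).erase M with hB
    have hBsub : ∀ p ∈ (S i).toFinset, B p ⊆ F.filter fun L => (S i ∩ L).Nonempty := by
      intro p hp L hL
      rw [hB, Finset.mem_erase, Finset.mem_filter] at hL
      obtain ⟨hLM, -, hLflat, hpL⟩ := hL
      rw [Finset.mem_filter, hF, Set.mem_toFinset]
      exact ⟨hLflat, p, Set.mem_toFinset.mp hp, hpL⟩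
    have hdisjB : ∀ p₁ ∈ (S i).toFinset, ∀ p₂ ∈ (S i).toFinset, p₁ ≠ p₂ →
        Disjoint (B p₁) (B p₂) := by
      intro p₁ hp₁ p₂ hp₂ hne12
      rw [Finset.disjoint_left]
      intro L hL1 hL2
      rw [hB, Finset.mem_erase, Finset.mem_filter] at hL1 hL2
      obtain ⟨hLM, -, hLflat, hp1L⟩ := hL1
      obtain ⟨-, -, -, hp2L⟩ := hL2
      exact hLM (flat_unique hLflat hM hne12 hp1L hp2L
        (hSM (Set.mem_toFinset.mp hp₁)) (hSM (Set.mem_toFinset.mp hp₂)))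
    have hBcard : ∀ p ∈ (S i).toFinset, q ≤ (B p).card := by
      intro p _
      have h1 := lines_through (K := K) p
      have h2 : {L : Set (Projectivization K (Fin 3 → K)) | IsFlat 1 L ∧ p ∈ L}.ncard
          = (Finset.univ.filter (fun L => IsFlat 1 L ∧ p ∈ L)).card := by
        rw [← Nat.card_coe_set_eq, Nat.card_eq_fintype_card, Fintype.card_subtype]
        congr 1
      rw [h2] at h1
      have h3 := Finset.pred_card_le_card_erase
        (s := Finset.univ.filter (fun L => IsFlat 1 L ∧ p ∈ L)) (a := M)
      rw [hB]
      show q ≤ ((Finset.univ.filter (fun L => IsFlat 1 L ∧ p ∈ L)).erase M).card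
      omega
    calc q * (S i).toFinset.card = ∑ _p ∈ (S i).toFinset, q := by
          rw [Finset.sum_const, smul_eq_mul, mul_comm]
      _ ≤ ∑ p ∈ (S i).toFinset, (B p).card := Finset.sum_le_sum hBcard
      _ = ((S i).toFinset.biUnion B).card := (Finset.card_biUnion hdisjB).symm
      _ ≤ (F.filter fun L => (S i ∩ L).Nonempty).card := by
          apply Finset.card_le_card
          intro L hL
          rw [Finset.mem_biUnion] at hL
          obtain ⟨p, hp, hLp⟩ := hL
          exact hBsub p hp hLp
  -- total size of the partition
  have hpart : ∑ i : Fin N, (S i).toFinset.card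
      = Fintype.card (Projectivization K (Fin 3 → K)) := by
    have hdisj' : ∀ i ∈ (Finset.univ : Finset (Fin N)), ∀ j ∈ Finset.univ, i ≠ j →
        Disjoint ((S i).toFinset) ((S j).toFinset) := by
      intro i _ j _ hij
      rw [Set.disjoint_toFinset]
      exact hdisj i j hij
    have hcover' : (Finset.univ : Finset (Fin N)).biUnion (fun i => (S i).toFinset)
        = (Finset.univ : Finset (Projectivization K (Fin 3 → K))) := by
      ext x
      simp only [Finset.mem_biUnion, Finset.mem_univ, true_and, Set.mem_toFinset, iff_true]
      have hx : x ∈ ⋃ i, S i := by rw [hcover]; trivial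
      simpa [Set.mem_iUnion] using hx
    rw [← Finset.card_biUnion hdisj', hcover', Finset.card_univ]
  calc q * (q ^ 2 + q + 1) = q * ∑ i : Fin N, (S i).toFinset.card := by
        rw [hpart, ← Nat.card_eq_fintype_card, card_proj]
    _ = ∑ i : Fin N, q * (S i).toFinset.card := by rw [Finset.mul_sum]
    _ ≤ ∑ i : Fin N, (F.filter fun L => (S i ∩ L).Nonempty).card := Finset.sum_le_sum
        (fun i _ => hper i)
end

section
/- Let q be a prime power, n ≥ 1, and let L be a nonempty set of at most n+1 projective lines in F_qP^n in general position, meaning that for every k with 1 ≤ k ≤ n−1, no k+1 of the lines in L are contained in a common k-flat. Then there exists a line l ∈ L and two points p, p' ∈ l such that for every l' ∈ L with l' ≠ l, the intersection l ∩ l' is contained in {p, p'}. -/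
section Aux

open Module

variable {K V : Type*} [Field K] [AddCommGroup V] [Module K V] [FiniteDimensional K V]

/-- The linear span of (representatives of) a set of projective points. -/
noncomputable def lineSpan (l : Set (Projectivization K V)) : Submodule K V :=
  ⨆ x ∈ l, x.submodule

lemma lineSpan_flat (W : Submodule K V) :
    lineSpan {x : Projectivization K V | x.submodule ≤ W} = W := by
  apply le_antisymm
  · exact iSup₂_le fun x hx => hx
  · intro v hv
    by_cases hv0 : v = 0
    · subst hv0; exact Submodule.zero_mem _
    · have hx : Projectivization.mk K v hv0 ∈
          {x : Projectivization K V | x.submodule ≤ W} := by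
        rw [Set.mem_setOf_eq, Projectivization.submodule_mk]
        exact (Submodule.span_singleton_le_iff_mem v W).mpr hv
      have hle : (Projectivization.mk K v hv0).submodule ≤
          lineSpan {x : Projectivization K V | x.submodule ≤ W} :=
        le_biSup _ hx
      apply hle
      rw [Projectivization.submodule_mk]
      exact Submodule.mem_span_singleton_self v

lemma lineSpan_rank {l : Set (Projectivization K V)} (h : IsFlat 1 l) :
    Module.finrank K (lineSpan l) = 2 := by
  obtain ⟨W, hW, rfl⟩ := h
  rw [lineSpan_flat]; exact hW

lemma mem_line_iff {l : Set (Projectivization K V)} (h : IsFlat 1 l)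
    (p : Projectivization K V) : p ∈ l ↔ p.submodule ≤ lineSpan l := by
  obtain ⟨W, hW, rfl⟩ := h
  rw [lineSpan_flat]; exact Iff.rfl

lemma line_nonempty {l : Set (Projectivization K V)} (h : IsFlat 1 l) :
    ∃ p, p ∈ l := by
  obtain ⟨W, hW, rfl⟩ := h
  have hWb : W ≠ ⊥ := by
    intro hb
    rw [hb] at hW
    simp at hW
  obtain ⟨v, hvW, hv0⟩ := (Submodule.ne_bot_iff W).mp hWb
  refine ⟨Projectivization.mk K v hv0, ?_⟩
  rw [Set.mem_setOf_eq, Projectivization.submodule_mk]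
  exact (Submodule.span_singleton_le_iff_mem v W).mpr hvW

lemma two_points_span {l : Set (Projectivization K V)} (h : IsFlat 1 l)
    {p p' : Projectivization K V} (hne : p ≠ p') (hp : p ∈ l) (hp' : p' ∈ l) :
    lineSpan l = p.submodule ⊔ p'.submodule := by
  have h2 := lineSpan_rank h
  have hple : p.submodule ≤ lineSpan l := (mem_line_iff h p).mp hp
  have hp'le : p'.submodule ≤ lineSpan l := (mem_line_iff h p').mp hp'
  have hsub : p.submodule ≠ p'.submodule := fun hss =>
    hne (Projectivization.submodule_injective hss)
  have hlt : p.submodule < p.submodule ⊔ p'.submodule := by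
    refine lt_of_le_of_ne le_sup_left fun heq => hsub ?_
    have : p'.submodule ≤ p.submodule := heq ▸ le_sup_right
    exact (Submodule.eq_of_le_of_finrank_le this
      (by rw [p.finrank_submodule, p'.finrank_submodule])).symm
  have hrk : 2 ≤ Module.finrank K ↥(p.submodule ⊔ p'.submodule) := by
    have := Submodule.finrank_lt_finrank_of_lt hlt
    rw [p.finrank_submodule] at this
    omega
  exact (Submodule.eq_of_le_of_finrank_le (sup_le hple hp'le) (by omega)).symm

lemma exists_interm : ∀ (k : ℕ) (U : Submodule K V) (d : ℕ),
    Module.finrank K ↥U + k = d → d ≤ Module.finrank K V →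
    ∃ W : Submodule K V, U ≤ W ∧ Module.finrank K ↥W = d
  | 0, U, d, h1, _ => ⟨U, le_rfl, by omega⟩
  | (k+1), U, d, h1, h2 => by
    have hlt : Module.finrank K ↥U < Module.finrank K V := by omega
    obtain ⟨x, hx⟩ := Submodule.exists_of_finrank_lt U hlt
    have hxU : x ∉ U := by simpa using hx 1 one_ne_zero
    have hx0 : x ≠ 0 := fun h => hxU (h ▸ U.zero_mem)
    have hbot : U ⊓ (K ∙ x) = ⊥ := by
      rw [eq_bot_iff]
      intro v hv
      rw [Submodule.mem_inf] at hv
      obtain ⟨c, rfl⟩ := Submodule.mem_span_singleton.mp hv.2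
      rcases eq_or_ne c 0 with rfl | hc
      · simp
      · exact absurd hv.1 (hx c hc)
    have hr : Module.finrank K ↥(U ⊔ (K ∙ x)) = Module.finrank K ↥U + 1 := by
      have hh := Submodule.finrank_sup_add_finrank_inf_eq U (K ∙ x)
      rw [hbot, finrank_span_singleton hx0] at hh
      simp only [finrank_bot] at hh
      omega
    obtain ⟨W, hW1, hW2⟩ := exists_interm k (U ⊔ (K ∙ x)) d (by omega) h2
    exact ⟨W, le_trans le_sup_left hW1, hW2⟩

end Aux

set_option maxHeartbeats 2000000

/-- Sylvester–Gallai type property: given a nonempty set `L` of at most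
`n+1` projective lines of `F_qPⁿ` in general position (for `1 ≤ k ≤ n-1`, no `k+1` of
them lie in a common `k`-flat), there is a line `l ∈ L` and two points `p, p' ∈ l` such
that every other line of `L` meets `l` only inside `{p, p'}`. -/
theorem sylvester_gallai_type (q n : ℕ) (hn : 1 ≤ n) (K : Type) [Field K] [Fintype K]
    (hq : Fintype.card K = q)
    (L : Finset (Set (Projectivization K (Fin (n + 1) → K))))
    (hLne : L.Nonempty) (hLcard : L.card ≤ n + 1)
    (hlines : ∀ l ∈ L, IsFlat 1 l)
    (hgen : ∀ k, 1 ≤ k → k ≤ n - 1 → ∀ M ⊆ L, M.card = k + 1 →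
      ¬ ∃ F : Set (Projectivization K (Fin (n + 1) → K)),
        IsFlat k F ∧ ∀ l ∈ M, l ⊆ F) :
    ∃ l ∈ L, ∃ p p' : Projectivization K (Fin (n + 1) → K), p ∈ l ∧ p' ∈ l ∧
      ∀ l' ∈ L, l' ≠ l → l ∩ l' ⊆ {p, p'} := by
  classical
  by_contra hgoal
  -- Every line has at least 3 distinct "intersection points".
  have H3 : ∀ l ∈ L, ∃ p₁ p₂ p₃ : Projectivization K (Fin (n + 1) → K),
      p₁ ≠ p₂ ∧ p₁ ≠ p₃ ∧ p₂ ≠ p₃ ∧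
      (p₁ ∈ l ∧ ∃ l' ∈ L, l' ≠ l ∧ p₁ ∈ l') ∧
      (p₂ ∈ l ∧ ∃ l' ∈ L, l' ≠ l ∧ p₂ ∈ l') ∧
      (p₃ ∈ l ∧ ∃ l' ∈ L, l' ≠ l ∧ p₃ ∈ l') := by
    intro l hl
    by_contra h3
    apply hgoal
    refine ⟨l, hl, ?_⟩
    -- helper to conclude from two covering points
    have build : ∀ p p' : Projectivization K (Fin (n + 1) → K), p ∈ l → p' ∈ l →
        (∀ x : Projectivization K (Fin (n + 1) → K), x ∈ l → (∃ l' ∈ L, l' ≠ l ∧ x ∈ l') →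
          x = p ∨ x = p') →
        ∃ p p' : Projectivization K (Fin (n + 1) → K), p ∈ l ∧ p' ∈ l ∧
          ∀ l' ∈ L, l' ≠ l → l ∩ l' ⊆ {p, p'} := by
      intro p p' hp hp' hcov
      refine ⟨p, p', hp, hp', fun l' hl' hne x hx => ?_⟩
      rcases hcov x hx.1 ⟨l', hl', hne, hx.2⟩ with rfl | rfl
      · exact Set.mem_insert _ _
      · exact Set.mem_insert_iff.mpr (Or.inr rfl)
    by_cases h1 : ∃ p : Projectivization K (Fin (n + 1) → K), p ∈ l ∧ ∃ l' ∈ L, l' ≠ l ∧ p ∈ l'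
    · obtain ⟨p, hp, hpw⟩ := h1
      by_cases h2 : ∃ p' : Projectivization K (Fin (n + 1) → K),
          (p' ∈ l ∧ ∃ l' ∈ L, l' ≠ l ∧ p' ∈ l') ∧ p' ≠ p
      · obtain ⟨p', ⟨hp', hp'w⟩, hne⟩ := h2
        refine build p p' hp hp' fun x hx hxw => ?_
        by_contra hxor
        push_neg at hxor
        exact h3 ⟨p, p', x, hne.symm, (Ne.symm hxor.1), (Ne.symm hxor.2),
          ⟨hp, hpw⟩, ⟨hp', hp'w⟩, ⟨hx, hxw⟩⟩
      · refine build p p hp hp fun x hx hxw => ?_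
        by_contra hxor
        push_neg at hxor
        exact hxor.1 (by_contra fun hxp => absurd ⟨x, ⟨hx, hxw⟩,
          hxor.1⟩ h2)
    · obtain ⟨p0, hp0⟩ := line_nonempty (hlines l hl)
      refine build p0 p0 hp0 hp0 fun x hx hxw => absurd ⟨x, hx, hxw⟩ h1
  -- two distinct lines sharing two distinct points is impossible
  have key2 : ∀ l ∈ L, ∀ l' ∈ L, l ≠ l' → ∀ p p' : Projectivization K (Fin (n + 1) → K),
      p ≠ p' → p ∈ l → p' ∈ l → p ∈ l' → p' ∈ l' → False := by
    intro l hl l' hl' hll p p' hpp hp hp' hq1 hq2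
    have e1 := two_points_span (hlines l hl) hpp hp hp'
    have e2 := two_points_span (hlines l' hl') hpp hq1 hq2
    have hsp : lineSpan l = lineSpan l' := e1.trans e2.symm
    apply hll
    ext x
    rw [mem_line_iff (hlines l hl) x, mem_line_iff (hlines l' hl') x, hsp]
  -- cardinality ≥ 4
  have hm4 : 4 ≤ L.card := by
    obtain ⟨l₀, hl₀⟩ := hLne
    obtain ⟨p₁, p₂, p₃, h12, h13, h23, hI1, hI2, hI3⟩ := H3 l₀ hl₀
    obtain ⟨w₁, hw₁L, hw₁ne, hp₁⟩ := hI1.2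
    obtain ⟨w₂, hw₂L, hw₂ne, hp₂⟩ := hI2.2
    obtain ⟨w₃, hw₃L, hw₃ne, hp₃⟩ := hI3.2
    have w12 : w₁ ≠ w₂ := fun h =>
      key2 l₀ hl₀ w₁ hw₁L hw₁ne.symm p₁ p₂ h12 hI1.1 hI2.1 hp₁ (h ▸ hp₂)
    have w13 : w₁ ≠ w₃ := fun h =>
      key2 l₀ hl₀ w₁ hw₁L hw₁ne.symm p₁ p₃ h13 hI1.1 hI3.1 hp₁ (h ▸ hp₃)
    have w23 : w₂ ≠ w₃ := fun h =>
      key2 l₀ hl₀ w₂ hw₂L hw₂ne.symm p₂ p₃ h23 hI2.1 hI3.1 hp₂ (h ▸ hp₃)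
    have hsub : ({l₀, w₁, w₂, w₃} : Finset (Set (Projectivization K (Fin (n + 1) → K)))) ⊆ L := by
      intro x hx
      simp only [Finset.mem_insert, Finset.mem_singleton] at hx
      rcases hx with rfl | rfl | rfl | rfl <;> assumption
    have hc : ({l₀, w₁, w₂, w₃} : Finset (Set (Projectivization K (Fin (n + 1) → K)))).card = 4 := by
      rw [Finset.card_insert_of_notMem (by simp [hw₁ne.symm, hw₂ne.symm, hw₃ne.symm]),
        Finset.card_insert_of_notMem (by simp [w12, w13]),
        Finset.card_insert_of_notMem (by simp [w23]), Finset.card_singleton]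
    rw [← hc]
    exact Finset.card_le_card hsub
  have hn3 : 3 ≤ n := by omega
  have hV : Module.finrank K (Fin (n + 1) → K) = n + 1 := Module.finrank_fin_fun K
  -- upper bound on ranks of spans
  have supcard : ∀ M : Finset (Set (Projectivization K (Fin (n + 1) → K))), M ⊆ L →
      Module.finrank K ↥(M.sup lineSpan) ≤ 2 * M.card := by
    intro M
    induction M using Finset.induction_on with
    | empty => intro _; simp
    | insert a s ha ih =>
      intro hsub
      rw [Finset.sup_insert]
      have h1 := Submodule.finrank_add_le_finrank_add_finrank (lineSpan a) (s.sup lineSpan)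
      have h2 := ih (fun x hx => hsub (Finset.mem_insert_of_mem hx))
      have h3 : Module.finrank K ↥(lineSpan a) = 2 :=
        lineSpan_rank (hlines a (hsub (Finset.mem_insert_self a s)))
      rw [Finset.card_insert_of_notMem ha]
      omega
  -- lower bound : L.card ≤ finrank of total span
  have hFL : L.card ≤ Module.finrank K ↥(L.sup lineSpan) := by
    set j := min L.card n with hj
    have hj3 : 3 ≤ j := by omega
    have hjn : j ≤ n := min_le_right _ _
    obtain ⟨M, hML, hMcard⟩ := Finset.exists_subset_card_eq (min_le_left _ _ : j ≤ L.card)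
    have hMrank : j + 1 ≤ Module.finrank K ↥(M.sup lineSpan) := by
      by_contra hcon
      push_neg at hcon
      obtain ⟨W, hUW, hWrank⟩ := exists_interm (j - Module.finrank K ↥(M.sup lineSpan))
        (M.sup lineSpan) j (by omega) (by omega)
      refine hgen (j - 1) (by omega) (by omega) M hML (by omega)
        ⟨{x : Projectivization K (Fin (n + 1) → K) | x.submodule ≤ W}, ⟨W, by rw [hWrank]; omega, rfl⟩, ?_⟩
      intro l hlM x hx
      exact le_trans (le_trans ((mem_line_iff (hlines l (hML hlM)) x).mp hx)
        (Finset.le_sup hlM)) hUW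
    have hmono : Module.finrank K ↥(M.sup lineSpan) ≤ Module.finrank K ↥(L.sup lineSpan) :=
      Submodule.finrank_mono (Finset.sup_mono hML)
    omega
  -- minimal subset with the same span
  obtain ⟨T, hTmem, hTmin⟩ := Finset.exists_min_image
    (L.powerset.filter (fun T => T.sup lineSpan = L.sup lineSpan)) Finset.card
    ⟨L, by simp⟩
  rw [Finset.mem_filter, Finset.mem_powerset] at hTmem
  obtain ⟨hTL, hTsup⟩ := hTmem
  have key4 : ∀ l ∈ T, ¬ (lineSpan l ≤ (T.erase l).sup lineSpan) := by
    intro l hlT hle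
    have hsup2 : (T.erase l).sup lineSpan = L.sup lineSpan := by
      apply le_antisymm
      · exact le_trans (Finset.sup_mono (Finset.erase_subset l T)) (le_of_eq hTsup)
      · rw [← hTsup]
        conv_lhs => rw [← Finset.insert_erase hlT]
        rw [Finset.sup_insert]
        exact sup_le hle le_rfl
    have hmem2 : T.erase l ∈ L.powerset.filter (fun S => S.sup lineSpan = L.sup lineSpan) :=
      Finset.mem_filter.mpr ⟨Finset.mem_powerset.mpr
        (le_trans (Finset.erase_subset l T) hTL), hsup2⟩
    have h5 := hTmin _ hmem2
    have h6 := Finset.card_erase_of_mem hlT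
    have h7 : 0 < T.card := Finset.card_pos.mpr ⟨l, hlT⟩
    omega
  set R := L \ T with hRdef
  have hRL : R ⊆ L := Finset.sdiff_subset
  have hcardTR : T.card + R.card = L.card := by
    rw [hRdef]
    have h1 := Finset.card_sdiff_of_subset hTL
    have h2 := Finset.card_le_card hTL
    omega
  -- every line of T lies in the span of R
  have step5 : ∀ l ∈ T, lineSpan l ≤ R.sup lineSpan := by
    intro l hlT
    have hlL := hTL hlT
    obtain ⟨p₁, p₂, p₃, h12, h13, h23, hI1, hI2, hI3⟩ := H3 l hlL
    have hpick : ∀ pa pb : Projectivization K (Fin (n + 1) → K), pa ≠ pb →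
        (pa ∈ l ∧ ∃ l' ∈ L, l' ≠ l ∧ pa ∈ l') →
        (pb ∈ l ∧ ∃ l' ∈ L, l' ≠ l ∧ pb ∈ l') →
        (¬ ∃ t ∈ T.erase l, pa ∈ t) → (¬ ∃ t ∈ T.erase l, pb ∈ t) →
        lineSpan l ≤ R.sup lineSpan := by
      intro pa pb hab hIa hIb hTa hTb
      obtain ⟨la, hlaL, hlane, hpa⟩ := hIa.2
      obtain ⟨lb, hlbL, hlbne, hpb⟩ := hIb.2
      have hlaR : la ∈ R := by
        rw [hRdef, Finset.mem_sdiff]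
        exact ⟨hlaL, fun hT => hTa ⟨la, Finset.mem_erase.mpr ⟨hlane, hT⟩, hpa⟩⟩
      have hlbR : lb ∈ R := by
        rw [hRdef, Finset.mem_sdiff]
        exact ⟨hlbL, fun hT => hTb ⟨lb, Finset.mem_erase.mpr ⟨hlbne, hT⟩, hpb⟩⟩
      rw [two_points_span (hlines l hlL) hab hIa.1 hIb.1]
      exact sup_le
        (le_trans ((mem_line_iff (hlines la hlaL) pa).mp hpa) (Finset.le_sup hlaR))
        (le_trans ((mem_line_iff (hlines lb hlbL) pb).mp hpb) (Finset.le_sup hlbR))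
    have hdup : ∀ pa pb : Projectivization K (Fin (n + 1) → K), pa ≠ pb →
        (pa ∈ l ∧ ∃ l' ∈ L, l' ≠ l ∧ pa ∈ l') →
        (pb ∈ l ∧ ∃ l' ∈ L, l' ≠ l ∧ pb ∈ l') →
        (∃ t ∈ T.erase l, pa ∈ t) → (∃ t ∈ T.erase l, pb ∈ t) → False := by
      rintro pa pb hab hIa hIb ⟨ta, hta, hpa⟩ ⟨tb, htb, hpb⟩
      apply key4 l hlT
      rw [two_points_span (hlines l hlL) hab hIa.1 hIb.1]
      have htaL : ta ∈ L := hTL (Finset.mem_of_mem_erase hta)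
      have htbL : tb ∈ L := hTL (Finset.mem_of_mem_erase htb)
      exact sup_le
        (le_trans ((mem_line_iff (hlines ta htaL) pa).mp hpa) (Finset.le_sup hta))
        (le_trans ((mem_line_iff (hlines tb htbL) pb).mp hpb) (Finset.le_sup htb))
    by_cases c1 : ∃ t ∈ T.erase l, p₁ ∈ t
    · by_cases c2 : ∃ t ∈ T.erase l, p₂ ∈ t
      · exact (hdup p₁ p₂ h12 hI1 hI2 c1 c2).elim
      · by_cases c3 : ∃ t ∈ T.erase l, p₃ ∈ t
        · exact (hdup p₁ p₃ h13 hI1 hI3 c1 c3).elim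
        · exact hpick p₂ p₃ h23 hI2 hI3 c2 c3
    · by_cases c2 : ∃ t ∈ T.erase l, p₂ ∈ t
      · by_cases c3 : ∃ t ∈ T.erase l, p₃ ∈ t
        · exact (hdup p₂ p₃ h23 hI2 hI3 c2 c3).elim
        · exact hpick p₁ p₃ h13 hI1 hI3 c1 c3
      · exact hpick p₁ p₂ h12 hI1 hI2 c1 c2
  have step6 : L.sup lineSpan = R.sup lineSpan := by
    apply le_antisymm
    · have hLsplit : L = T ∪ R := by rw [hRdef, Finset.union_sdiff_of_subset hTL]
      rw [hLsplit, Finset.sup_union]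
      exact sup_le (Finset.sup_le step5) le_rfl
    · exact Finset.sup_mono hRL
  -- rank arithmetic
  have e1 : Module.finrank K ↥(T.sup lineSpan) ≤ 2 * T.card := supcard T hTL
  have e2 : Module.finrank K ↥(R.sup lineSpan) ≤ 2 * R.card := supcard R hRL
  have e4 : Module.finrank K ↥(L.sup lineSpan) = Module.finrank K ↥(T.sup lineSpan) := by
    rw [hTsup]
  have e5 : Module.finrank K ↥(L.sup lineSpan) = Module.finrank K ↥(R.sup lineSpan) := by
    rw [step6]
  have hTfull : Module.finrank K ↥(T.sup lineSpan) = 2 * T.card := by omega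
  have hRfull : Module.finrank K ↥(R.sup lineSpan) = 2 * R.card := by omega
  -- subsets of a full-rank family are full-rank
  have full : ∀ S : Finset (Set (Projectivization K (Fin (n + 1) → K))), S ⊆ L →
      Module.finrank K ↥(S.sup lineSpan) = 2 * S.card →
      ∀ M ⊆ S, Module.finrank K ↥(M.sup lineSpan) = 2 * M.card := by
    intro S hSL hS M hMS
    have h1 := supcard M (hMS.trans hSL)
    have h2 := supcard (S \ M) ((Finset.sdiff_subset).trans hSL)
    have h3 : S.sup lineSpan = M.sup lineSpan ⊔ (S \ M).sup lineSpan := by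
      rw [← Finset.sup_union, Finset.union_sdiff_of_subset hMS]
    have h4 : Module.finrank K ↥(S.sup lineSpan) ≤
        Module.finrank K ↥(M.sup lineSpan) + Module.finrank K ↥((S \ M).sup lineSpan) := by
      rw [h3]
      exact Submodule.finrank_add_le_finrank_add_finrank _ _
    have h5 := Finset.card_sdiff_of_subset hMS
    have h6 := Finset.card_le_card hMS
    omega
  -- two distinct lines of R have trivial intersection
  have pair_bot : ∀ la ∈ R, ∀ lb ∈ R, la ≠ lb → lineSpan la ⊓ lineSpan lb = ⊥ := by
    intro la hla lb hlb hab
    have hsub : ({la, lb} : Finset (Set (Projectivization K (Fin (n + 1) → K)))) ⊆ R := by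
      intro x hx
      simp only [Finset.mem_insert, Finset.mem_singleton] at hx
      rcases hx with rfl | rfl <;> assumption
    have hcard : ({la, lb} : Finset (Set (Projectivization K (Fin (n + 1) → K)))).card = 2 := by
      rw [Finset.card_insert_of_notMem (by simp [hab]), Finset.card_singleton]
    have h6 := full R hRL hRfull {la, lb} hsub
    rw [hcard, Finset.sup_insert, Finset.sup_singleton] at h6
    have h7 := Submodule.finrank_sup_add_finrank_inf_eq (lineSpan la) (lineSpan lb)
    rw [lineSpan_rank (hlines la (hRL hla)), lineSpan_rank (hlines lb (hRL hlb)), h6] at h7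
    have h8 : Module.finrank K ↥(lineSpan la ⊓ lineSpan lb) = 0 := by omega
    exact Submodule.finrank_eq_zero.mp h8
  -- three distinct lines of T are independent
  have triple_bot : ∀ t₁ ∈ T, ∀ t₂ ∈ T, ∀ t₃ ∈ T, t₁ ≠ t₂ → t₁ ≠ t₃ → t₂ ≠ t₃ →
      (lineSpan t₁ ⊔ lineSpan t₂) ⊓ lineSpan t₃ = ⊥ := by
    intro t₁ ht₁ t₂ ht₂ t₃ ht₃ ha hb hc
    have hsub : ({t₁, t₂, t₃} : Finset (Set (Projectivization K (Fin (n + 1) → K)))) ⊆ T := by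
      intro x hx
      simp only [Finset.mem_insert, Finset.mem_singleton] at hx
      rcases hx with rfl | rfl | rfl <;> assumption
    have hcard : ({t₁, t₂, t₃} : Finset (Set (Projectivization K (Fin (n + 1) → K)))).card = 3 := by
      rw [Finset.card_insert_of_notMem (by simp [ha, hb]),
        Finset.card_insert_of_notMem (by simp [hc]), Finset.card_singleton]
    have h6 := full T hTL hTfull {t₁, t₂, t₃} hsub
    rw [hcard, Finset.sup_insert, Finset.sup_insert, Finset.sup_singleton] at h6
    rw [← sup_assoc] at h6
    have hA := Submodule.finrank_add_le_finrank_add_finrank (lineSpan t₁) (lineSpan t₂)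
    rw [lineSpan_rank (hlines t₁ (hTL ht₁)), lineSpan_rank (hlines t₂ (hTL ht₂))] at hA
    have h7 := Submodule.finrank_sup_add_finrank_inf_eq
      (lineSpan t₁ ⊔ lineSpan t₂) (lineSpan t₃)
    rw [lineSpan_rank (hlines t₃ (hTL ht₃)), h6] at h7
    have h8 : Module.finrank K ↥((lineSpan t₁ ⊔ lineSpan t₂) ⊓ lineSpan t₃) = 0 := by omega
    exact Submodule.finrank_eq_zero.mp h8
  -- endgame
  have hRne : R.Nonempty := Finset.card_pos.mp (by omega)
  obtain ⟨l', hl'R⟩ := hRne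
  have hl'L : l' ∈ L := hRL hl'R
  obtain ⟨p₁, p₂, p₃, h12, h13, h23, hI1, hI2, hI3⟩ := H3 l' hl'L
  have hw : ∀ p : Projectivization K (Fin (n + 1) → K),
      (p ∈ l' ∧ ∃ w ∈ L, w ≠ l' ∧ p ∈ w) → ∃ w ∈ T, w ≠ l' ∧ p ∈ w := by
    rintro p ⟨hpl, w, hwL, hwne, hpw⟩
    by_cases hwT : w ∈ T
    · exact ⟨w, hwT, hwne, hpw⟩
    · exfalso
      have hwR : w ∈ R := by rw [hRdef, Finset.mem_sdiff]; exact ⟨hwL, hwT⟩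
      have h0 := pair_bot l' hl'R w hwR (Ne.symm hwne)
      have h1 : p.submodule ≤ ⊥ := by
        rw [← h0]
        exact le_inf ((mem_line_iff (hlines l' hl'L) p).mp hpl)
          ((mem_line_iff (hlines w hwL) p).mp hpw)
      have h2 : p.submodule = ⊥ := le_bot_iff.mp h1
      have h3 := p.finrank_submodule
      rw [h2] at h3
      simp at h3
  obtain ⟨w₁, hw₁T, hw₁ne, hp₁⟩ := hw p₁ hI1
  obtain ⟨w₂, hw₂T, hw₂ne, hp₂⟩ := hw p₂ hI2
  obtain ⟨w₃, hw₃T, hw₃ne, hp₃⟩ := hw p₃ hI3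
  have w12 : w₁ ≠ w₂ := fun h =>
    key2 l' hl'L w₁ (hTL hw₁T) hw₁ne.symm p₁ p₂ h12 hI1.1 hI2.1 hp₁ (h ▸ hp₂)
  have w13 : w₁ ≠ w₃ := fun h =>
    key2 l' hl'L w₁ (hTL hw₁T) hw₁ne.symm p₁ p₃ h13 hI1.1 hI3.1 hp₁ (h ▸ hp₃)
  have w23 : w₂ ≠ w₃ := fun h =>
    key2 l' hl'L w₂ (hTL hw₂T) hw₂ne.symm p₂ p₃ h23 hI2.1 hI3.1 hp₂ (h ▸ hp₃)
  have hspan : lineSpan l' = p₁.submodule ⊔ p₂.submodule :=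
    two_points_span (hlines l' hl'L) h12 hI1.1 hI2.1
  have h1 : lineSpan l' ≤ lineSpan w₁ ⊔ lineSpan w₂ := by
    rw [hspan]
    exact sup_le
      (le_trans ((mem_line_iff (hlines w₁ (hTL hw₁T)) p₁).mp hp₁) le_sup_left)
      (le_trans ((mem_line_iff (hlines w₂ (hTL hw₂T)) p₂).mp hp₂) le_sup_right)
  have h2 : p₃.submodule ≤ (lineSpan w₁ ⊔ lineSpan w₂) ⊓ lineSpan w₃ :=
    le_inf (le_trans ((mem_line_iff (hlines l' hl'L) p₃).mp hI3.1) h1)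
      ((mem_line_iff (hlines w₃ (hTL hw₃T)) p₃).mp hp₃)
  rw [triple_bot w₁ hw₁T w₂ hw₂T w₃ hw₃T w12 w13 w23] at h2
  have h3 : p₃.submodule = ⊥ := le_bot_iff.mp h2
  have h4 := p₃.finrank_submodule
  rw [h3] at h4
  simp at h4
end

section
/- Let q be a prime power and n ≥ 1. The number of dependent n-tuples in (F_qP^n)^n is at most |F_qP^n|^n / (q(q−1)). -/
open scoped LinearAlgebra.Projectivization

lemma aux_exists_mem_span_prefix {K V : Type*} [Field K] [AddCommGroup V] [Module K V] :
    ∀ {n : ℕ} (v : Fin n → V), ¬ LinearIndependent K v →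
      ∃ i : Fin n, v i ∈ Submodule.span K
        (Set.range (fun j : Fin i.val => v (Fin.castLE i.isLt.le j))) := by
  intro n
  induction n with
  | zero => intro v h; exact absurd linearIndependent_empty_type h
  | succ m ih =>
    intro v h
    rw [linearIndependent_fin_succ'] at h
    push_neg at h
    by_cases h1 : LinearIndependent K (Fin.init v)
    · exact ⟨Fin.last m, by convert h h1 using 2; rfl⟩
    · obtain ⟨i, hi⟩ := ih (Fin.init v) h1
      exact ⟨i.castSucc, by convert hi using 2 <;> rfl⟩

lemma aux_card_span_le {K V : Type*} [Field K] [Fintype K] [AddCommGroup V] [Module K V]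
    (m : ℕ) (w : Fin m → V) :
    Nat.card (Submodule.span K (Set.range w)) ≤ Fintype.card K ^ m := by
  have hsur : Function.Surjective
      (fun c : Fin m → K => (⟨∑ i, c i • w i, Submodule.sum_smul_mem _ _
        (fun i _ => Submodule.subset_span (Set.mem_range_self i))⟩ :
        Submodule.span K (Set.range w))) := by
    rintro ⟨x, hx⟩
    obtain ⟨c, hc⟩ := (Submodule.mem_span_range_iff_exists_fun K).mp hx
    exact ⟨c, Subtype.ext hc⟩
  calc Nat.card (Submodule.span K (Set.range w))
      ≤ Nat.card (Fin m → K) := Nat.card_le_card_of_surjective _ hsur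
    _ = Fintype.card K ^ m := by simp [Nat.card_fun, Nat.card_eq_fintype_card]

lemma aux_mk_unit_smul {K V : Type*} [DivisionRing K] [AddCommGroup V] [Module K V]
    (u : Kˣ) (p : ℙ K V) :
    Projectivization.mk K ((u : K) • p.rep) (smul_ne_zero u.ne_zero p.rep_nonzero) = p := by
  conv_rhs => rw [← p.mk_rep]
  exact (Projectivization.mk_eq_mk_iff K _ _ _ p.rep_nonzero).2 ⟨u, rfl⟩

lemma aux_card_proj {K V : Type*} [Field K] [AddCommGroup V] [Module K V] [Finite V] :
    Nat.card (ℙ K V) * (Nat.card K - 1) = Nat.card {x : V // x ≠ 0} := by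
  have hbij : Function.Bijective
      (fun p : ℙ K V × Kˣ => (⟨(p.2 : K) • p.1.rep,
        smul_ne_zero p.2.ne_zero p.1.rep_nonzero⟩ : {x : V // x ≠ 0})) := by
    constructor
    · rintro ⟨p, u⟩ ⟨p', u'⟩ h
      simp only [Subtype.mk.injEq] at h
      have hp : p = p' := by
        rw [← aux_mk_unit_smul u p, ← aux_mk_unit_smul u' p']
        exact (Projectivization.mk_eq_mk_iff K _ _ _ _).2 ⟨1, by rw [h, one_smul]⟩
      subst hp
      have hu : u = u' := Units.ext (smul_left_injective K p.rep_nonzero h)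
      rw [hu]
    · rintro ⟨x, hx⟩
      obtain ⟨a, ha⟩ := Projectivization.exists_smul_eq_mk_rep K x hx
      refine ⟨⟨Projectivization.mk K x hx, a⁻¹⟩, Subtype.ext ?_⟩
      simp only [← ha, Units.smul_def, smul_smul]
      simp
  have := Nat.card_congr (Equiv.ofBijective _ hbij)
  rw [Nat.card_prod, Nat.card_units] at this
  exact this

lemma aux_li_units_smul {K V : Type*} [Field K] [AddCommGroup V] [Module K V]
    {n : ℕ} (w : Fin n → V) (u : Fin n → Kˣ) :
    LinearIndependent K (fun i => (u i : K) • w i) ↔ LinearIndependent K w := by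
  constructor
  · intro h
    have h2 := h.units_smul fun i => (u i)⁻¹
    convert h2 using 1
    funext i
    simp [Units.smul_def, smul_smul]
  · intro h
    have h2 := h.units_smul u
    convert h2 using 1
    funext i; rfl

lemma aux_card_dep {K V : Type*} [Field K] [AddCommGroup V] [Module K V] [Finite V] (n : ℕ) :
    Nat.card {t : Fin n → ℙ K V | Projectivization.Dependent t} * (Nat.card K - 1) ^ n =
      Nat.card {v : Fin n → {x : V // x ≠ 0} // ¬ LinearIndependent K fun i => ((v i : V))} := by
  have hbij : Function.Bijective
      (fun p : ↥{t : Fin n → ℙ K V | Projectivization.Dependent t} × (Fin n → Kˣ) =>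
        (⟨fun i => ⟨(p.2 i : K) • (p.1.1 i).rep,
            smul_ne_zero (p.2 i).ne_zero (p.1.1 i).rep_nonzero⟩,
          fun hLI => Projectivization.dependent_iff.1 p.1.2
            ((aux_li_units_smul _ p.2).1 hLI)⟩ :
          {v : Fin n → {x : V // x ≠ 0} // ¬ LinearIndependent K fun i => ((v i : V))})) := by
    constructor
    · rintro ⟨⟨t, ht⟩, u⟩ ⟨⟨t', ht'⟩, u'⟩ h
      simp only [Subtype.mk.injEq, funext_iff] at h
      have hv : ∀ i, (u i : K) • (t i).rep = (u' i : K) • (t' i).rep := h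
      have hpt : ∀ i, t i = t' i := by
        intro i
        rw [← aux_mk_unit_smul (u i) (t i), ← aux_mk_unit_smul (u' i) (t' i)]
        exact (Projectivization.mk_eq_mk_iff K _ _ _ _).2 ⟨1, by rw [hv i, one_smul]⟩
      have hu : ∀ i, u i = u' i := by
        intro i
        refine Units.ext (smul_left_injective K (t' i).rep_nonzero ?_)
        have := hv i; rw [hpt i] at this; exact this
      exact Prod.ext (Subtype.ext (funext hpt)) (funext hu)
    · rintro ⟨v, hv⟩
      have := fun i => Projectivization.exists_smul_eq_mk_rep K (v i : V) (v i).2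
      choose a ha using this
      set t : Fin n → ℙ K V := fun i => Projectivization.mk K (v i : V) (v i).2 with htdef
      have hrep : (Projectivization.rep ∘ t) = fun i => (a i : K) • (v i : V) := by
        funext i
        rw [Function.comp_apply, ← ha i, Units.smul_def]
      have ht : t ∈ {t : Fin n → ℙ K V | Projectivization.Dependent t} := by
        rw [Set.mem_setOf_eq, Projectivization.dependent_iff, hrep]
        exact fun hLI => hv ((aux_li_units_smul _ a).1 hLI)
      refine ⟨⟨⟨t, ht⟩, fun i => (a i)⁻¹⟩, Subtype.ext (funext fun i => Subtype.ext ?_)⟩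
      show ((a i)⁻¹ : Kˣ) • (t i).rep = (v i : V)
      rw [← ha i]
      simp
  have := Nat.card_congr (Equiv.ofBijective _ hbij)
  rw [Nat.card_prod, Nat.card_fun, Nat.card_units] at this
  simpa [Nat.card_eq_fintype_card] using this

lemma aux_card_dep_vec_le {K V : Type*} [Field K] [Fintype K] [AddCommGroup V] [Module K V]
    [Finite V] (n : ℕ) :
    Nat.card {v : Fin n → {x : V // x ≠ 0} // ¬ LinearIndependent K fun i => ((v i : V))}
      ≤ ∑ i : Fin n, Nat.card {x : V // x ≠ 0} ^ (n - 1) * Fintype.card K ^ (i : ℕ) := by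
  classical
  set β : Fin n → Type _ :=
    fun i => ({j : Fin n // j ≠ i} → {x : V // x ≠ 0}) × (Fin (i : ℕ) → K) with hβ
  set D' := {v : Fin n → {x : V // x ≠ 0} // ¬ LinearIndependent K fun i => ((v i : V))} with hD'
  -- the index chosen for a dependent tuple
  have exwit : ∀ v : D', ∃ i : Fin n, ∃ c : Fin (i : ℕ) → K,
      ∑ j, c j • ((v.1 (Fin.castLE i.isLt.le j) : V)) = (v.1 i : V) := by
    intro v
    obtain ⟨i, hi⟩ := aux_exists_mem_span_prefix (fun i => ((v.1 i : V))) v.2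
    exact ⟨i, (Submodule.mem_span_range_iff_exists_fun K).1 hi⟩
  choose I c hc using exwit
  set Φ : D' → Σ i : Fin n, β i :=
    fun v => ⟨I v, fun j => v.1 j.1, c v⟩ with hΦ
  set G : (Σ i : Fin n, β i) → (Fin n → V) := fun p => fun j =>
    if h : j = p.1 then
      ∑ k : Fin ((p.1 : Fin n) : ℕ), p.2.2 k • ((p.2.1 ⟨Fin.castLE p.1.isLt.le k,
        by simp [Fin.ext_iff]; omega⟩ : {x : V // x ≠ 0}) : V)
    else ((p.2.1 ⟨j, h⟩ : {x : V // x ≠ 0}) : V) with hG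
  have hGΦ : ∀ v : D', G (Φ v) = fun j => (v.1 j : V) := by
    intro v
    funext j
    by_cases h : j = I v
    · subst h
      simp only [hG, hΦ, dif_pos]
      exact hc v
    · simp only [hG, hΦ, dif_neg h]
  have hinj : Function.Injective Φ := by
    intro v w h
    have h2 : (fun j => (v.1 j : V)) = fun j => (w.1 j : V) := by
      rw [← hGΦ v, ← hGΦ w, h]
    exact Subtype.ext (funext fun j => Subtype.ext (congrFun h2 j))
  letI : ∀ i, Fintype (β i) := fun i => Fintype.ofFinite _
  calc Nat.card D' ≤ Nat.card (Σ i : Fin n, β i) := Nat.card_le_card_of_injective Φ hinj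
    _ = ∑ i : Fin n, Nat.card (β i) := by
        rw [Nat.card_eq_fintype_card, Fintype.card_sigma]
        simp [Nat.card_eq_fintype_card]
    _ ≤ ∑ i : Fin n, Nat.card {x : V // x ≠ 0} ^ (n - 1) * Fintype.card K ^ (i : ℕ) := by
        refine Finset.sum_le_sum fun i _ => ?_
        have h1 : Nat.card (β i) =
            Nat.card {x : V // x ≠ 0} ^ Nat.card {j : Fin n // j ≠ i} *
              Fintype.card K ^ (i : ℕ) := by
          rw [hβ]
          rw [Nat.card_prod, Nat.card_fun, Nat.card_fun]
          simp [Nat.card_eq_fintype_card]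
        rw [h1]
        have h2 : Nat.card {j : Fin n // j ≠ i} = n - 1 := by
          rw [Nat.card_eq_fintype_card]
          have h3 : Fintype.card {j : Fin n // ¬ (j = i)} =
              Fintype.card (Fin n) - Fintype.card {j : Fin n // j = i} :=
            Fintype.card_subtype_compl _
          simp only [Fintype.card_subtype_eq, Fintype.card_fin] at h3
          exact h3
        rw [h2]

/-- the number of dependent `n`-tuples in `(F_qPⁿ)ⁿ` is at most
`|F_qPⁿ|ⁿ / (q(q-1))`. -/
theorem dependent_tuples_upper_bound (q n : ℕ) (hn : 1 ≤ n)
    (K : Type) [Field K] [Fintype K] (hq : Fintype.card K = q) :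
    (Set.ncard {t : Fin n → Projectivization K (Fin (n + 1) → K) |
        Projectivization.Dependent t} : ℝ) ≤
      (Nat.card (Projectivization K (Fin (n + 1) → K)) : ℝ) ^ n /
        ((q : ℝ) * ((q : ℝ) - 1)) := by
  classical
  obtain ⟨m, rfl⟩ : ∃ m, n = m + 1 := ⟨n - 1, by omega⟩
  have hq2 : 2 ≤ q := by rw [← hq]; exact Fintype.one_lt_card
  have hq1 : 1 ≤ q := by omega
  have hqK : Nat.card K = q := by rw [Nat.card_eq_fintype_card, hq]
  have hA := aux_card_dep (K := K) (V := Fin (m + 1 + 1) → K) (m + 1)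
  have hB := aux_card_proj (K := K) (V := Fin (m + 1 + 1) → K)
  have hC := aux_card_dep_vec_le (K := K) (V := Fin (m + 1 + 1) → K) (m + 1)
  rw [hqK] at hA hB
  rw [hq] at hC
  simp only [Nat.add_sub_cancel] at hC
  set Dn := Nat.card ↥{t : Fin (m + 1) → ℙ K (Fin (m + 1 + 1) → K) |
    Projectivization.Dependent t} with hDn
  set Mn := Nat.card {x : Fin (m + 1 + 1) → K // x ≠ 0} with hMn
  set Nn := Nat.card (ℙ K (Fin (m + 1 + 1) → K)) with hNn
  have hM : Mn = q ^ (m + 1 + 1) - 1 := by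
    rw [hMn, Nat.card_eq_fintype_card]
    have h3 : Fintype.card {x : Fin (m + 1 + 1) → K // ¬ (x = 0)} =
        Fintype.card (Fin (m + 1 + 1) → K) -
          Fintype.card {x : Fin (m + 1 + 1) → K // x = 0} :=
      Fintype.card_subtype_compl _
    rw [Fintype.card_subtype_eq, Fintype.card_fun, hq] at h3
    convert h3 using 2
    simp
  have hNat : Dn * (q - 1) ^ (m + 1) ≤ ∑ i : Fin (m + 1), Mn ^ m * q ^ (i : ℕ) := hA ▸ hC
  -- pass to the reals
  have hQ2 : (2 : ℝ) ≤ (q : ℝ) := by exact_mod_cast hq2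
  have hQ1 : (0 : ℝ) < (q : ℝ) - 1 := by linarith
  have hS0 : (0 : ℝ) ≤ ∑ i ∈ Finset.range (m + 1), (q : ℝ) ^ i :=
    Finset.sum_nonneg fun i _ => by positivity
  have F1 : (Dn : ℝ) * ((q : ℝ) - 1) ^ (m + 1) ≤
      (Mn : ℝ) ^ m * ∑ i ∈ Finset.range (m + 1), (q : ℝ) ^ i := by
    have h1 := (Nat.cast_le (α := ℝ)).2 hNat
    rw [Nat.cast_mul, Nat.cast_pow, Nat.cast_sub hq1, Nat.cast_one, Nat.cast_sum] at h1
    refine h1.trans_eq ?_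
    push_cast
    rw [← Finset.mul_sum, Fin.sum_univ_eq_sum_range (fun i => (q : ℝ) ^ i) (m + 1)]
  have F4 : (Nn : ℝ) * ((q : ℝ) - 1) = (Mn : ℝ) := by
    have h1 := congrArg (Nat.cast : ℕ → ℝ) hB
    rw [Nat.cast_mul, Nat.cast_sub hq1, Nat.cast_one] at h1
    exact h1
  have hMR : (Mn : ℝ) = (q : ℝ) ^ (m + 1 + 1) - 1 := by
    have hle : 1 ≤ q ^ (m + 1 + 1) := Nat.one_le_pow _ q hq1
    have h1 := congrArg (Nat.cast : ℕ → ℝ) hM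
    rw [Nat.cast_sub hle, Nat.cast_pow, Nat.cast_one] at h1
    exact h1
  have F3 : (∑ i ∈ Finset.range (m + 1), (q : ℝ) ^ i) * ((q : ℝ) - 1) =
      (q : ℝ) ^ (m + 1) - 1 := geom_sum_mul _ _
  have hQS : (q : ℝ) * ∑ i ∈ Finset.range (m + 1), (q : ℝ) ^ i = (Nn : ℝ) - 1 := by
    have key : ((q : ℝ) - 1) * ((q : ℝ) * ∑ i ∈ Finset.range (m + 1), (q : ℝ) ^ i) =
        ((q : ℝ) - 1) * ((Nn : ℝ) - 1) := by
      linear_combination (q : ℝ) * F3 - F4 - hMR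
    exact mul_left_cancel₀ (ne_of_gt hQ1) key
  have E1 : (Dn : ℝ) * ((q : ℝ) - 1) ≤
      (Nn : ℝ) ^ m * ∑ i ∈ Finset.range (m + 1), (q : ℝ) ^ i := by
    have e1 : (Dn : ℝ) * ((q : ℝ) - 1) * ((q : ℝ) - 1) ^ m ≤
        ((Nn : ℝ) ^ m * ∑ i ∈ Finset.range (m + 1), (q : ℝ) ^ i) * ((q : ℝ) - 1) ^ m := by
      calc (Dn : ℝ) * ((q : ℝ) - 1) * ((q : ℝ) - 1) ^ m
          = (Dn : ℝ) * ((q : ℝ) - 1) ^ (m + 1) := by ring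
        _ ≤ (Mn : ℝ) ^ m * ∑ i ∈ Finset.range (m + 1), (q : ℝ) ^ i := F1
        _ = ((Nn : ℝ) ^ m * ∑ i ∈ Finset.range (m + 1), (q : ℝ) ^ i) *
            ((q : ℝ) - 1) ^ m := by rw [← F4, mul_pow]; ring
    exact le_of_mul_le_mul_right e1 (pow_pos hQ1 m)
  rw [le_div_iff₀ (by nlinarith : (0 : ℝ) < (q : ℝ) * ((q : ℝ) - 1)),
    ← Nat.card_coe_set_eq]
  calc (Dn : ℝ) * ((q : ℝ) * ((q : ℝ) - 1))
      = ((Dn : ℝ) * ((q : ℝ) - 1)) * (q : ℝ) := by ring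
    _ ≤ ((Nn : ℝ) ^ m * ∑ i ∈ Finset.range (m + 1), (q : ℝ) ^ i) * (q : ℝ) :=
        mul_le_mul_of_nonneg_right E1 (by linarith)
    _ = (Nn : ℝ) ^ m * ((q : ℝ) * ∑ i ∈ Finset.range (m + 1), (q : ℝ) ^ i) := by ring
    _ ≤ (Nn : ℝ) ^ m * (Nn : ℝ) := by
        refine mul_le_mul_of_nonneg_left ?_ (by positivity)
        rw [hQS]
        have : (0 : ℝ) ≤ (Nn : ℝ) := Nat.cast_nonneg _
        linarith
    _ = (Nn : ℝ) ^ (m + 1) := by ring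
end

section
/- Let q be a prime power and 1 ≤ k ≤ n. Suppose {A^i_1 × ⋯ × A^i_k}_{i=1}^N is a partition of (F_qP^n)^k into product sets such that for every i there is a (k−1)-flat L^i ⊆ F_qP^n with A^i_1 × ⋯ × A^i_k ⊆ (L^i)^k. Then N ≥ ((q^{n+1} − 1)/(q^k − 1))^k. -/
open Projectivization


/-- Orbit counting bijection for projectivization. -/
lemma proj_card (K V : Type*) [Field K] [Fintype K] [AddCommGroup V] [Module K V]
    [Fintype V] :
    Nat.card (Projectivization K V) * (Fintype.card K - 1) = Fintype.card V - 1 := by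
  classical
  have hbij : Function.Bijective
      (fun p : Projectivization K V × Kˣ =>
        (⟨(p.2 : K) • p.1.rep, smul_ne_zero p.2.ne_zero p.1.rep_nonzero⟩ :
          {v : V // v ≠ 0})) := by
    constructor
    · rintro ⟨x, a⟩ ⟨y, b⟩ h
      have h' : (a : K) • x.rep = (b : K) • y.rep := congrArg Subtype.val h
      have hxy : x = y := by
        have h1 : Projectivization.mk K ((a : K) • x.rep)
            (smul_ne_zero a.ne_zero x.rep_nonzero) = x := by
          conv_rhs => rw [← x.mk_rep]
          rw [mk_eq_mk_iff]
          exact ⟨a, rfl⟩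
        have h2 : Projectivization.mk K ((b : K) • y.rep)
            (smul_ne_zero b.ne_zero y.rep_nonzero) = y := by
          conv_rhs => rw [← y.mk_rep]
          rw [mk_eq_mk_iff]
          exact ⟨b, rfl⟩
        rw [← h1, ← h2]
        congr 1
      subst hxy
      have hab : (a : K) = b := smul_left_injective K x.rep_nonzero h'
      exact Prod.ext rfl (Units.ext hab)
    · rintro ⟨v, hv⟩
      obtain ⟨a, ha⟩ := exists_smul_eq_mk_rep K v hv
      refine ⟨⟨Projectivization.mk K v hv, a⁻¹⟩, Subtype.ext ?_⟩
      show ((a⁻¹ : Kˣ) : K) • (Projectivization.mk K v hv).rep = v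
      rw [← ha, Units.smul_def, smul_smul, Units.inv_mul, one_smul]
  have hcard := Nat.card_eq_of_bijective _ hbij
  rw [Nat.card_prod] at hcard
  have h1 : Nat.card Kˣ = Fintype.card K - 1 := by
    rw [Nat.card_eq_fintype_card, Fintype.card_units]
  have h2 : Nat.card {v : V // v ≠ 0} = Fintype.card V - 1 := by
    rw [Nat.card_eq_fintype_card, Fintype.card_subtype_compl,
      Fintype.card_subtype_eq]
  rw [h1] at hcard
  rw [← h2, ← hcard]

/-- The set of points of a flat is in bijection with the projectivization of `W`. -/
lemma flat_card (K V : Type*) [Field K] [AddCommGroup V] [Module K V]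
    (W : Submodule K V) :
    Nat.card {x : Projectivization K V | x.submodule ≤ W} =
      Nat.card (Projectivization K W) := by
  classical
  set f : Projectivization K W → Projectivization K V :=
    Projectivization.map (W.subtype) W.injective_subtype with hf
  have hinj : Function.Injective f := Projectivization.map_injective _ _
  have hrange : Set.range f = {x : Projectivization K V | x.submodule ≤ W} := by
    ext x
    constructor
    · rintro ⟨y, rfl⟩
      induction y using Projectivization.ind with
      | h w hw =>
        rw [hf, Projectivization.map_mk]
        simp only [Set.mem_setOf_eq, submodule_mk]
        exact (Submodule.span_singleton_le_iff_mem _ _).2 w.2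
    · intro hx
      induction x using Projectivization.ind with
      | h v hv =>
        have hvW : v ∈ W := by
          have := hx
          rw [Set.mem_setOf_eq, submodule_mk] at this
          exact (Submodule.span_singleton_le_iff_mem _ _).1 this
        have hne : (⟨v, hvW⟩ : W) ≠ 0 := by
          intro h
          exact hv (congrArg Subtype.val h)
        exact ⟨Projectivization.mk K (⟨v, hvW⟩ : W) hne, rfl⟩
  rw [← hrange, Nat.card_range_of_injective hinj]

/-- volume lower bound: any partition of `(F_qPⁿ)ᵏ` (for `1 ≤ k ≤ n`)
into product sets, each contained in the `k`-th power of a `(k-1)`-flat, has at least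
`((q^{n+1} - 1)/(q^k - 1))^k` parts. -/
theorem dpp_volume_lower_bound (q n k N : ℕ) (hk : 1 ≤ k) (hkn : k ≤ n)
    (K : Type) [Field K] [Fintype K] (hq : Fintype.card K = q)
    (A : Fin N → Fin k → Set (Projectivization K (Fin (n + 1) → K)))
    (hne : ∀ i, (Set.univ.pi (A i)).Nonempty)
    (hdisj : ∀ i j, i ≠ j → Disjoint (Set.univ.pi (A i)) (Set.univ.pi (A j)))
    (hcover : (⋃ i, Set.univ.pi (A i)) = Set.univ)
    (hflat : ∀ i, ∃ L : Set (Projectivization K (Fin (n + 1) → K)),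
      IsFlat (k - 1) L ∧ ∀ j, A i j ⊆ L) :
    (((q : ℝ) ^ (n + 1) - 1) / ((q : ℝ) ^ k - 1)) ^ k ≤ (N : ℝ) := by
  classical
  let V := (Fin (n + 1) → K)
  let PP := Projectivization K V
  have : Finite PP := Quotient.finite _
  have : Fintype PP := Fintype.ofFinite PP
  have hq2 : 2 ≤ q := by
    rw [← hq]; exact Fintype.one_lt_card
  -- card of the full projective space
  have hcardV : Fintype.card V = q ^ (n + 1) := by
    rw [Fintype.card_fun, hq, Fintype.card_fin]
  have hP : Nat.card PP * (q - 1) = q ^ (n + 1) - 1 := by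
    have := proj_card K V
    rwa [hq, hcardV] at this
  -- per-part bound
  have hpart : ∀ i, Nat.card (Set.univ.pi (A i)) * (q - 1) ^ k ≤ (q ^ k - 1) ^ k := by
    intro i
    obtain ⟨L, ⟨W, hW, hWL⟩, hAL⟩ := hflat i
    have : Fintype W := Fintype.ofFinite W
    have hcardW : Fintype.card W = q ^ k := by
      rw [Module.card_eq_pow_finrank (K := K) (V := W), hq, hW, Nat.sub_add_cancel hk]
    have hF : Nat.card L * (q - 1) = q ^ k - 1 := by
      have h1 : Nat.card L = Nat.card (Projectivization K W) := by
        rw [hWL]; exact flat_card K V W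
      have h2 := proj_card K W
      rw [hq, hcardW] at h2
      rw [h1, h2]
    have hsub : Set.univ.pi (A i) ⊆ Set.univ.pi (fun _ : Fin k => L) :=
      Set.pi_mono fun j _ => hAL j
    have hcardpi : Nat.card (Set.univ.pi fun _ : Fin k => L) = (Nat.card L) ^ k := by
      rw [Nat.card_congr (Equiv.Set.univPi fun _ : Fin k => L), Nat.card_pi]
      simp
    have hle : Nat.card (Set.univ.pi (A i)) ≤ (Nat.card L) ^ k := by
      rw [← hcardpi, Nat.card_coe_set_eq, Nat.card_coe_set_eq]
      exact Set.ncard_le_ncard hsub (Set.toFinite _)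
    calc Nat.card (Set.univ.pi (A i)) * (q - 1) ^ k
        ≤ (Nat.card L) ^ k * (q - 1) ^ k := Nat.mul_le_mul_right _ hle
      _ = (Nat.card L * (q - 1)) ^ k := (mul_pow _ _ _).symm
      _ = (q ^ k - 1) ^ k := by rw [hF]
  -- cover bound
  have hcov : Nat.card (Fin k → PP) ≤ ∑ i, Nat.card (Set.univ.pi (A i)) := by
    have hsub : (Finset.univ : Finset (Fin k → PP)) ⊆
        Finset.univ.biUnion fun i => (Set.univ.pi (A i)).toFinset := by
      intro x _
      have hx : x ∈ ⋃ i, Set.univ.pi (A i) := hcover ▸ Set.mem_univ x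
      obtain ⟨i, hi⟩ := Set.mem_iUnion.1 hx
      exact Finset.mem_biUnion.2 ⟨i, Finset.mem_univ i, Set.mem_toFinset.2 hi⟩
    calc Nat.card (Fin k → PP) = (Finset.univ : Finset (Fin k → PP)).card := by
          rw [Nat.card_eq_fintype_card, Finset.card_univ]
      _ ≤ (Finset.univ.biUnion fun i => (Set.univ.pi (A i)).toFinset).card :=
          Finset.card_le_card hsub
      _ ≤ ∑ i, ((Set.univ.pi (A i)).toFinset).card := Finset.card_biUnion_le
      _ = ∑ i, Nat.card (Set.univ.pi (A i)) := by
          refine Finset.sum_congr rfl fun i _ => ?_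
          rw [Set.toFinset_card, Nat.card_eq_fintype_card]
  -- key natural-number inequality
  have hkey : (q ^ (n + 1) - 1) ^ k ≤ N * (q ^ k - 1) ^ k := by
    calc (q ^ (n + 1) - 1) ^ k = (Nat.card PP * (q - 1)) ^ k := by rw [hP]
      _ = Nat.card PP ^ k * (q - 1) ^ k := mul_pow _ _ _
      _ = Nat.card (Fin k → PP) * (q - 1) ^ k := by
          rw [Nat.card_pi]; simp
      _ ≤ (∑ i, Nat.card (Set.univ.pi (A i))) * (q - 1) ^ k :=
          Nat.mul_le_mul_right _ hcov
      _ = ∑ i, Nat.card (Set.univ.pi (A i)) * (q - 1) ^ k := Finset.sum_mul ..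
      _ ≤ ∑ _i : Fin N, (q ^ k - 1) ^ k := Finset.sum_le_sum fun i _ => hpart i
      _ = N * (q ^ k - 1) ^ k := by simp [mul_comm]
  -- pass to the reals
  have hq1 : (1 : ℝ) < (q : ℝ) := by exact_mod_cast hq2
  have hbpos : (0 : ℝ) < (q : ℝ) ^ k - 1 := by
    have : (1 : ℝ) < (q : ℝ) ^ k := one_lt_pow₀ hq1 (by omega)
    linarith
  rw [div_pow, div_le_iff₀ (pow_pos hbpos k)]
  have h1 : ((q : ℝ) ^ (n + 1) - 1) = ((q ^ (n + 1) - 1 : ℕ) : ℝ) := by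
    have : 1 ≤ q ^ (n + 1) := Nat.one_le_pow _ _ (by omega)
    push_cast [Nat.cast_sub this]
    ring
  have h2 : ((q : ℝ) ^ k - 1) = ((q ^ k - 1 : ℕ) : ℝ) := by
    have : 1 ≤ q ^ k := Nat.one_le_pow _ _ (by omega)
    push_cast [Nat.cast_sub this]
    ring
  rw [h1, h2]
  exact_mod_cast hkey
end

section
/- Let X_1, …, X_n be sets and let A, B^1, …, B^h be product subsets of X_1 × ⋯ × X_n (i.e., each is a product of n subsets, one per coordinate). Then the set A \ (B^1 ∪ ⋯ ∪ B^h) can be partitioned into at most n^h product subsets of X_1 × ⋯ × X_n. -/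
open Set

private lemma step_partition (n : ℕ) (X : Fin n → Type*) (A B : ∀ i, Set (X i)) :
    ∃ D : Fin n → ∀ i, Set (X i),
      (∀ s t : Fin n, s ≠ t → Disjoint (Set.univ.pi (D s)) (Set.univ.pi (D t))) ∧
      (⋃ i, Set.univ.pi (D i)) = Set.univ.pi A \ Set.univ.pi B := by
  classical
  refine ⟨fun i => fun j : Fin n => if (j : ℕ) < (i : ℕ) then A j ∩ B j
      else if j = i then A j \ B j else A j, ?_, ?_⟩
  · have key : ∀ s t : Fin n, s < t → Disjoint
        (Set.univ.pi (fun j : Fin n => if (j : ℕ) < (s : ℕ) then A j ∩ B j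
          else if j = s then A j \ B j else A j))
        (Set.univ.pi (fun j : Fin n => if (j : ℕ) < (t : ℕ) then A j ∩ B j
          else if j = t then A j \ B j else A j)) := by
      intro s t hst
      rw [Set.disjoint_left]
      intro x hxs hxt
      have h1 := hxs s (mem_univ s)
      have h2 := hxt s (mem_univ s)
      have hst' : (s : ℕ) < (t : ℕ) := hst
      simp only [lt_self_iff_false, if_false, if_pos rfl] at h1
      simp only [if_pos hst'] at h2
      exact h1.2 h2.2
    intro s t hst
    rcases lt_or_gt_of_ne hst with h | h
    · exact key s t h
    · exact (key t s h).symm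
  · ext x
    simp only [mem_iUnion, mem_diff, mem_univ_pi]
    constructor
    · rintro ⟨i, hi⟩
      constructor
      · intro j
        have := hi j
        split_ifs at this with h1 h2
        · exact this.1
        · exact this.1
        · exact this
      · intro hxB
        have := hi i
        rw [if_neg (lt_irrefl _), if_pos rfl] at this
        exact this.2 (hxB i)
    · rintro ⟨hA, hB⟩
      have hex : ∃ m, ∃ hm : m < n, x ⟨m, hm⟩ ∉ B ⟨m, hm⟩ := by
        by_contra hcon
        push_neg at hcon
        exact hB (fun j => by have := hcon j.1 j.2; simpa using this)
      let k := Nat.find hex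
      obtain ⟨hk, hxk⟩ := Nat.find_spec hex
      refine ⟨⟨k, hk⟩, fun j => ?_⟩
      split_ifs with h1 h2
      · refine ⟨hA j, ?_⟩
        have := Nat.find_min hex (m := j.1) h1
        push_neg at this
        have := this j.2
        simpa using this
      · subst h2
        exact ⟨hA _, hxk⟩
      · exact hA j

private lemma aux_partition (n : ℕ) (X : Fin n → Type*) :
    ∀ (h : ℕ) (A : ∀ i, Set (X i)) (B : Fin h → ∀ i, Set (X i)),
    ∃ (ι : Type) (_ : Fintype ι) (C : ι → ∀ i, Set (X i)),
      Fintype.card ι ≤ n ^ h ∧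
      (∀ s t : ι, s ≠ t → Disjoint (Set.univ.pi (C s)) (Set.univ.pi (C t))) ∧
      (⋃ s, Set.univ.pi (C s)) = Set.univ.pi A \ ⋃ t, Set.univ.pi (B t) := by
  intro h
  induction h with
  | zero =>
    intro A B
    refine ⟨Fin 1, inferInstance, fun _ => A, by simp, ?_, ?_⟩
    · intro s t hst
      exact absurd (Subsingleton.elim s t) hst
    · simp [Set.iUnion_const]
  | succ h ih =>
    intro A B
    obtain ⟨D, hDdisj, hDun⟩ := step_partition n X A (B 0)
    choose ι inst C hcard hdisj hun using fun i => ih (D i) (fun t => B t.succ)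
    letI := inst
    refine ⟨Σ i, ι i, inferInstance, fun p => C p.1 p.2, ?_, ?_, ?_⟩
    · rw [Fintype.card_sigma]
      calc ∑ i, Fintype.card (ι i) ≤ ∑ _i : Fin n, n ^ h :=
            Finset.sum_le_sum fun i _ => hcard i
        _ = n * n ^ h := by simp [mul_comm]
        _ = n ^ (h + 1) := by ring
    · rintro ⟨i, s⟩ ⟨j, t⟩ hne
      by_cases hij : i = j
      · subst hij
        have hst : s ≠ t := by
          intro hst; exact hne (by rw [hst])
        exact hdisj i s t hst
      · have hsub1 : Set.univ.pi (C i s) ⊆ ⋃ u, Set.univ.pi (C i u) :=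
          Set.subset_iUnion (fun u => Set.univ.pi (C i u)) s
        have hsub2 : Set.univ.pi (C j t) ⊆ ⋃ u, Set.univ.pi (C j u) :=
          Set.subset_iUnion (fun u => Set.univ.pi (C j u)) t
        have : Disjoint (Set.univ.pi (D i)) (Set.univ.pi (D j)) := hDdisj i j hij
        refine Disjoint.mono (hsub1.trans ?_) (hsub2.trans ?_) this
        · rw [hun i]; exact diff_subset
        · rw [hun j]; exact diff_subset
    · have hBsplit : (⋃ t : Fin (h + 1), Set.univ.pi (B t)) =
          Set.univ.pi (B 0) ∪ ⋃ t : Fin h, Set.univ.pi (B t.succ) := by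
        ext x
        simp only [mem_iUnion, mem_union]
        constructor
        · rintro ⟨t, ht⟩
          rcases Fin.eq_zero_or_eq_succ t with rfl | ⟨u, rfl⟩
          · exact Or.inl ht
          · exact Or.inr ⟨u, ht⟩
        · rintro (ht | ⟨u, hu⟩)
          · exact ⟨0, ht⟩
          · exact ⟨u.succ, hu⟩
      rw [Set.iUnion_sigma]
      calc (⋃ i, ⋃ s, Set.univ.pi (C i s))
          = ⋃ i, (Set.univ.pi (D i) \ ⋃ t : Fin h, Set.univ.pi (B t.succ)) := by
            exact iUnion_congr hun
        _ = (⋃ i, Set.univ.pi (D i)) \ ⋃ t : Fin h, Set.univ.pi (B t.succ) :=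
            (iUnion_diff _ _).symm
        _ = (Set.univ.pi A \ Set.univ.pi (B 0)) \ ⋃ t : Fin h, Set.univ.pi (B t.succ) := by
            rw [hDun]
        _ = Set.univ.pi A \ ⋃ t : Fin (h + 1), Set.univ.pi (B t) := by
            rw [hBsplit, diff_diff]

/-- if `A, B¹, …, Bʰ` are product subsets of `X₁ × ⋯ × Xₙ`, then
`A \ (B¹ ∪ ⋯ ∪ Bʰ)` can be partitioned into at most `nʰ` product subsets. -/
theorem product_minus_products_partition (n h : ℕ) (X : Fin n → Type*)
    (A : ∀ i, Set (X i)) (B : Fin h → ∀ i, Set (X i)) :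
    ∃ (N : ℕ) (C : Fin N → ∀ i, Set (X i)),
      N ≤ n ^ h ∧
      (∀ s t, s ≠ t → Disjoint (Set.univ.pi (C s)) (Set.univ.pi (C t))) ∧
      (⋃ s, Set.univ.pi (C s)) = Set.univ.pi A \ ⋃ t, Set.univ.pi (B t) := by
  obtain ⟨ι, inst, C, hcard, hdisj, hun⟩ := aux_partition n X h A B
  letI := inst
  let e := (Fintype.equivFin ι).symm
  refine ⟨Fintype.card ι, fun s => C (e s), hcard, ?_, ?_⟩
  · intro s t hst
    exact hdisj (e s) (e t) (fun he => hst (e.injective he))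
  · rw [← hun]
    exact e.surjective.iUnion_comp (fun i => Set.univ.pi (C i))
end

section
/- Let q be a prime power, let F and S be flats in F_qP^n, and let F' ⊆ F be a flat. Consider the equivalence relation on F \ S defined by p ~ p' iff span((F ∩ S) ∪ {p}) = span((F ∩ S) ∪ {p'}). Then all equivalence classes C of this relation having nonempty intersection with F' have the same intersection size |C ∩ F'|. -/
/-- A flat in a projective space (of any dimension, possibly empty): the set of
projective points whose representing line lies in a fixed linear subspace. -/
def IsFlatSet {K V : Type*} [Field K] [AddCommGroup V] [Module K V]
    (A : Set (Projectivization K V)) : Prop :=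
  ∃ W : Submodule K V, A = {x : Projectivization K V | x.submodule ≤ W}

/-- The projective span of a set of projective points: the smallest flat containing it,
i.e. the points inside the linear span of representatives. -/
def projSpan {K V : Type*} [Field K] [AddCommGroup V] [Module K V]
    (T : Set (Projectivization K V)) : Set (Projectivization K V) :=
  {x : Projectivization K V |
    x.submodule ≤ Submodule.span K (Projectivization.rep '' T)}

section Aux

variable {K V : Type*} [Field K] [AddCommGroup V] [Module K V]

lemma submodule_le_iff (y : Projectivization K V) (W : Submodule K V) :
    y.submodule ≤ W ↔ y.rep ∈ W := by
  rw [Projectivization.submodule_eq, Submodule.span_singleton_le_iff_mem]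

lemma aux_sup (M Ws : Submodule K V) (hMWs : M ≤ Ws) {a b : V}
    (ha : a ∉ Ws) (h : a ∈ M ⊔ (K ∙ b)) : M ⊔ (K ∙ a) = M ⊔ (K ∙ b) := by
  obtain ⟨m, hm, w, hw, hsum⟩ := Submodule.mem_sup.mp h
  obtain ⟨c, rfl⟩ := Submodule.mem_span_singleton.mp hw
  have hc : c ≠ 0 := by
    rintro rfl
    apply ha
    rw [← hsum, zero_smul, add_zero]
    exact hMWs hm
  apply le_antisymm
  · apply sup_le le_sup_left
    rw [Submodule.span_singleton_le_iff_mem, ← hsum]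
    exact Submodule.add_mem _ (Submodule.mem_sup_left hm)
      (Submodule.mem_sup_right (Submodule.smul_mem _ _ (Submodule.mem_span_singleton_self b)))
  · apply sup_le le_sup_left
    rw [Submodule.span_singleton_le_iff_mem]
    have : b = c⁻¹ • a - c⁻¹ • m := by
      rw [← hsum, smul_add, smul_smul, inv_mul_cancel₀ hc, one_smul]
      abel
    rw [this]
    exact Submodule.sub_mem _
      (Submodule.smul_mem _ _ (Submodule.mem_sup_right (Submodule.mem_span_singleton_self a)))
      (Submodule.smul_mem _ _ (Submodule.mem_sup_left hm))

/-- Counting lemma: the set of projective points inside `U ⊔ K∙v` but not inside `U`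
is in bijection with `U` (send `u` to the class of `u + v`). -/
lemma card_slice (U : Submodule K V) {v : V} (hv : v ∉ U) :
    Nat.card {y : Projectivization K V |
        y.submodule ≤ U ⊔ (K ∙ v) ∧ ¬ y.submodule ≤ U} = Nat.card U := by
  have hv0 : v ≠ 0 := fun h => hv (h ▸ U.zero_mem)
  have hne : ∀ u : U, (u : V) + v ≠ 0 := by
    intro u h
    apply hv
    have : v = -(u : V) := by
      rw [eq_neg_iff_add_eq_zero, add_comm]; exact h
    rw [this]; exact U.neg_mem u.2
  symm
  apply Nat.card_eq_of_bijective
    (fun u : U => (⟨Projectivization.mk K ((u : V) + v) (hne u), by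
      constructor
      · rw [Projectivization.submodule_mk, Submodule.span_singleton_le_iff_mem]
        exact Submodule.add_mem _ (Submodule.mem_sup_left u.2)
          (Submodule.mem_sup_right (Submodule.mem_span_singleton_self v))
      · rw [Projectivization.submodule_mk, Submodule.span_singleton_le_iff_mem]
        intro hmem
        apply hv
        have : v = ((u : V) + v) - (u : V) := by abel
        rw [this]; exact Submodule.sub_mem _ hmem u.2⟩ :
      {y : Projectivization K V | y.submodule ≤ U ⊔ (K ∙ v) ∧ ¬ y.submodule ≤ U}))
  constructor
  · intro u u' h
    have h' : Projectivization.mk K ((u : V) + v) (hne u)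
        = Projectivization.mk K ((u' : V) + v) (hne u') := congrArg Subtype.val h
    obtain ⟨a, ha⟩ := (Projectivization.mk_eq_mk_iff' K _ _ _ _).mp h'
    have hav : a • (u' : V) - (u : V) = (1 - a) • v := by
      have h2 : a • (u' : V) + a • v = (u : V) + v := by
        rw [← smul_add]; exact ha
      rw [sub_smul, one_smul]
      linear_combination (norm := module) h2
    have ha1 : a = 1 := by
      by_contra ha1
      apply hv
      have h1a : (1 - a) ≠ 0 := sub_ne_zero.mpr (Ne.symm ha1)
      have : v = (1 - a)⁻¹ • ((1 - a) • v) := by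
        rw [smul_smul, inv_mul_cancel₀ h1a, one_smul]
      rw [this, ← hav]
      exact Submodule.smul_mem _ _ (Submodule.sub_mem _ (Submodule.smul_mem _ _ u'.2) u.2)
    ext1
    have := ha
    rw [ha1, one_smul] at this
    exact (add_right_cancel this).symm
  · rintro ⟨y, hy1, hy2⟩
    rw [submodule_le_iff] at hy1 hy2
    obtain ⟨m, hm, w, hw, hsum⟩ := Submodule.mem_sup.mp hy1
    obtain ⟨c, rfl⟩ := Submodule.mem_span_singleton.mp hw
    have hc : c ≠ 0 := by
      rintro rfl
      apply hy2
      rw [← hsum, zero_smul, add_zero]; exact hm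
    refine ⟨⟨c⁻¹ • m, Submodule.smul_mem _ _ hm⟩, ?_⟩
    ext1
    show Projectivization.mk K (c⁻¹ • m + v) _ = y
    conv_rhs => rw [← Projectivization.mk_rep y]
    rw [Projectivization.mk_eq_mk_iff']
    refine ⟨c⁻¹, ?_⟩
    rw [← hsum, smul_add, smul_smul, inv_mul_cancel₀ hc, one_smul]

lemma projSpan_insert (A : Set (Projectivization K V)) (p : Projectivization K V) :
    projSpan (A ∪ {p}) = {x : Projectivization K V |
      x.submodule ≤ Submodule.span K (Projectivization.rep '' A) ⊔ (K ∙ p.rep)} := by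
  unfold projSpan
  rw [Set.image_union, Set.image_singleton, Submodule.span_union]

lemma proj_class_iff (F S : Set (Projectivization K V)) (W_S : Submodule K V)
    (hS : S = {x : Projectivization K V | x.submodule ≤ W_S})
    {p p' : Projectivization K V} (hp : p ∈ F \ S) (hp' : p' ∈ F \ S) :
    projSpan ((F ∩ S) ∪ {p'}) = projSpan ((F ∩ S) ∪ {p}) ↔
      p'.rep ∈ Submodule.span K (Projectivization.rep '' (F ∩ S)) ⊔ (K ∙ p.rep) := by
  set M := Submodule.span K (Projectivization.rep '' (F ∩ S)) with hM
  have hMS : M ≤ W_S := by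
    rw [hM, Submodule.span_le]
    rintro _ ⟨x, hx, rfl⟩
    have : x.submodule ≤ W_S := by rw [hS] at hx; exact hx.2
    exact (submodule_le_iff x W_S).mp this
  have hp'S : p'.rep ∉ W_S := by
    intro h
    exact hp'.2 (by rw [hS]; exact (submodule_le_iff p' W_S).mpr h)
  constructor
  · intro h
    rw [projSpan_insert, projSpan_insert] at h
    have hp'mem : p' ∈ {x : Projectivization K V | x.submodule ≤ M ⊔ (K ∙ p'.rep)} := by
      rw [Set.mem_setOf_eq, submodule_le_iff]
      exact Submodule.mem_sup_right (Submodule.mem_span_singleton_self _)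
    rw [h] at hp'mem
    exact (submodule_le_iff p' _).mp hp'mem
  · intro h
    rw [projSpan_insert, projSpan_insert, ← hM]
    rw [aux_sup M W_S hMS hp'S h]

lemma class_inter_eq (F S F' : Set (Projectivization K V)) (W_S W' : Submodule K V)
    (hS : S = {x : Projectivization K V | x.submodule ≤ W_S})
    (hF' : F' = {x : Projectivization K V | x.submodule ≤ W'}) (hF'F : F' ⊆ F)
    (p : Projectivization K V) (hp : p ∈ F \ S)
    (C : Set (Projectivization K V))
    (hC : C = {p' ∈ F \ S |
      projSpan ((F ∩ S) ∪ {p'}) = projSpan ((F ∩ S) ∪ {p})})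
    (x : Projectivization K V) (hx : x ∈ C ∩ F') :
    C ∩ F' = {y : Projectivization K V |
      y.submodule ≤ (Submodule.span K (Projectivization.rep '' (F ∩ S)) ⊓ W')
          ⊔ (K ∙ x.rep) ∧
      ¬ y.submodule ≤ (Submodule.span K (Projectivization.rep '' (F ∩ S)) ⊓ W')} := by
  set M := Submodule.span K (Projectivization.rep '' (F ∩ S)) with hM
  have hMS : M ≤ W_S := by
    rw [hM, Submodule.span_le]
    rintro _ ⟨z, hz, rfl⟩
    have : z.submodule ≤ W_S := by rw [hS] at hz; exact hz.2
    exact (submodule_le_iff z W_S).mp this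
  obtain ⟨hxC, hxF'⟩ := hx
  have hxFS : x ∈ F \ S := by rw [hC] at hxC; exact hxC.1
  have hxW' : x.rep ∈ W' := by
    rw [hF'] at hxF'; exact (submodule_le_iff x W').mp hxF'
  have hxWS : x.rep ∉ W_S := by
    intro h
    exact hxFS.2 (by rw [hS]; exact (submodule_le_iff x W_S).mpr h)
  have hxrep : x.rep ∈ M ⊔ (K ∙ p.rep) := by
    have := hxC
    rw [hC] at this
    exact (proj_class_iff F S W_S hS hp hxFS).mp this.2
  have key : M ⊔ (K ∙ x.rep) = M ⊔ (K ∙ p.rep) := aux_sup M W_S hMS hxWS hxrep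
  have hmod : (M ⊔ (K ∙ x.rep)) ⊓ W' = (M ⊓ W') ⊔ (K ∙ x.rep) := by
    have hle : (K ∙ x.rep) ≤ W' := by
      rw [Submodule.span_singleton_le_iff_mem]; exact hxW'
    rw [sup_comm M, sup_inf_assoc_of_le M hle, sup_comm]
  ext y
  constructor
  · rintro ⟨hyC, hyF'⟩
    have hyFS : y ∈ F \ S := by rw [hC] at hyC; exact hyC.1
    have hyrep : y.rep ∈ M ⊔ (K ∙ p.rep) := by
      have := hyC; rw [hC] at this
      exact (proj_class_iff F S W_S hS hp hyFS).mp this.2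
    have hyW' : y.rep ∈ W' := by
      rw [hF'] at hyF'; exact (submodule_le_iff y W').mp hyF'
    rw [← key] at hyrep
    constructor
    · rw [submodule_le_iff, ← hmod]
      exact ⟨hyrep, hyW'⟩
    · rw [submodule_le_iff]
      intro h
      apply hyFS.2
      rw [hS]
      exact (submodule_le_iff y W_S).mpr (hMS h.1)
  · rintro ⟨hy1, hy2⟩
    rw [submodule_le_iff] at hy1 hy2
    have hyW' : y.rep ∈ W' := by
      rcases Submodule.mem_sup.mp hy1 with ⟨a, ha, b, hb, hsum⟩
      rw [← hsum]
      refine Submodule.add_mem _ ha.2 ?_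
      have hle : (K ∙ x.rep) ≤ W' := by
        rw [Submodule.span_singleton_le_iff_mem]; exact hxW'
      exact hle hb
    have hyF' : y ∈ F' := by rw [hF']; exact (submodule_le_iff y W').mpr hyW'
    have hyF : y ∈ F := hF'F hyF'
    have hyS : y ∉ S := by
      intro hyS
      apply hy2
      have : y.rep ∈ M := by
        rw [hM]
        exact Submodule.subset_span ⟨y, ⟨hyF, hyS⟩, rfl⟩
      exact ⟨this, hyW'⟩
    have hyrep : y.rep ∈ M ⊔ (K ∙ p.rep) := by
      rw [← key]
      refine Submodule.mem_sup.mp hy1 |>.elim ?_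
      rintro a ⟨ha, b, hb, hsum⟩
      rw [← hsum]
      exact Submodule.add_mem _ (Submodule.mem_sup_left ha.1) (Submodule.mem_sup_right hb)
    refine ⟨?_, hyF'⟩
    rw [hC]
    exact ⟨⟨hyF, hyS⟩, (proj_class_iff F S W_S hS hp ⟨hyF, hyS⟩).mpr hyrep⟩

end Aux

/-- let `F, S` be flats in `F_qPⁿ` and `F' ⊆ F` a flat.  Consider the
equivalence relation on `F \ S` given by `p ~ p'` iff
`span((F ∩ S) ∪ {p}) = span((F ∩ S) ∪ {p'})`.  Then all equivalence classes meeting `F'`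
have the same intersection size with `F'`. -/
theorem class_intersection_size_constant (q n : ℕ)
    (K : Type) [Field K] [Fintype K] (hq : Fintype.card K = q)
    (F S F' : Set (Projectivization K (Fin (n + 1) → K)))
    (hF : IsFlatSet F) (hS : IsFlatSet S) (hF' : IsFlatSet F') (hF'F : F' ⊆ F)
    (C₁ C₂ : Set (Projectivization K (Fin (n + 1) → K)))
    (hC₁ : ∃ p ∈ F \ S, C₁ =
      {p' ∈ F \ S | projSpan ((F ∩ S) ∪ {p'}) = projSpan ((F ∩ S) ∪ {p})})
    (hC₂ : ∃ p ∈ F \ S, C₂ =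
      {p' ∈ F \ S | projSpan ((F ∩ S) ∪ {p'}) = projSpan ((F ∩ S) ∪ {p})})
    (h₁ : (C₁ ∩ F').Nonempty) (h₂ : (C₂ ∩ F').Nonempty) :
    (C₁ ∩ F').ncard = (C₂ ∩ F').ncard := by
  obtain ⟨W_S, hWS⟩ := hS
  obtain ⟨W', hW'⟩ := hF'
  obtain ⟨p₁, hp₁, hCe₁⟩ := hC₁
  obtain ⟨p₂, hp₂, hCe₂⟩ := hC₂
  obtain ⟨x₁, hx₁⟩ := h₁
  obtain ⟨x₂, hx₂⟩ := h₂
  set M := Submodule.span K (Projectivization.rep ''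
    (F ∩ S)) with hM
  set U := M ⊓ W' with hU
  have hMS : M ≤ W_S := by
    rw [hM, Submodule.span_le]
    rintro _ ⟨z, hz, rfl⟩
    have : z.submodule ≤ W_S := by rw [hWS] at hz; exact hz.2
    exact (submodule_le_iff z W_S).mp this
  have e₁ := class_inter_eq F S F' W_S W' hWS hW' hF'F p₁ hp₁ C₁ hCe₁ x₁ hx₁
  have e₂ := class_inter_eq F S F' W_S W' hWS hW' hF'F p₂ hp₂ C₂ hCe₂ x₂ hx₂
  have hnot : ∀ x : Projectivization K (Fin (n + 1) → K), x ∉ S → x.rep ∉ U := by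
    intro x hxS h
    apply hxS
    rw [hWS]
    exact (submodule_le_iff x W_S).mpr (hMS h.1)
  have hx₁S : x₁ ∉ S := by
    have := hx₁.1; rw [hCe₁] at this; exact this.1.2
  have hx₂S : x₂ ∉ S := by
    have := hx₂.1; rw [hCe₂] at this; exact this.1.2
  rw [e₁, e₂, ← Nat.card_coe_set_eq, ← Nat.card_coe_set_eq,
    card_slice U (hnot x₁ hx₁S), card_slice U (hnot x₂ hx₂S)]
end

section
/- Let q be a prime power, n ≥ 1, and let A be an almost-flat of dimension d in F_qP^n (i.e., A = F_d or A = F_d \ F_{d''} for a d-flat F_d and a subflat F_{d''} ⊊ F_d). Then for every d' with 0 < d' ≤ d, the set A can be partitioned into almost-flats of dimension d'. -/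
/-- An almost-flat of dimension `k`: either a `k`-flat, or a `k`-flat minus a flat of
dimension at most `k-1` contained in it. -/
def IsAlmostFlat {K V : Type*} [Field K] [AddCommGroup V] [Module K V]
    (k : ℕ) (A : Set (Projectivization K V)) : Prop :=
  IsFlat k A ∨ ∃ (F F' : Set (Projectivization K V)) (d : ℕ),
    IsFlat k F ∧ IsFlat d F' ∧ d + 1 ≤ k ∧ F' ⊆ F ∧ A = F \ F'



open Module Submodule

variable {K V : Type*} [Field K] [AddCommGroup V] [Module K V]

def flat (W : Submodule K V) : Set (Projectivization K V) :=
  {x : Projectivization K V | x.submodule ≤ W}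

lemma mem_flat_iff {W : Submodule K V} {x : Projectivization K V} :
    x ∈ flat W ↔ x.rep ∈ W := by
  simp [flat, Projectivization.submodule_eq, Submodule.span_singleton_le_iff_mem]

lemma flat_bot : (flat ⊥ : Set (Projectivization K V)) = ∅ := by
  ext x
  simp [mem_flat_iff, Projectivization.rep_nonzero x]

lemma flat_mono {U W : Submodule K V} (h : U ≤ W) : flat U ⊆ flat W :=
  fun _x hx => le_trans hx h

lemma mk_mem_flat_iff {W : Submodule K V} {v : V} (hv : v ≠ 0) :
    Projectivization.mk K v hv ∈ flat W ↔ v ∈ W := by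
  simp [flat, Projectivization.submodule_mk, Submodule.span_singleton_le_iff_mem]

lemma finrank_sup_span_singleton [FiniteDimensional K V] (U : Submodule K V) {v : V}
    (hv : v ∉ U) : finrank K ↥(U ⊔ K ∙ v) = finrank K ↥U + 1 := by
  have hv0 : v ≠ 0 := fun h => hv (h ▸ U.zero_mem)
  have hinf : U ⊓ (K ∙ v) = ⊥ := by
    rw [eq_bot_iff]
    rintro x ⟨hxU, hxv⟩
    rcases Submodule.mem_span_singleton.1 hxv with ⟨c, rfl⟩
    rcases eq_or_ne c 0 with rfl | hc
    · simp
    · have : v ∈ U := by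
        have := U.smul_mem c⁻¹ hxU
        rwa [smul_smul, inv_mul_cancel₀ hc, one_smul] at this
      exact absurd this hv
  have := Submodule.finrank_sup_add_finrank_inf_eq U (K ∙ v)
  rw [hinf, finrank_bot, finrank_span_singleton hv0] at this
  omega

/-- chain lemma -/
lemma exists_intermediate [FiniteDimensional K V] {U W : Submodule K V} (hUW : U ≤ W)
    (c : ℕ) (hc1 : finrank K ↥U ≤ c) (hc2 : c ≤ finrank K ↥W) :
    ∃ G : Submodule K V, U ≤ G ∧ G ≤ W ∧ finrank K ↥G = c := by
  induction c with
  | zero =>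
    refine ⟨U, le_rfl, hUW, ?_⟩; omega
  | succ m ih =>
    rcases Nat.lt_or_ge (finrank K ↥U) (m+1) with h | h
    · obtain ⟨G, hUG, hGW, hG⟩ := ih (by omega) (by omega)
      have hGW' : G < W := lt_of_le_of_ne hGW (by rintro rfl; omega)
      obtain ⟨v, hvW, hvG⟩ := SetLike.exists_of_lt hGW'
      refine ⟨G ⊔ K ∙ v, le_trans hUG le_sup_left, sup_le hGW ((Submodule.span_singleton_le_iff_mem v W).2 hvW), ?_⟩
      rw [finrank_sup_span_singleton G hvG, hG]
    · refine ⟨U, le_rfl, hUW, ?_⟩; omega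

def PartedInto (d' : ℕ) (A : Set (Projectivization K V)) : Prop :=
  ∃ C : Set (Set (Projectivization K V)),
    ⋃₀ C = A ∧ C.PairwiseDisjoint id ∧ ∅ ∉ C ∧ ∀ B ∈ C, IsAlmostFlat d' B

lemma PartedInto.empty (d' : ℕ) : PartedInto d' (∅ : Set (Projectivization K V)) :=
  ⟨∅, by simp, by simp, by simp, by simp⟩

lemma PartedInto.single {d' : ℕ} {B : Set (Projectivization K V)} (hB : B.Nonempty)
    (h : IsAlmostFlat d' B) : PartedInto d' B :=
  ⟨{B}, by simp, by simp, by simpa using hB.ne_empty.symm, by simpa using h⟩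

lemma PartedInto.union {d' : ℕ} {S₁ S₂ : Set (Projectivization K V)}
    (h1 : PartedInto d' S₁) (h2 : PartedInto d' S₂) (hdisj : Disjoint S₁ S₂) :
    PartedInto d' (S₁ ∪ S₂) := by
  obtain ⟨C₁, hu1, hp1, he1, ha1⟩ := h1
  obtain ⟨C₂, hu2, hp2, he2, ha2⟩ := h2
  refine ⟨C₁ ∪ C₂, by rw [Set.sUnion_union, hu1, hu2], ?_, by simp [he1, he2], ?_⟩
  · intro B hB B' hB' hne
    rcases hB with hB | hB <;> rcases hB' with hB' | hB'
    · exact hp1 hB hB' hne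
    · exact Set.disjoint_of_subset (hu1 ▸ Set.subset_sUnion_of_mem hB)
        (hu2 ▸ Set.subset_sUnion_of_mem hB') hdisj
    · exact Set.disjoint_of_subset (hu2 ▸ Set.subset_sUnion_of_mem hB)
        (hu1 ▸ Set.subset_sUnion_of_mem hB') hdisj.symm
    · exact hp2 hB hB' hne
  · rintro B (hB | hB)
    · exact ha1 B hB
    · exact ha2 B hB

lemma affine_parted [FiniteDimensional K V] {d' : ℕ} (hd' : 1 ≤ d')
    (U W : Submodule K V) (hUW : U ≤ W) (hU : finrank K ↥U = d')
    {v : V} (hv : v ∉ W) :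
    PartedInto d' (flat (W ⊔ K ∙ v) \ flat W) := by
  classical
  set piece : V → Set (Projectivization K V) :=
    fun w => flat (U ⊔ (K ∙ (w + v))) \ flat U with hpiece
  have hwv_notW : ∀ w ∈ W, w + v ∉ W := by
    intro w hw hmem
    exact hv (by simpa using W.sub_mem hmem hw)
  have hwv_notU : ∀ w ∈ W, w + v ∉ U := fun w hw h => hwv_notW w hw (hUW h)
  have hwv_ne : ∀ w ∈ W, w + v ≠ 0 := fun w hw h => hwv_notW w hw (h ▸ W.zero_mem)
  have hdecomp : ∀ w ∈ W, ∀ x ∈ piece w,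
      ∃ u ∈ U, ∃ c : K, c ≠ 0 ∧ Projectivization.rep x = u + c • (w + v) := by
    intro w _hw x hx
    obtain ⟨hx1, hx2⟩ := hx
    have h1 : x.rep ∈ U ⊔ (K ∙ (w + v)) := mem_flat_iff.1 hx1
    have h2 : x.rep ∉ U := fun h => hx2 (mem_flat_iff.2 h)
    obtain ⟨u, hu, z, hz, hsum⟩ := Submodule.mem_sup.1 h1
    obtain ⟨c, rfl⟩ := Submodule.mem_span_singleton.1 hz
    refine ⟨u, hu, c, ?_, hsum.symm⟩
    rintro rfl
    exact h2 (by rw [← hsum]; simpa using hu)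
  have hsub : ∀ w ∈ W, piece w ⊆ flat (W ⊔ K ∙ v) \ flat W := by
    intro w hw x hx
    obtain ⟨u, hu, c, hc, hrep⟩ := hdecomp w hw x hx
    have hsplit : u + c • (w + v) = (u + c • w) + c • v := by module
    constructor
    · rw [mem_flat_iff, hrep, hsplit]
      exact Submodule.add_mem_sup (W.add_mem (hUW hu) (W.smul_mem c hw))
        ((K ∙ v).smul_mem c (Submodule.mem_span_singleton_self v))
    · intro hmem
      rw [mem_flat_iff, hrep, hsplit] at hmem
      have hcv : c • v ∈ W := by
        have := W.sub_mem hmem (W.add_mem (hUW hu) (W.smul_mem c hw))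
        simpa using this
      exact hv ((W.smul_mem_iff hc).1 hcv)
  have hcover : ∀ x ∈ flat (W ⊔ K ∙ v) \ flat W, ∃ w ∈ W, x ∈ piece w := by
    rintro x ⟨hx1, hx2⟩
    have h1 := mem_flat_iff.1 hx1
    have h2 : x.rep ∉ W := fun h => hx2 (mem_flat_iff.2 h)
    obtain ⟨w0, hw0, z, hz, hsum⟩ := Submodule.mem_sup.1 h1
    obtain ⟨c, rfl⟩ := Submodule.mem_span_singleton.1 hz
    have hc : c ≠ 0 := by rintro rfl; exact h2 (by rw [← hsum]; simpa using hw0)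
    refine ⟨c⁻¹ • w0, W.smul_mem _ hw0, ?_, ?_⟩
    · rw [mem_flat_iff]
      apply Submodule.mem_sup_right
      refine Submodule.mem_span_singleton.2 ⟨c, ?_⟩
      rw [← hsum, smul_add, smul_smul, mul_inv_cancel₀ hc, one_smul]
    · intro hmem
      exact h2 (hUW (mem_flat_iff.1 hmem))
  have hpieceeq : ∀ w₁ ∈ W, ∀ w₂ ∈ W, (piece w₁ ∩ piece w₂).Nonempty →
      piece w₁ = piece w₂ := by
    rintro w₁ h₁ w₂ h₂ ⟨x, hx₁, hx₂⟩
    obtain ⟨u₁, hu₁, c₁, hc₁, hr₁⟩ := hdecomp w₁ h₁ x hx₁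
    obtain ⟨u₂, hu₂, c₂, hc₂, hr₂⟩ := hdecomp w₂ h₂ x hx₂
    have hE : u₁ + c₁ • (w₁ + v) = u₂ + c₂ • (w₂ + v) := hr₁.symm.trans hr₂
    have hcv : (c₁ - c₂) • v ∈ W := by
      have hkey : (c₁ - c₂) • v = (u₂ + c₂ • w₂) - (u₁ + c₁ • w₁) := by
        linear_combination (norm := module) hE
      rw [hkey]
      exact W.sub_mem (W.add_mem (hUW hu₂) (W.smul_mem _ h₂))
        (W.add_mem (hUW hu₁) (W.smul_mem _ h₁))
    have hc12 : c₁ = c₂ := by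
      by_contra hne
      exact hv ((W.smul_mem_iff (sub_ne_zero.2 hne)).1 hcv)
    subst hc12
    have hw12 : w₁ - w₂ ∈ U := by
      have h5 : c₁ • (w₁ - w₂) = u₂ - u₁ := by linear_combination (norm := module) hE
      have h6 : w₁ - w₂ = c₁⁻¹ • (u₂ - u₁) := by
        rw [← h5, smul_smul, inv_mul_cancel₀ hc₁, one_smul]
      rw [h6]
      exact U.smul_mem _ (U.sub_mem hu₂ hu₁)
    have hsup : U ⊔ (K ∙ (w₁ + v)) = U ⊔ (K ∙ (w₂ + v)) := by
      apply le_antisymm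
      · refine sup_le le_sup_left ((Submodule.span_singleton_le_iff_mem _ _).2 ?_)
        have : w₁ + v = (w₁ - w₂) + (w₂ + v) := by module
        rw [this]
        exact Submodule.add_mem _ (Submodule.mem_sup_left hw12)
          (Submodule.mem_sup_right (Submodule.mem_span_singleton_self _))
      · refine sup_le le_sup_left ((Submodule.span_singleton_le_iff_mem _ _).2 ?_)
        have : w₂ + v = (w₂ - w₁) + (w₁ + v) := by module
        rw [this]
        exact Submodule.add_mem _ (Submodule.mem_sup_left (by simpa using U.neg_mem hw12))
          (Submodule.mem_sup_right (Submodule.mem_span_singleton_self _))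
    simp only [hpiece, hsup]
  have hnonempty : ∀ w ∈ W, (piece w).Nonempty := by
    intro w hw
    refine ⟨Projectivization.mk K (w + v) (hwv_ne w hw), ?_, ?_⟩
    · exact (mk_mem_flat_iff _).2 (Submodule.mem_sup_right (Submodule.mem_span_singleton_self _))
    · intro h
      exact hwv_notU w hw ((mk_mem_flat_iff _).1 h)
  have haf : ∀ w ∈ W, IsAlmostFlat d' (piece w) := by
    intro w hw
    right
    refine ⟨flat (U ⊔ (K ∙ (w + v))), flat U, d' - 1, ?_, ?_, by omega,
      flat_mono le_sup_left, rfl⟩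
    · exact ⟨_, by rw [finrank_sup_span_singleton U (hwv_notU w hw), hU], rfl⟩
    · exact ⟨U, by rw [hU]; omega, rfl⟩
  refine ⟨piece '' (W : Set V), ?_, ?_, ?_, ?_⟩
  · apply subset_antisymm
    · rintro x ⟨B, ⟨w, hw, rfl⟩, hx⟩
      exact hsub w hw hx
    · intro x hx
      obtain ⟨w, hw, hxw⟩ := hcover x hx
      exact ⟨piece w, ⟨w, hw, rfl⟩, hxw⟩
  · rintro B ⟨w₁, h₁, rfl⟩ B' ⟨w₂, h₂, rfl⟩ hne
    by_contra hnd
    exact hne (hpieceeq w₁ h₁ w₂ h₂ (Set.not_disjoint_iff_nonempty_inter.1 hnd))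
  · rintro ⟨w, hw, h0⟩
    exact (hnonempty w hw).ne_empty h0
  · rintro B ⟨w, hw, rfl⟩
    exact haf w hw

lemma diff_split {α : Type*} {S₁ S₂ S₃ : Set α} (h12 : S₁ ⊆ S₂) (h23 : S₂ ⊆ S₃) :
    S₃ \ S₁ = (S₂ \ S₁) ∪ (S₃ \ S₂) := by
  ext x
  simp only [Set.mem_diff, Set.mem_union]
  have h1 := @h12 x
  have h2 := @h23 x
  tauto

lemma main_parted [FiniteDimensional K V] {d' : ℕ} (hd'1 : 1 ≤ d') (t : ℕ) :
    ∀ U W : Submodule K V, U ≤ W → finrank K ↥W ≤ finrank K ↥U + t →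
    d' + 1 ≤ finrank K ↥W → PartedInto d' (flat W \ flat U) := by
  induction t with
  | zero =>
    intro U W hUW ht _
    have : U = W := Submodule.eq_of_le_of_finrank_le hUW (by omega)
    subst this
    rw [Set.diff_self]
    exact PartedInto.empty d'
  | succ m ih =>
    intro U W hUW ht hW
    rcases le_or_gt (finrank K ↥W) (finrank K ↥U) with h | h
    · have : U = W := Submodule.eq_of_le_of_finrank_le hUW h
      subst this
      rw [Set.diff_self]
      exact PartedInto.empty d'
    · rcases le_or_gt (finrank K ↥U) d' with hcase | hcase
      · -- bottom piece: one almost-flat of dimension d'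
        obtain ⟨G, hUG, hGW, hG⟩ := exists_intermediate hUW (d' + 1) (by omega) (by omega)
        have hUG' : U < G := lt_of_le_of_ne hUG (by rintro rfl; omega)
        obtain ⟨v, hvG, hvU⟩ := SetLike.exists_of_lt hUG'
        have hv0 : v ≠ 0 := fun h => hvU (h ▸ U.zero_mem)
        have hBne : (flat G \ flat U).Nonempty :=
          ⟨Projectivization.mk K v hv0, (mk_mem_flat_iff hv0).2 hvG,
            fun h => hvU ((mk_mem_flat_iff hv0).1 h)⟩
        have hB : IsAlmostFlat d' (flat G \ flat U) := by
          rcases Nat.eq_zero_or_pos (finrank K ↥U) with h0 | h0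
          · have hUbot : U = ⊥ := Submodule.finrank_eq_zero.1 h0
            subst hUbot
            rw [flat_bot, Set.diff_empty]
            exact Or.inl ⟨G, by omega, rfl⟩
          · exact Or.inr ⟨flat G, flat U, finrank K ↥U - 1, ⟨G, by omega, rfl⟩,
              ⟨U, by omega, rfl⟩, by omega, flat_mono hUG, rfl⟩
        have h1 : PartedInto d' (flat G \ flat U) := PartedInto.single hBne hB
        have h2 : PartedInto d' (flat W \ flat G) := ih G W hGW (by omega) hW
        rw [diff_split (flat_mono hUG) (flat_mono hGW)]
        exact h1.union h2 (Set.disjoint_left.2 fun x hx hy => hy.2 hx.1)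
      · -- affine piece of one dimension up
        have hUW' : U < W := lt_of_le_of_ne hUW (by rintro rfl; omega)
        obtain ⟨v, hvW, hvU⟩ := SetLike.exists_of_lt hUW'
        have hGW : U ⊔ (K ∙ v) ≤ W :=
          sup_le hUW ((Submodule.span_singleton_le_iff_mem _ _).2 hvW)
        have hG : finrank K ↥(U ⊔ (K ∙ v)) = finrank K ↥U + 1 :=
          finrank_sup_span_singleton U hvU
        obtain ⟨U', _, hU'U, hU'⟩ := exists_intermediate (bot_le : (⊥ : Submodule K V) ≤ U)
          d' (by simp) (le_of_lt hcase)
        have h1 : PartedInto d' (flat (U ⊔ (K ∙ v)) \ flat U) :=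
          affine_parted hd'1 U' U hU'U hU' hvU
        have h2 : PartedInto d' (flat W \ flat (U ⊔ (K ∙ v))) := ih _ W hGW (by omega) hW
        rw [diff_split (flat_mono le_sup_left) (flat_mono hGW)]
        exact h1.union h2 (Set.disjoint_left.2 fun x hx hy => hy.2 hx.1)

/-- an almost-flat of dimension `d` in `F_qPⁿ` can be partitioned into
almost-flats of dimension `d'`, for any `0 < d' ≤ d`. -/
theorem almost_flat_partition (q n d d' : ℕ) (hn : 1 ≤ n)
    (K : Type) [Field K] [Fintype K] (hq : Fintype.card K = q)
    (A : Set (Projectivization K (Fin (n + 1) → K))) (hA : IsAlmostFlat d A)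
    (hd'0 : 0 < d') (hd' : d' ≤ d) :
    ∃ C : Set (Set (Projectivization K (Fin (n + 1) → K))),
      ⋃₀ C = A ∧ C.PairwiseDisjoint id ∧ ∅ ∉ C ∧
      ∀ B ∈ C, IsAlmostFlat d' B := by
  have hd'1 : 1 ≤ d' := hd'0
  rcases hA with ⟨W, hW, rfl⟩ | ⟨F, F', e, ⟨W, hW, hF⟩, ⟨U, hU, hF'⟩, he, hsub, rfl⟩
  · have hmain := main_parted hd'1 (d + 1) ⊥ W bot_le (by rw [finrank_bot]; omega) (by omega)
    rw [flat_bot, Set.diff_empty] at hmain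
    exact hmain
  · subst hF hF'
    have hUW : U ≤ W := by
      intro u hu
      rcases eq_or_ne u 0 with rfl | hu0
      · exact W.zero_mem
      · exact (mk_mem_flat_iff hu0).1 (hsub ((mk_mem_flat_iff hu0).2 hu))
    exact main_parted hd'1 (d + 1) U W hUW (by omega) (by omega)
end

section
/- Let q be a prime power, n ≥ 1, and let Q = Q_1 × ⋯ × Q_n be a product of nonempty almost-flats in F_qP^{n−1} whose dimension pattern is not coordinatewise less than or equal to (0, 1, …, n−1). Let k+1 be the least index i such that the i-th entry of the dimension pattern of Q is at least i. Then Q can be partitioned into product sets of the form {p_1} × ⋯ × {p_k} × R_{k+1} × ⋯ × R_n, where each p_i is a point and each R_i is an almost-flat of dimension k+1; in particular, each part of this partition again has dimension pattern not coordinatewise less than or equal to (0, 1, …, n−1). -/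
open Module Submodule Set

variable {K V : Type*} [Field K] [AddCommGroup V] [Module K V]

/-- points of a submodule -/
def pts (K : Type*) {V : Type*} [Field K] [AddCommGroup V] [Module K V]
    (W : Submodule K V) : Set (Projectivization K V) := {x | x.submodule ≤ W}

lemma mem_pts {W : Submodule K V} {x : Projectivization K V} :
    x ∈ pts K W ↔ x.rep ∈ W := by
  rw [pts, mem_setOf_eq, Projectivization.submodule_eq, Submodule.span_singleton_le_iff_mem]

lemma mk_mem_pts {W : Submodule K V} {v : V} (hv : v ≠ 0) :
    Projectivization.mk K v hv ∈ pts K W ↔ v ∈ W := by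
  rw [pts, mem_setOf_eq, Projectivization.submodule_mk, Submodule.span_singleton_le_iff_mem]

lemma pts_bot : pts K (⊥ : Submodule K V) = ∅ := by
  ext x
  simp only [mem_pts, Submodule.mem_bot, Set.mem_empty_iff_false, iff_false]
  exact x.rep_nonzero

lemma pts_mono {W W' : Submodule K V} (h : W ≤ W') : pts K W ⊆ pts K W' :=
  fun _ hx => le_trans hx h

lemma le_of_pts_subset {W W' : Submodule K V} (h : pts K W ⊆ pts K W') : W ≤ W' := by
  intro v hv
  rcases eq_or_ne v 0 with rfl | hv0
  · exact W'.zero_mem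
  · exact (mk_mem_pts hv0).mp (h ((mk_mem_pts hv0).mpr hv))

lemma pts_submodule (p : Projectivization K V) : pts K p.submodule = {p} := by
  ext x
  simp only [pts, mem_setOf_eq, mem_singleton_iff]
  constructor
  · intro hx
    exact Projectivization.submodule_injective
      (Submodule.eq_of_le_of_finrank_le hx
        (by rw [Projectivization.finrank_submodule, Projectivization.finrank_submodule]))
  · rintro rfl; exact le_rfl

lemma mem_span_sup {v : V} {U : Submodule K V} {x : V} :
    x ∈ (K ∙ v) ⊔ U ↔ ∃ a : K, ∃ u ∈ U, x = a • v + u := by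
  constructor
  · intro hx
    obtain ⟨y, hy, u, hu, h⟩ := Submodule.mem_sup.mp hx
    obtain ⟨a, rfl⟩ := Submodule.mem_span_singleton.mp hy
    exact ⟨a, u, hu, h.symm⟩
  · rintro ⟨a, u, hu, rfl⟩
    exact Submodule.add_mem _
      (Submodule.mem_sup_left (Submodule.smul_mem _ _ (Submodule.mem_span_singleton_self v)))
      (Submodule.mem_sup_right hu)

variable [FiniteDimensional K V]

lemma exists_strict {N W : Submodule K V} (hNW : N ≤ W)
    (h : finrank K N < finrank K W) :
    ∃ m : V, m ∈ W ∧ m ∉ N ∧ ∀ r : K, r ≠ 0 → r • m ∉ N := by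
  have hn' : finrank K (N.comap W.subtype) = finrank K N :=
    (Submodule.comapSubtypeEquivOfLe hNW).finrank_eq
  obtain ⟨m, hm⟩ := Submodule.exists_of_finrank_lt (R := K) (M := ↥W)
    (N.comap W.subtype) (by rw [hn']; exact h)
  refine ⟨(m : V), m.2, ?_, ?_⟩
  · intro hmem
    exact hm 1 one_ne_zero (by simpa [Submodule.mem_comap] using hmem)
  · intro r hr hmem
    exact hm r hr (by simpa [Submodule.mem_comap] using hmem)

lemma exists_succ {N W : Submodule K V} (hNW : N ≤ W)
    (h : finrank K N < finrank K W) :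
    ∃ U, N ≤ U ∧ U ≤ W ∧ finrank K U = finrank K N + 1 := by
  obtain ⟨m, hmW, hmN, hr⟩ := exists_strict hNW h
  have hm0 : m ≠ 0 := fun h0 => hmN (h0 ▸ N.zero_mem)
  refine ⟨N ⊔ (K ∙ m), le_sup_left,
    sup_le hNW ((Submodule.span_singleton_le_iff_mem m W).mpr hmW), ?_⟩
  have hinf : N ⊓ (K ∙ m) = ⊥ := by
    rw [eq_bot_iff]
    rintro x ⟨hxN, hxm⟩
    obtain ⟨r, rfl⟩ := Submodule.mem_span_singleton.mp hxm
    rcases eq_or_ne r 0 with rfl | hr0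
    · simp
    · exact absurd hxN (hr r hr0)
  have hh := Submodule.finrank_sup_add_finrank_inf_eq N (K ∙ m)
  rw [hinf, finrank_bot, finrank_span_singleton hm0] at hh
  omega

lemma exists_between_finrank {N W : Submodule K V} (hNW : N ≤ W)
    {r : ℕ} (h1 : finrank K N ≤ r) (h2 : r ≤ finrank K W) :
    ∃ U, N ≤ U ∧ U ≤ W ∧ finrank K U = r := by
  induction r with
  | zero => exact ⟨N, le_rfl, hNW, by omega⟩
  | succ r ih =>
    rcases eq_or_lt_of_le h1 with he | hlt
    · exact ⟨N, le_rfl, hNW, he⟩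
    · obtain ⟨U, hNU, hUW, hU⟩ := ih (by omega) (by omega)
      obtain ⟨U', hUU', hU'W, hU'⟩ := exists_succ hUW (by omega)
      exact ⟨U', hNU.trans hUU', hU'W, by omega⟩

def GoodPartition (k : ℕ) (A : Set (Projectivization K V))
    (P : Set (Set (Projectivization K V))) : Prop :=
  ⋃₀ P = A ∧ (∀ B ∈ P, ∀ C ∈ P, B ≠ C → Disjoint B C) ∧
    ∀ B ∈ P, B.Nonempty ∧ IsAlmostFlat (k + 1) B

lemma affine_step (k : ℕ) {W' W : Submodule K V} (hle : W' ≤ W)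
    (hrk : finrank K W = finrank K W' + 1) (hk2 : k + 2 ≤ finrank K W) :
    ∃ P, GoodPartition k (pts K W \ pts K W') P := by
  obtain ⟨v, hvW, hvW', -⟩ := exists_strict hle (by omega)
  obtain ⟨U, -, hUW', hU⟩ := exists_between_finrank (bot_le : ⊥ ≤ W')
    (r := k + 1) (by simp [finrank_bot]) (by omega)
  set Wc : V → Submodule K V := fun c => (K ∙ (v + c)) ⊔ U with hWcdef
  have hvc0 : ∀ c ∈ W', v + c ≠ 0 := fun c hc h0 =>
    hvW' ((eq_neg_of_add_eq_zero_left h0) ▸ W'.neg_mem hc)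
  have hWcW : ∀ c ∈ W', Wc c ≤ W :=
    fun c hc => sup_le ((Submodule.span_singleton_le_iff_mem _ _).mpr
      (W.add_mem hvW (hle hc))) (le_trans hUW' hle)
  -- scalar extraction: a • v ∈ W' → a = 0
  have hav : ∀ a : K, a • v ∈ W' → a = 0 := by
    intro a ha
    by_contra ha0
    exact hvW' (by simpa [smul_smul, inv_mul_cancel₀ ha0] using W'.smul_mem a⁻¹ ha)
  have hint : ∀ c ∈ W', Wc c ⊓ W' ≤ U := by
    intro c hc x hx
    obtain ⟨hx1, hx2⟩ := Submodule.mem_inf.mp hx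
    obtain ⟨a, u, hu, rfl⟩ := mem_span_sup.mp hx1
    have hA : a • v ∈ W' := by
      have h' : a • v = (a • (v + c) + u) - a • c - u := by module
      rw [h']
      exact W'.sub_mem (W'.sub_mem hx2 (W'.smul_mem a hc)) (hUW' hu)
    rw [hav a hA]
    simpa using hu
  have hspaninf : ∀ c ∈ W', (K ∙ (v + c)) ⊓ U = ⊥ := by
    intro c hc
    rw [eq_bot_iff]
    rintro x ⟨hx1, hx2⟩
    obtain ⟨a, rfl⟩ := Submodule.mem_span_singleton.mp hx1
    have haW : a • v ∈ W' := by
      have h' : a • v = a • (v + c) - a • c := by module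
      rw [h']
      exact W'.sub_mem (hUW' hx2) (W'.smul_mem a hc)
    rw [hav a haW]
    simp
  have hfr : ∀ c ∈ W', finrank K (Wc c) = k + 2 := by
    intro c hc
    have hh := Submodule.finrank_sup_add_finrank_inf_eq (K ∙ (v + c)) U
    rw [hspaninf c hc, finrank_bot, finrank_span_singleton (hvc0 c hc), hU] at hh
    show finrank K ↥((K ∙ (v + c)) ⊔ U) = k + 2
    omega
  -- decomposition of points in a piece
  have hrep : ∀ c ∈ W', ∀ x ∈ pts K (Wc c) \ pts K U,
      ∃ a : K, a ≠ 0 ∧ ∃ u ∈ U, (Projectivization.rep x) = a • (v + c) + u := by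
    intro c hc x hx
    obtain ⟨a, u, hu, hxeq⟩ := mem_span_sup.mp (mem_pts.mp hx.1)
    refine ⟨a, ?_, u, hu, hxeq⟩
    rintro rfl
    exact hx.2 (mem_pts.mpr (by rw [hxeq]; simpa using hu))
  refine ⟨{B | ∃ c ∈ W', B = pts K (Wc c) \ pts K U}, ?_, ?_, ?_⟩
  · -- union
    ext x
    simp only [Set.mem_sUnion, Set.mem_setOf_eq]
    constructor
    · rintro ⟨B, ⟨c, hc, rfl⟩, hx⟩
      refine ⟨pts_mono (hWcW c hc) hx.1, fun hx' => hx.2 ?_⟩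
      exact le_trans (le_inf (hx.1 : _ ≤ Wc c) (hx' : _ ≤ W')) (hint c hc)
    · rintro ⟨hxW, hxW'⟩
      have hxrep : x.rep ∈ W := mem_pts.mp hxW
      have hxrep' : x.rep ∉ W' := fun h => hxW' (mem_pts.mpr h)
      -- W = W' ⊔ span v
      have hWsup : W' ⊔ (K ∙ v) = W := by
        apply Submodule.eq_of_le_of_finrank_le
          (sup_le hle ((Submodule.span_singleton_le_iff_mem _ _).mpr hvW))
        have hinf : W' ⊓ (K ∙ v) = ⊥ := by
          rw [eq_bot_iff]
          rintro y ⟨hy1, hy2⟩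
          obtain ⟨a, rfl⟩ := Submodule.mem_span_singleton.mp hy2
          rw [hav a hy1]; simp
        have hv0 : v ≠ 0 := fun h => hvW' (h ▸ W'.zero_mem)
        have hh := Submodule.finrank_sup_add_finrank_inf_eq W' (K ∙ v)
        rw [hinf, finrank_bot, finrank_span_singleton hv0] at hh
        omega
      have hxin : x.rep ∈ W' ⊔ (K ∙ v) := hWsup ▸ hxrep
      obtain ⟨w', hw', y, hy, hsum⟩ := Submodule.mem_sup.mp hxin
      obtain ⟨a, rfl⟩ := Submodule.mem_span_singleton.mp hy
      have ha0 : a ≠ 0 := by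
        rintro rfl
        exact hxrep' (by rw [← hsum]; simpa using hw')
      set c := a⁻¹ • w' with hcdef
      have hc : c ∈ W' := W'.smul_mem _ hw'
      refine ⟨pts K (Wc c) \ pts K U, ⟨c, hc, rfl⟩, ?_,
        fun h => hxW' (mem_pts.mpr (hUW' (mem_pts.mp h)))⟩
      rw [mem_pts]
      have hx2 : a⁻¹ • x.rep = v + c := by
        rw [← hsum, hcdef, smul_add, smul_smul, inv_mul_cancel₀ ha0, one_smul, add_comm]
      have : x.rep = a • (v + c) := by
        rw [← hx2, smul_smul, mul_inv_cancel₀ ha0, one_smul]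
      rw [this]
      exact Submodule.mem_sup_left
        (Submodule.smul_mem _ _ (Submodule.mem_span_singleton_self _))
  · -- disjointness
    rintro B ⟨c, hc, rfl⟩ C ⟨c', hc', rfl⟩ hne
    rw [Set.disjoint_left]
    intro x hx1 hx2
    apply hne
    obtain ⟨a, ha0, u, hu, heq⟩ := hrep c hc x hx1
    obtain ⟨a', ha0', u', hu', heq'⟩ := hrep c' hc' x hx2
    have heqq := heq.symm.trans heq'
    have hvv : (a - a') • v = (a' • c' - a • c) + (u' - u) := by
      linear_combination (norm := module) heqq
    have haa : a = a' := by
      have hmem : (a - a') • v ∈ W' := by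
        rw [hvv]
        exact W'.add_mem (W'.sub_mem (W'.smul_mem _ hc') (W'.smul_mem _ hc))
          (hUW' (U.sub_mem hu' hu))
      exact sub_eq_zero.mp (hav _ hmem)
    subst haa
    have hcc : c - c' ∈ U := by
      have h1 : a • (c - c') = u' - u := by
        linear_combination (norm := module) heqq
      have h2 : c - c' = a⁻¹ • (a • (c - c')) := by
        rw [smul_smul, inv_mul_cancel₀ ha0, one_smul]
      rw [h2, h1]
      exact U.smul_mem _ (U.sub_mem hu' hu)
    have hWceq : Wc c = Wc c' := by
      have key : ∀ b b' : V, b ∈ W' → b' ∈ W' → b - b' ∈ U → Wc b ≤ Wc b' := by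
        intro b b' _ _ hbb
        apply sup_le _ le_sup_right
        rw [Submodule.span_singleton_le_iff_mem]
        have hb : v + b = (v + b') + (b - b') := by module
        rw [hb]
        exact Submodule.add_mem _
          (Submodule.mem_sup_left (Submodule.mem_span_singleton_self _))
          (Submodule.mem_sup_right hbb)
      exact le_antisymm (key c c' hc hc' hcc)
        (key c' c hc' hc (by simpa using U.neg_mem hcc))
    rw [hWceq]
  · -- pieces : nonempty almost flats
    rintro B ⟨c, hc, rfl⟩
    constructor
    · refine ⟨Projectivization.mk K (v + c) (hvc0 c hc), ?_, ?_⟩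
      · rw [mk_mem_pts]
        exact Submodule.mem_sup_left (Submodule.mem_span_singleton_self _)
      · rw [mk_mem_pts]
        intro h
        exact hvW' ((by simpa using W'.sub_mem (hUW' h) hc : v ∈ W'))
    · right
      refine ⟨pts K (Wc c), pts K U, k, ⟨Wc c, by rw [hfr c hc], rfl⟩,
        ⟨U, by rw [hU], rfl⟩, le_rfl, pts_mono le_sup_right, rfl⟩


lemma good_partition_diff (k : ℕ) :
    ∀ m : ℕ, ∀ {W' W : Submodule K V}, finrank K W = m → W' ≤ W →
      finrank K W' < finrank K W → k + 2 ≤ finrank K W →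
      ∃ P, GoodPartition k (pts K W \ pts K W') P := by
  intro m
  induction m using Nat.strong_induction_on with
  | _ m ih =>
    intro W' W hm hle hlt hk2
    rcases eq_or_lt_of_le hk2 with heq | hgt
    · -- single piece
      refine ⟨{pts K W \ pts K W'}, by simp, ?_, ?_⟩
      · rintro B hB C hC hne
        rw [Set.mem_singleton_iff] at hB hC
        exact absurd (hB.trans hC.symm) hne
      · rintro B hB
        rw [Set.mem_singleton_iff] at hB
        subst hB
        constructor
        · obtain ⟨v, hvW, hvW', -⟩ := exists_strict hle hlt
          have hv0 : v ≠ 0 := fun h => hvW' (h ▸ W'.zero_mem)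
          exact ⟨Projectivization.mk K v hv0,
            (mk_mem_pts hv0).mpr hvW, fun h => hvW' ((mk_mem_pts hv0).mp h)⟩
        · rcases Nat.eq_zero_or_pos (finrank K W') with h0 | hpos
          · left
            refine ⟨W, by omega, ?_⟩
            have hb : W' = ⊥ := Submodule.finrank_eq_zero.mp h0
            rw [hb, pts_bot, Set.diff_empty]
            rfl
          · right
            exact ⟨pts K W, pts K W', finrank K W' - 1,
              ⟨W, by omega, rfl⟩, ⟨W', by omega, rfl⟩, by omega, pts_mono hle, rfl⟩
    · by_cases hW' : finrank K W' + 1 = finrank K W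
      · exact affine_step k hle hW'.symm hk2
      · obtain ⟨H, hW'H, hHW, hH⟩ := exists_between_finrank hle
          (r := finrank K W - 1) (by omega) (by omega)
        obtain ⟨P1, h1u, h1d, h1p⟩ := affine_step k hHW (by omega) hk2
        obtain ⟨P2, h2u, h2d, h2p⟩ := ih (finrank K H) (by omega) rfl hW'H
          (by omega) (by omega)
        refine ⟨P1 ∪ P2, ?_, ?_, ?_⟩
        · rw [Set.sUnion_union, h1u, h2u,
            Set.diff_union_diff_cancel (pts_mono hHW) (pts_mono hW'H)]
        · intro B hB C hC hne
          have hsub1 : ∀ D ∈ P1, D ⊆ pts K W \ pts K H := by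
            intro D hD
            rw [← h1u]
            exact Set.subset_sUnion_of_mem hD
          have hsub2 : ∀ D ∈ P2, D ⊆ pts K H \ pts K W' := by
            intro D hD
            rw [← h2u]
            exact Set.subset_sUnion_of_mem hD
          rcases hB with hB | hB <;> rcases hC with hC | hC
          · exact h1d B hB C hC hne
          · rw [Set.disjoint_left]
            intro x hx1 hx2
            exact (hsub1 B hB hx1).2 (hsub2 C hC hx2).1
          · rw [Set.disjoint_left]
            intro x hx1 hx2
            exact (hsub1 C hC hx2).2 (hsub2 B hB hx1).1
          · exact h2d B hB C hC hne
        · rintro B (hB | hB)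
          · exact h1p B hB
          · exact h2p B hB

lemma good_partition_of_almostFlat {k m : ℕ} {A : Set (Projectivization K V)}
    (hA : IsAlmostFlat m A) (hm : k + 1 ≤ m) :
    ∃ P, GoodPartition k A P := by
  rcases hA with ⟨W, hW, rfl⟩ | ⟨F, F', d', ⟨W, hW, rfl⟩, ⟨W'', hW'', rfl⟩, hd, hsub, rfl⟩
  · obtain ⟨P, hP⟩ := good_partition_diff k (finrank K W) rfl
      (bot_le : (⊥ : Submodule K V) ≤ W) (by rw [hW, finrank_bot]; omega) (by omega)
    rw [pts_bot, Set.diff_empty] at hP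
    exact ⟨P, hP⟩
  · have hle : W'' ≤ W := le_of_pts_subset hsub
    exact good_partition_diff k (finrank K W) rfl hle (by omega) (by omega)

open Finset in
lemma card_filter_coe_lt {n : ℕ} (m : ℕ) (h : m ≤ n) :
    (Finset.univ.filter (fun i : Fin n => (i : ℕ) < m)).card = m := by
  classical
  rw [← Finset.card_image_of_injective _ Fin.val_injective]
  have himg : (Finset.univ.filter (fun i : Fin n => (i : ℕ) < m)).image Fin.val
      = Finset.range m := by
    ext j
    simp only [Finset.mem_image, Finset.mem_filter, Finset.mem_univ, true_and,
      Finset.mem_range]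
    constructor
    · rintro ⟨i, hi, rfl⟩; exact hi
    · intro hj; exact ⟨⟨j, lt_of_lt_of_le hj h⟩, hj, rfl⟩
  rw [himg, Finset.card_range]

open Finset in
lemma card_filter_perm {n : ℕ} (g : Equiv.Perm (Fin n)) (p : Fin n → Prop)
    [DecidablePred p] :
    (Finset.univ.filter (fun i => p (g i))).card = (Finset.univ.filter p).card := by
  apply Finset.card_bij (fun i _ => g i)
  · intro a ha
    simp only [Finset.mem_filter, Finset.mem_univ, true_and] at ha ⊢
    exact ha
  · intro a _ b _ hab
    exact g.injective hab
  · intro b hb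
    simp only [Finset.mem_filter, Finset.mem_univ, true_and] at hb
    exact ⟨g.symm b, by simp [Finset.mem_filter, hb], g.apply_symm_apply b⟩

open Finset in
lemma card_filter_not {n : ℕ} (p : Fin n → Prop) [DecidablePred p] :
    (Finset.univ.filter (fun i => ¬ p i)).card = n - (Finset.univ.filter p).card := by
  rw [Finset.filter_not, Finset.card_sdiff_of_subset (Finset.filter_subset _ _)]
  simp

/-- let `Q = Q₁ × ⋯ × Qₙ` be a product of nonempty almost-flats in
`F_qP^{n-1}` with dimensions `d i`, whose dimension pattern `d ∘ Tuple.sort d` (the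
dimensions sorted non-decreasingly) is not coordinatewise `≤ (0, 1, …, n-1)`.  Let `k`
be least (0-indexed) with `(d ∘ Tuple.sort d) k ≥ k + 1`.  Then `Q` can be partitioned
into nonempty product sets whose factors at the `k` sorted positions of smallest
dimensions are singletons and whose remaining factors are almost-flats of dimension
`k+1`; in particular every part is a product of almost-flats whose dimension pattern is
again not coordinatewise `≤ (0, 1, …, n-1)`. -/
theorem partition_into_minimal_patterns (q n : ℕ) (hn : 1 ≤ n)
    (K : Type) [Field K] [Fintype K] (hq : Fintype.card K = q)
    (Q : Fin n → Set (Projectivization K (Fin n → K)))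
    (d : Fin n → ℕ)
    (hQ : ∀ i, IsAlmostFlat (d i) (Q i))
    (hne : ∀ i, (Q i).Nonempty)
    (hpat : ¬ ∀ i : Fin n, d (Tuple.sort d i) ≤ (i : ℕ))
    (k : ℕ)
    (hk : IsLeast {j : ℕ | ∃ hj : j < n, j + 1 ≤ d (Tuple.sort d ⟨j, hj⟩)} k) :
    ∃ T : Set (Fin n → Set (Projectivization K (Fin n → K))),
      (⋃ R ∈ T, Set.univ.pi R) = Set.univ.pi Q ∧
      (∀ R ∈ T, ∀ R' ∈ T, R ≠ R' → Disjoint (Set.univ.pi R) (Set.univ.pi R')) ∧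
      ∀ R ∈ T,
        (Set.univ.pi R).Nonempty ∧
        (∀ i, R i ⊆ Q i) ∧
        (∀ i : Fin n,
          if (((Tuple.sort d).symm i : ℕ) < k)
          then ∃ p, R i = {p}
          else IsAlmostFlat (k + 1) (R i)) ∧
        ∃ e : Fin n → ℕ, (∀ i, IsAlmostFlat (e i) (R i)) ∧
          ¬ ∀ i : Fin n, e (Tuple.sort e i) ≤ (i : ℕ) := by
  classical
  obtain ⟨hkn, hkd⟩ := hk.1
  have hdim : ∀ i : Fin n, ¬ (((Tuple.sort d).symm i : ℕ) < k) → k + 1 ≤ d i := by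
    intro i hi
    have h1 : (⟨k, hkn⟩ : Fin n) ≤ (Tuple.sort d).symm i := by
      rw [Fin.le_def]
      exact le_of_not_gt hi
    have h2 := Tuple.monotone_sort d h1
    simpa [Function.comp] using le_trans hkd h2
  -- build partitions of each factor
  have hPex : ∀ i : Fin n, ∃ P : Set (Set (Projectivization K (Fin n → K))),
      (⋃₀ P = Q i) ∧ (∀ B ∈ P, ∀ C ∈ P, B ≠ C → Disjoint B C) ∧
      (∀ B ∈ P, B.Nonempty) ∧
      (∀ B ∈ P, if (((Tuple.sort d).symm i : ℕ) < k)
        then ∃ p, B = {p} else IsAlmostFlat (k + 1) B) ∧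
      (∀ B ∈ P, IsAlmostFlat
        (if (((Tuple.sort d).symm i : ℕ) < k) then 0 else k + 1) B) := by
    intro i
    by_cases hi : (((Tuple.sort d).symm i : ℕ) < k)
    · refine ⟨(fun p => ({p} : Set _)) '' Q i, ?_, ?_, ?_, ?_, ?_⟩
      · rw [Set.sUnion_image]
        exact Set.biUnion_of_singleton _
      · rintro B ⟨p, _, rfl⟩ C ⟨p', _, rfl⟩ hne'
        simp only [Set.disjoint_singleton]
        intro h
        exact hne' (by rw [h])
      · rintro B ⟨p, _, rfl⟩
        exact Set.singleton_nonempty p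
      · rintro B ⟨p, _, rfl⟩
        rw [if_pos hi]
        exact ⟨p, rfl⟩
      · rintro B ⟨p, _, rfl⟩
        rw [if_pos hi]
        left
        exact ⟨p.submodule, by rw [Projectivization.finrank_submodule],
          (pts_submodule p).symm⟩
    · obtain ⟨P, hu, hd2, hB⟩ := good_partition_of_almostFlat (hQ i) (hdim i hi)
      refine ⟨P, hu, hd2, fun B hB' => (hB B hB').1, ?_, ?_⟩
      · intro B hB'
        rw [if_neg hi]
        exact (hB B hB').2
      · intro B hB'
        rw [if_neg hi]
        exact (hB B hB').2
  choose P hPu hPdis hPne hPshape hPaf using hPex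
  refine ⟨{R | ∀ i, R i ∈ P i}, ?_, ?_, ?_⟩
  · ext x
    simp only [Set.mem_iUnion, Set.mem_setOf_eq, Set.mem_pi, Set.mem_univ,
      forall_true_left, exists_prop]
    constructor
    · rintro ⟨R, hR, hx⟩ i
      have hsub : R i ⊆ Q i := by
        rw [← hPu i]
        exact Set.subset_sUnion_of_mem (hR i)
      exact hsub (hx i)
    · intro hx
      have hex : ∀ i, ∃ B, B ∈ P i ∧ x i ∈ B := by
        intro i
        have : x i ∈ ⋃₀ P i := (hPu i).symm ▸ hx i
        exact Set.mem_sUnion.mp this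
      choose R hR1 hR2 using hex
      exact ⟨R, hR1, hR2⟩
  · intro R hR R' hR' hne'
    have hex : ∃ i, R i ≠ R' i := by
      by_contra h
      push_neg at h
      exact hne' (funext h)
    obtain ⟨i, hi⟩ := hex
    have hdisj := hPdis i (R i) (hR i) (R' i) (hR' i) hi
    rw [Set.disjoint_left] at hdisj ⊢
    intro x hx1 hx2
    exact hdisj (hx1 i (Set.mem_univ i)) (hx2 i (Set.mem_univ i))
  · intro R hR
    refine ⟨?_, ?_, ?_, ?_⟩
    · rw [Set.univ_pi_nonempty_iff]
      exact fun i => hPne i (R i) (hR i)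
    · intro i
      rw [← hPu i]
      exact Set.subset_sUnion_of_mem (hR i)
    · exact fun i => hPshape i (R i) (hR i)
    · refine ⟨fun i => if (((Tuple.sort d).symm i : ℕ) < k) then 0 else k + 1,
        fun i => hPaf i (R i) (hR i), ?_⟩
      intro hcon
      set e : Fin n → ℕ :=
        fun i => if (((Tuple.sort d).symm i : ℕ) < k) then 0 else k + 1 with hedef
      set τ := Tuple.sort e with hτ
      have hA : (Finset.univ.filter (fun i : Fin n => e (τ i) = k + 1)).card
          = (Finset.univ.filter (fun i : Fin n => e i = k + 1)).card :=
        card_filter_perm τ (fun i => e i = k + 1)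
      have hB : (Finset.univ.filter (fun i : Fin n => e i = k + 1)).card = n - k := by
        have hiff : ∀ i : Fin n,
            (e i = k + 1) ↔ ¬ (((Tuple.sort d).symm i : ℕ) < k) := by
          intro i
          rw [hedef]
          by_cases hi : (((Tuple.sort d).symm i : ℕ) < k) <;> simp [hi]
        rw [Finset.filter_congr
            (q := fun i : Fin n => ¬ (((Tuple.sort d).symm i : ℕ) < k))
            (fun i _ => hiff i),
          card_filter_not, card_filter_perm (Tuple.sort d).symm
            (fun j : Fin n => (j : ℕ) < k),
          card_filter_coe_lt k (le_of_lt hkn)]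
      have hsubA : (Finset.univ.filter (fun i : Fin n => e (τ i) = k + 1))
          ⊆ (Finset.univ.filter (fun i : Fin n => k + 1 ≤ (i : ℕ))) := by
        intro i hi
        simp only [Finset.mem_filter, Finset.mem_univ, true_and] at hi ⊢
        calc k + 1 = e (τ i) := hi.symm
          _ ≤ (i : ℕ) := hcon i
      have hC : (Finset.univ.filter (fun i : Fin n => k + 1 ≤ (i : ℕ))).card
          = n - (k + 1) := by
        have hiff : ∀ i : Fin n, (k + 1 ≤ (i : ℕ)) ↔ ¬ ((i : ℕ) < k + 1) := by
          intro i; omega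
        rw [Finset.filter_congr
            (q := fun i : Fin n => ¬ ((i : ℕ) < k + 1))
            (fun i _ => hiff i),
          card_filter_not, card_filter_coe_lt (k + 1) hkn]
      have hle2 := Finset.card_le_card hsubA
      rw [hA, hB, hC] at hle2
      omega
end
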